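/- arXiv:1106.0879 — 9 statements merged into one kernel-verified Lean document; each statement's English description precedes it below -/
import Mathlib

section
/- Let D > 2 and let θ = θ(D) ∈ (0,1) be the unique solution of 2/D = (1−θ)·θ^(θ/(1−θ)). Then θ(D) ≥ 1 − 2e/D. -/
/-- If `D > 2` and `θ ∈ (0,1)` solves `2/D = (1−θ)·θ^(θ/(1−θ))`,
then `θ ≥ 1 − 2e/D`. -/
theorem stmt1 (D θ : ℝ) (hD : 2 < D) (hθ : θ ∈ Set.Ioo (0 : ℝ) 1)
    (heq : 2 / D = (1 - θ) * θ ^ (θ / (1 - θ))) :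
    1 - 2 * Real.exp 1 / D ≤ θ := by
  obtain ⟨h0, h1⟩ := hθ
  have h1θ : 0 < 1 - θ := by linarith
  -- log θ ≥ -(1-θ)/θ
  have hlog : Real.log (1/θ) ≤ 1/θ - 1 := Real.log_le_sub_one_of_pos (by positivity)
  rw [Real.log_div one_ne_zero (ne_of_gt h0), Real.log_one] at hlog
  have hlog2 : θ - 1 ≤ θ * Real.log θ := by
    have h := mul_le_mul_of_nonneg_left hlog h0.le
    have h2 : θ * (1/θ) = 1 := mul_one_div_cancel (ne_of_gt h0)
    nlinarith
  have hlog' : -(1 - θ) / θ ≤ Real.log θ := by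
    rw [div_le_iff₀ h0]
    nlinarith
  have hexp : Real.exp (-1) ≤ θ ^ (θ / (1 - θ)) := by
    rw [Real.rpow_def_of_pos h0]
    apply Real.exp_le_exp.mpr
    have : θ / (1 - θ) * (-(1 - θ) / θ) = -1 := by
      field_simp
    have hmul := mul_le_mul_of_nonneg_right hlog' (le_of_lt (div_pos h0 h1θ))
    calc (-1 : ℝ) = -(1 - θ) / θ * (θ / (1 - θ)) := by rw [← this]; ring
      _ ≤ Real.log θ * (θ / (1 - θ)) := hmul
  have key : (1 - θ) * Real.exp (-1) ≤ 2 / D := by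
    rw [heq]
    exact mul_le_mul_of_nonneg_left hexp (le_of_lt h1θ)
  have hDpos : 0 < D := by linarith
  have hepos : 0 < Real.exp (-1) := Real.exp_pos _
  have : 1 - θ ≤ 2 / D * Real.exp 1 := by
    have h := mul_le_mul_of_nonneg_right key (le_of_lt (Real.exp_pos 1))
    rwa [mul_assoc, ← Real.exp_add, neg_add_cancel, Real.exp_zero, mul_one] at h
  have : 1 - θ ≤ 2 * Real.exp 1 / D := by
    rw [mul_comm 2 (Real.exp 1), mul_div_assoc]
    linarith [this]
  linarith
end

section
/- Let T be a finite rooted tree and (X,d) a finite metric space. Suppose F : T → 2^X is a fragmentation map (F maps the root to X, leaves to singletons, children to subsets of their parents, and incomparable vertices to disjoint sets) which is (K,γ)-lacunary: for every q ∈ T and every weak descendant u of q with at least two children, diam(F_q) ≤ K·γ^(depth(u)−depth(q)) · min over distinct children v,w of u of d(∂F_v, ∂F_w). Then the set ∂F_root (the union of images of the leaves), with the metric d, embeds with distortion at most K into an ultrametric space. -/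
open scoped Classical

/-- `u` is a weak ancestor of `v` (some iterate of the parent map sends `v` to `u`). -/
def anc {V : Type*} (parent : V → V) (u v : V) : Prop := ∃ n : ℕ, parent^[n] v = u

/-- The set of children of `u` in a rooted tree given by a parent map. -/
def childrenOf {V : Type*} (parent : V → V) (root u : V) : Set V :=
  {v | parent v = u ∧ v ≠ root}

/-- `u` is a leaf: it has no children. -/
def IsTreeLeaf {V : Type*} (parent : V → V) (root u : V) : Prop :=
  childrenOf parent root u = ∅

/-- The boundary `∂F_u` of a fragmentation map: the union of `F ℓ` over the leaves `ℓ`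
of the subtree rooted at `u`. -/
def bdry {V X : Type*} (parent : V → V) (root : V) (F : V → Set X) (u : V) : Set X :=
  ⋃ ℓ ∈ {ℓ : V | IsTreeLeaf parent root ℓ ∧ anc parent u ℓ}, F ℓ

/-- `ρ` is an ultrametric on the subset `S`. -/
def IsUltrametricOn {X : Type*} (ρ : X → X → ℝ) (S : Set X) : Prop :=
  (∀ x ∈ S, ∀ y ∈ S, ρ x y = ρ y x) ∧ (∀ x ∈ S, ρ x x = 0) ∧
  (∀ x ∈ S, ∀ y ∈ S, x ≠ y → 0 < ρ x y) ∧
  (∀ x ∈ S, ∀ y ∈ S, ∀ z ∈ S, ρ x y ≤ max (ρ x z) (ρ z y))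

section Helpers

variable {V X : Type*} {parent : V → V} {root : V}

lemma anc_refl (u : V) : anc parent u u := ⟨0, rfl⟩

lemma anc_trans {u v w : V} (h1 : anc parent u v) (h2 : anc parent v w) :
    anc parent u w := by
  obtain ⟨n, hn⟩ := h1; obtain ⟨m, hm⟩ := h2
  exact ⟨n + m, by rw [Function.iterate_add_apply, hm, hn]⟩

lemma anc_comparable {u w ℓ : V} (h1 : anc parent u ℓ) (h2 : anc parent w ℓ) :
    anc parent u w ∨ anc parent w u := by
  obtain ⟨n, hn⟩ := h1; obtain ⟨m, hm⟩ := h2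
  rcases le_total n m with h | h
  · right
    exact ⟨m - n, by rw [← hn, ← Function.iterate_add_apply, Nat.sub_add_cancel h, hm]⟩
  · left
    exact ⟨n - m, by rw [← hm, ← Function.iterate_add_apply, Nat.sub_add_cancel h, hn]⟩

lemma leaf_eq_of_anc (hroot : parent root = root) {ℓ b : V}
    (hleaf : IsTreeLeaf parent root ℓ) (h : anc parent ℓ b) : b = ℓ := by
  by_contra hne
  have hex : ∃ k, parent^[k] b = ℓ := h
  have hspec : parent^[Nat.find hex] b = ℓ := Nat.find_spec hex
  have hk0 : Nat.find hex ≠ 0 := by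
    intro h0; rw [h0] at hspec; exact hne hspec
  have h1 : Nat.find hex - 1 + 1 = Nat.find hex := by omega
  have hpc : parent (parent^[Nat.find hex - 1] b) = ℓ := by
    have := (Function.iterate_succ_apply' parent (Nat.find hex - 1) b).symm
    rw [Nat.succ_eq_add_one, h1] at this
    rw [this]; exact hspec
  have hcroot : parent^[Nat.find hex - 1] b ≠ root := by
    intro hcr
    have hlr : ℓ = root := by rw [← hpc, hcr, hroot]
    exact Nat.find_min hex (by omega) (show parent^[Nat.find hex - 1] b = ℓ by rw [hcr, ← hlr])
  have hmem : parent^[Nat.find hex - 1] b ∈ childrenOf parent root ℓ := ⟨hpc, hcroot⟩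
  rw [hleaf] at hmem
  exact hmem

lemma F_subset_of_anc {F : V → Set X} (hroot : parent root = root)
    (hFmono : ∀ v, v ≠ root → F v ⊆ F (parent v)) {u v : V} (h : anc parent u v) :
    F v ⊆ F u := by
  obtain ⟨n, hn⟩ := h
  induction n generalizing v with
  | zero =>
    rw [Function.iterate_zero_apply] at hn
    subst hn; exact subset_rfl
  | succ n ih =>
    by_cases hv : v = root
    · subst hv
      rw [Function.iterate_fixed hroot] at hn
      subst hn; exact subset_rfl
    · rw [Function.iterate_succ_apply] at hn
      exact (hFmono v hv).trans (ih hn)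

lemma mem_bdry {F : V → Set X} {u : V} {x : X} :
    x ∈ bdry parent root F u ↔
      ∃ ℓ, IsTreeLeaf parent root ℓ ∧ anc parent u ℓ ∧ x ∈ F ℓ := by
  simp [bdry, and_assoc]

lemma bdry_subset_F {F : V → Set X} (hroot : parent root = root)
    (hFmono : ∀ v, v ≠ root → F v ⊆ F (parent v)) (u : V) :
    bdry parent root F u ⊆ F u := by
  intro x hx
  obtain ⟨ℓ, _, hanc, hxℓ⟩ := mem_bdry.1 hx
  exact F_subset_of_anc hroot hFmono hanc hxℓ

lemma bdry_mono {F : V → Set X} {u v : V} (h : anc parent u v) :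
    bdry parent root F v ⊆ bdry parent root F u := by
  intro x hx
  obtain ⟨ℓ, hl, hanc, hxℓ⟩ := mem_bdry.1 hx
  exact mem_bdry.2 ⟨ℓ, hl, anc_trans h hanc, hxℓ⟩

end Helpers

/-- If `F : T → 2^X` is a `(K,γ)`-lacunary fragmentation map of a finite
metric space `X` on a finite rooted tree `T`, then `∂F_{root}` embeds with distortion at
most `K` into an ultrametric space. -/
theorem stmt2 {V X : Type*} [Fintype V] [DecidableEq V] [Fintype X] [MetricSpace X]
    (root : V) (parent : V → V) (depth : V → ℕ)
    (hparent_root : parent root = root)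
    (hdepth_root : depth root = 0)
    (hdepth : ∀ v, v ≠ root → depth v = depth (parent v) + 1)
    (F : V → Set X) (K γ : ℝ) (hK : 0 < K) (hγ : 0 < γ)
    (hFroot : F root = Set.univ)
    (hFleaf : ∀ v, IsTreeLeaf parent root v → ∃ x, F v = {x})
    (hFmono : ∀ v, v ≠ root → F v ⊆ F (parent v))
    (hFdisj : ∀ u v : V, ¬ anc parent u v → ¬ anc parent v u → Disjoint (F u) (F v))
    (hlac : ∀ q u : V, anc parent q u →
      ∀ v w : V, v ∈ childrenOf parent root u → w ∈ childrenOf parent root u → v ≠ w →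
        ∀ x ∈ bdry parent root F v, ∀ y ∈ bdry parent root F w,
          Metric.diam (F q) ≤ K * γ ^ (depth u - depth q) * dist x y) :
    ∃ ρ : X → X → ℝ,
      IsUltrametricOn ρ (bdry parent root F root) ∧
      ∀ x ∈ bdry parent root F root, ∀ y ∈ bdry parent root F root,
        dist x y ≤ ρ x y ∧ ρ x y ≤ K * dist x y := by
  classical
  set P : X → X → Finset V := fun x y =>
    Finset.univ.filter (fun u => x ∈ bdry parent root F u ∧ y ∈ bdry parent root F u) with hP
  set ρ : X → X → ℝ := fun x y =>
    if h : (P x y).Nonempty then (P x y).inf' h (fun u => Metric.diam (F u)) else 0 with hρ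
  have hmemP : ∀ {x y : X} {u : V},
      u ∈ P x y ↔ x ∈ bdry parent root F u ∧ y ∈ bdry parent root F u := by
    intro x y u; simp [hP]
  have hne : ∀ x ∈ bdry parent root F root, ∀ y ∈ bdry parent root F root,
      (P x y).Nonempty := fun x hx y hy => ⟨root, hmemP.2 ⟨hx, hy⟩⟩
  have hρdef : ∀ {x y : X} (h : (P x y).Nonempty),
      ρ x y = (P x y).inf' h (fun u => Metric.diam (F u)) := by
    intro x y h
    simp only [hρ]
    rw [dif_pos h]
  have hρle : ∀ {x y : X} {u : V}, u ∈ P x y → ρ x y ≤ Metric.diam (F u) := by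
    intro x y u hu
    rw [hρdef ⟨u, hu⟩]
    exact Finset.inf'_le _ hu
  have hdistle : ∀ x ∈ bdry parent root F root, ∀ y ∈ bdry parent root F root,
      dist x y ≤ ρ x y := by
    intro x hx y hy
    rw [hρdef (hne x hx y hy)]
    apply Finset.le_inf'
    intro u hu
    obtain ⟨hxu, hyu⟩ := hmemP.1 hu
    exact Metric.dist_le_diam_of_mem (Set.toFinite (F u)).isBounded
      (bdry_subset_F hparent_root hFmono u hxu)
      (bdry_subset_F hparent_root hFmono u hyu)
  have hρ0 : ∀ x ∈ bdry parent root F root, ρ x x = 0 := by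
    intro x hx
    obtain ⟨a, hal, hanc, hxa⟩ := mem_bdry.1 hx
    have hxa' : x ∈ bdry parent root F a := mem_bdry.2 ⟨a, hal, anc_refl a, hxa⟩
    have hle : ρ x x ≤ Metric.diam (F a) := hρle (hmemP.2 ⟨hxa', hxa'⟩)
    obtain ⟨x', hx'⟩ := hFleaf a hal
    rw [hx', Metric.diam_singleton] at hle
    have hge := hdistle x hx x hx
    rw [dist_self] at hge
    linarith
  have hρsymm : ∀ x y : X, ρ x y = ρ y x := by
    intro x y
    have hps : P x y = P y x := by
      ext u; simp [hP, and_comm]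
    simp only [hρ, hps]
  have hcomp : ∀ {u w : V} {z : X}, z ∈ bdry parent root F u → z ∈ bdry parent root F w →
      anc parent u w ∨ anc parent w u := by
    intro u w z hzu hzw
    obtain ⟨ℓ1, hl1, ha1, hz1⟩ := mem_bdry.1 hzu
    obtain ⟨ℓ2, hl2, ha2, hz2⟩ := mem_bdry.1 hzw
    have hcomp12 : anc parent ℓ1 ℓ2 ∨ anc parent ℓ2 ℓ1 := by
      by_contra hc
      push_neg at hc
      exact Set.disjoint_left.mp (hFdisj ℓ1 ℓ2 hc.1 hc.2) hz1 hz2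
    have heq : ℓ1 = ℓ2 := by
      rcases hcomp12 with h | h
      · exact (leaf_eq_of_anc hparent_root hl1 h).symm
      · exact leaf_eq_of_anc hparent_root hl2 h
    subst heq
    exact anc_comparable ha1 ha2
  have hultra : ∀ x ∈ bdry parent root F root, ∀ y ∈ bdry parent root F root,
      ∀ z ∈ bdry parent root F root, ρ x y ≤ max (ρ x z) (ρ z y) := by
    intro x hx y hy z hz
    obtain ⟨u, hu, hequ⟩ := Finset.exists_mem_eq_inf' (hne x hx z hz)
      (fun u => Metric.diam (F u))
    obtain ⟨w, hw, heqw⟩ := Finset.exists_mem_eq_inf' (hne z hz y hy)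
      (fun u => Metric.diam (F u))
    have hxz : ρ x z = Metric.diam (F u) := by rw [hρdef (hne x hx z hz)]; exact hequ
    have hzy : ρ z y = Metric.diam (F w) := by rw [hρdef (hne z hz y hy)]; exact heqw
    obtain ⟨hxu, hzu⟩ := hmemP.1 hu
    obtain ⟨hzw, hyw⟩ := hmemP.1 hw
    rcases hcomp hzu hzw with h | h
    · have hyu : y ∈ bdry parent root F u := bdry_mono h hyw
      calc ρ x y ≤ Metric.diam (F u) := hρle (hmemP.2 ⟨hxu, hyu⟩)
        _ = ρ x z := hxz.symm
        _ ≤ max (ρ x z) (ρ z y) := le_max_left _ _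
    · have hxw : x ∈ bdry parent root F w := bdry_mono h hxu
      calc ρ x y ≤ Metric.diam (F w) := hρle (hmemP.2 ⟨hxw, hyw⟩)
        _ = ρ z y := hzy.symm
        _ ≤ max (ρ x z) (ρ z y) := le_max_right _ _
  have hρK : ∀ x ∈ bdry parent root F root, ∀ y ∈ bdry parent root F root,
      ρ x y ≤ K * dist x y := by
    intro x hx y hy
    by_cases hxy : x = y
    · subst hxy
      rw [hρ0 x hx, dist_self, mul_zero]
    obtain ⟨a, hal, hanca, hxa⟩ := mem_bdry.1 hx
    obtain ⟨b, hbl, hancb, hyb⟩ := mem_bdry.1 hy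
    have hab : a ≠ b := by
      intro h; subst h
      obtain ⟨x', hx'⟩ := hFleaf a hal
      rw [hx'] at hxa hyb
      exact hxy (hxa.trans hyb.symm)
    have hexn : ∃ n, anc parent (parent^[n] a) b := by
      obtain ⟨na, hna⟩ := hanca
      exact ⟨na, by rw [hna]; exact hancb⟩
    have hqb : anc parent (parent^[Nat.find hexn] a) b := Nat.find_spec hexn
    have hqa : anc parent (parent^[Nat.find hexn] a) a := ⟨Nat.find hexn, rfl⟩
    have hn0 : Nat.find hexn ≠ 0 := by
      intro h0
      have hqb0 := Nat.find_spec hexn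
      rw [h0, Function.iterate_zero_apply] at hqb0
      exact hab (leaf_eq_of_anc hparent_root hal hqb0).symm
    obtain ⟨m, hm⟩ : ∃ m, Nat.find hexn = m + 1 := ⟨Nat.find hexn - 1, by omega⟩
    have hpv : parent (parent^[m] a) = parent^[Nat.find hexn] a := by
      rw [hm, Function.iterate_succ_apply']
    have hvroot : parent^[m] a ≠ root := by
      intro hvr
      have hvb : anc parent (parent^[m] a) b := by rw [hvr]; exact hancb
      exact Nat.find_min hexn (m := m) (by omega) hvb
    have hexm : ∃ k, parent^[k] b = parent^[Nat.find hexn] a := hqb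
    have hk0 : Nat.find hexm ≠ 0 := by
      intro h0
      have hs := Nat.find_spec hexm
      rw [h0, Function.iterate_zero_apply] at hs
      have hba : anc parent b a := hs ▸ hqa
      exact hab (leaf_eq_of_anc hparent_root hbl hba)
    obtain ⟨j, hj⟩ : ∃ j, Nat.find hexm = j + 1 := ⟨Nat.find hexm - 1, by omega⟩
    have hpw : parent (parent^[j] b) = parent^[Nat.find hexn] a := by
      have hs := Nat.find_spec hexm
      rw [hj, Function.iterate_succ_apply'] at hs
      exact hs
    have hwroot : parent^[j] b ≠ root := by
      intro hwr
      have hq_root : parent^[Nat.find hexn] a = root := by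
        rw [← hpw, hwr, hparent_root]
      exact Nat.find_min hexm (m := j) (by omega) (by rw [hwr, hq_root])
    have hvw : parent^[m] a ≠ parent^[j] b := by
      intro hve
      have hvb : anc parent (parent^[m] a) b := ⟨j, hve.symm⟩
      exact Nat.find_min hexn (m := m) (by omega) hvb
    have hvchild : parent^[m] a ∈ childrenOf parent root (parent^[Nat.find hexn] a) :=
      ⟨hpv, hvroot⟩
    have hwchild : parent^[j] b ∈ childrenOf parent root (parent^[Nat.find hexn] a) :=
      ⟨hpw, hwroot⟩
    have hxv : x ∈ bdry parent root F (parent^[m] a) :=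
      mem_bdry.2 ⟨a, hal, ⟨m, rfl⟩, hxa⟩
    have hyw : y ∈ bdry parent root F (parent^[j] b) :=
      mem_bdry.2 ⟨b, hbl, ⟨j, rfl⟩, hyb⟩
    have hlaceq := hlac (parent^[Nat.find hexn] a) (parent^[Nat.find hexn] a) (anc_refl _)
      (parent^[m] a) (parent^[j] b) hvchild hwchild hvw x hxv y hyw
    rw [Nat.sub_self, pow_zero, mul_one] at hlaceq
    have hxq : x ∈ bdry parent root F (parent^[Nat.find hexn] a) :=
      mem_bdry.2 ⟨a, hal, hqa, hxa⟩
    have hyq : y ∈ bdry parent root F (parent^[Nat.find hexn] a) :=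
      mem_bdry.2 ⟨b, hbl, hqb, hyb⟩
    exact (hρle (hmemP.2 ⟨hxq, hyq⟩)).trans hlaceq
  refine ⟨ρ, ⟨fun x _ y _ => hρsymm x y, hρ0, ?_, hultra⟩,
    fun x hx y hy => ⟨hdistle x hx y hy, hρK x hx y hy⟩⟩
  intro x hx y hy hxy
  exact lt_of_lt_of_le (dist_pos.2 hxy) (hdistle x hx y hy)
end

section
/- Let (n_k)_{k≥0} be a sequence of positive integers with n_0 = 1 and n_k ≥ 2 for k ≥ 1. For each k ≥ 1 let d_k be a metric on {1,…,n_k} with diameter 1 and minimal positive distance δ_k, and fix α > 0. Define ρ_α on the product ∏_{k≥1}{1,…,n_k} by: for distinct x,y, letting k(x,y) be the first coordinate where they differ, ρ_α(x,y) = d_{k(x,y)}(x_{k(x,y)}, y_{k(x,y)}) / ∏_{i=0}^{k(x,y)−1} n_i^{1/α}. If δ_k > n_k^{−1/α} for all k, then ρ_α is a metric on the product and the resulting metric space is compact. -/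
open scoped Classical

/-- The first coordinate at which two distinct sequences differ. -/
noncomputable def firstDiff {n : ℕ → ℕ} (x y : ∀ k : ℕ, Fin (n (k + 1))) (h : x ≠ y) : ℕ :=
  Nat.find (Function.ne_iff.mp h)

/-- The tree metric `ρ_α` on `∏_{k≥1} {1,…,n_k}`: for distinct `x,y`, with `m` the first
differing coordinate (so the paper's `k(x,y) = m+1`),
`ρ_α(x,y) = d_{k(x,y)}(x,y) / (∏_{i=0}^{k(x,y)−1} n_i)^{1/α}`. -/
noncomputable def rhoAlpha (n : ℕ → ℕ)
    (d : ∀ k : ℕ, Fin (n (k + 1)) → Fin (n (k + 1)) → ℝ) (α : ℝ)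
    (x y : ∀ k : ℕ, Fin (n (k + 1))) : ℝ :=
  if h : x = y then 0
  else
    d (firstDiff x y h) (x (firstDiff x y h)) (y (firstDiff x y h)) /
      (∏ i ∈ Finset.range (firstDiff x y h + 1), (n i : ℝ)) ^ ((1 : ℝ) / α)

/-- With `n_0 = 1`, `n_k ≥ 2`, metrics `d_k` on `{1,…,n_k}` of diameter `1`
and minimal positive distance `δ_k`, and `δ_k > n_k^{−1/α}` for all `k`, the function `ρ_α`
is a metric on `∏_{k≥1} {1,…,n_k}` and the resulting metric space is compact. -/
theorem stmt3 (n : ℕ → ℕ) (hn0 : n 0 = 1) (hn : ∀ k, 1 ≤ k → 2 ≤ n k)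
    (d : ∀ k : ℕ, Fin (n (k + 1)) → Fin (n (k + 1)) → ℝ)
    (hd_symm : ∀ k i j, d k i j = d k j i)
    (hd_self : ∀ k i, d k i i = 0)
    (hd_tri : ∀ k i j l, d k i l ≤ d k i j + d k j l)
    (hd_le : ∀ k i j, d k i j ≤ 1)
    (hd_diam : ∀ k, ∃ i j, d k i j = 1)
    (δ : ℕ → ℝ)
    (hδ_min : ∀ k i j, i ≠ j → δ (k + 1) ≤ d k i j)
    (hδ_att : ∀ k, ∃ i j, i ≠ j ∧ d k i j = δ (k + 1))
    (α : ℝ) (hα : 0 < α)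
    (hδ_big : ∀ k : ℕ, ((n (k + 1) : ℝ)) ^ (-(1 : ℝ) / α) < δ (k + 1)) :
    ∃ m : MetricSpace (∀ k : ℕ, Fin (n (k + 1))),
      (∀ x y, m.dist x y = rhoAlpha n d α x y) ∧
      @CompactSpace _ m.toUniformSpace.toTopologicalSpace := by
  classical
  set X := ∀ k : ℕ, Fin (n (k + 1)) with hXdef
  set ρ := rhoAlpha n d α with hρdef
  -- Basic positivity facts
  have hn1 : ∀ i, (1 : ℝ) ≤ (n i : ℝ) := by
    intro i
    rcases Nat.eq_zero_or_pos i with h | h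
    · simp [h, hn0]
    · exact_mod_cast le_trans (by norm_num) (hn i h)
  have hnpos : ∀ k, (0 : ℝ) < (n (k + 1) : ℝ) := fun k =>
    lt_of_lt_of_le one_pos (hn1 (k + 1))
  have hδpos : ∀ k, 0 < δ (k + 1) := fun k =>
    lt_trans (Real.rpow_pos_of_pos (hnpos k) _) (hδ_big k)
  have hd_pos : ∀ k (i j : Fin (n (k + 1))), i ≠ j → 0 < d k i j := fun k i j hij =>
    lt_of_lt_of_le (hδpos k) (hδ_min k i j hij)
  have hd_nonneg : ∀ k (i j : Fin (n (k + 1))), 0 ≤ d k i j := by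
    intro k i j
    by_cases h : i = j
    · simp [h, hd_self]
    · exact (hd_pos k i j h).le
  -- the denominators
  set P : ℕ → ℝ := fun m => ∏ i ∈ Finset.range (m + 1), (n i : ℝ) with hPdef
  have hP_pos : ∀ m, 0 < P m := fun m =>
    Finset.prod_pos fun i _ => lt_of_lt_of_le one_pos (hn1 i)
  have hP_mono : ∀ {a b : ℕ}, a ≤ b → P a ≤ P b := by
    intro a b hab
    induction b, hab using Nat.le_induction with
    | base => exact le_refl _
    | succ b hab ih =>
      have : P (b + 1) = P b * (n (b + 1) : ℝ) := Finset.prod_range_succ _ _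
      rw [this]
      nlinarith [hP_pos b, hn1 (b + 1), hP_pos a]
  have hP_ge : ∀ m, (2 : ℝ) ^ m ≤ P m := by
    intro m
    induction m with
    | zero => simp [hPdef, hn0]
    | succ m ih =>
      have h2 : (2 : ℝ) ≤ (n (m + 1) : ℝ) := by exact_mod_cast hn (m + 1) (by omega)
      calc (2 : ℝ) ^ (m + 1) = 2 ^ m * 2 := by ring
        _ ≤ P m * (n (m + 1) : ℝ) := by
            apply mul_le_mul ih h2 (by norm_num) (hP_pos m).le
        _ = P (m + 1) := (Finset.prod_range_succ _ _).symm
  set Q : ℕ → ℝ := fun m => (P m) ^ ((1 : ℝ) / α) with hQdef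
  have hQ_pos : ∀ m, 0 < Q m := fun m => Real.rpow_pos_of_pos (hP_pos m) _
  have hQ_mono : ∀ {a b : ℕ}, a ≤ b → Q a ≤ Q b := fun hab =>
    Real.rpow_le_rpow (hP_pos _).le (hP_mono hab) (by positivity)
  have hQ_succ : ∀ m, Q (m + 1) = Q m * ((n (m + 1) : ℝ)) ^ ((1 : ℝ) / α) := by
    intro m
    have : P (m + 1) = P m * (n (m + 1) : ℝ) := (Finset.prod_range_succ _ _)
    rw [hQdef]
    simp only
    rw [this, Real.mul_rpow (hP_pos m).le (hnpos m).le]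
  -- firstDiff facts
  have fd_spec : ∀ (x y : X) (h : x ≠ y), x (firstDiff x y h) ≠ y (firstDiff x y h) :=
    fun x y h => Nat.find_spec (Function.ne_iff.mp h)
  have fd_min : ∀ (x y : X) (h : x ≠ y) {i : ℕ}, i < firstDiff x y h → x i = y i := by
    intro x y h i hi
    by_contra hc
    exact Nat.find_min (Function.ne_iff.mp h) hi hc
  have fd_le : ∀ (x y : X) (h : x ≠ y) {i : ℕ}, x i ≠ y i → firstDiff x y h ≤ i := by
    intro x y h i hi
    exact Nat.find_le hi
  -- rho basic facts
  have rho_eq : ∀ (x y : X) (h : x ≠ y),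
      ρ x y = d (firstDiff x y h) (x (firstDiff x y h)) (y (firstDiff x y h)) /
        Q (firstDiff x y h) := by
    intro x y h
    rw [hρdef, rhoAlpha, dif_neg h]
  have rho_eq' : ∀ (x y : X) (h : x ≠ y) (m : ℕ), firstDiff x y h = m →
      ρ x y = d m (x m) (y m) / Q m := by
    intro x y h m hm
    rw [rho_eq x y h, hm]
  have rho_self : ∀ x : X, ρ x x = 0 := fun x => by simp [hρdef, rhoAlpha]
  have rho_pos : ∀ (x y : X), x ≠ y → 0 < ρ x y := by
    intro x y h
    rw [rho_eq x y h]
    exact div_pos (hd_pos _ _ _ (fd_spec x y h)) (hQ_pos _)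
  have rho_nonneg : ∀ x y : X, 0 ≤ ρ x y := by
    intro x y
    by_cases h : x = y
    · simp [h, rho_self]
    · exact (rho_pos x y h).le
  have rho_comm : ∀ x y : X, ρ x y = ρ y x := by
    intro x y
    by_cases h : x = y
    · simp [h]
    · have h' : y ≠ x := Ne.symm h
      have hfd : firstDiff x y h = firstDiff y x h' :=
        le_antisymm (fd_le x y h (Ne.symm (fd_spec y x h')))
          (fd_le y x h' (Ne.symm (fd_spec x y h)))
      rw [rho_eq x y h, rho_eq y x h', hfd, hd_symm]
  -- upper and lower bounds
  have rho_le : ∀ (x y : X) (h : x ≠ y), ρ x y ≤ 1 / Q (firstDiff x y h) := by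
    intro x y h
    rw [rho_eq x y h]
    gcongr
    exact hd_le _ _ _
  have rho_ge : ∀ (x y : X) (h : x ≠ y) (m : ℕ), firstDiff x y h = m →
      δ (m + 1) / Q m ≤ ρ x y := by
    intro x y h m hm
    rw [rho_eq' x y h m hm]
    gcongr
    subst hm; exact hδ_min _ _ _ (fd_spec x y h)
  -- key comparison : δ beats the next level
  have key_lt : ∀ m : ℕ, 1 / Q (m + 1) < δ (m + 1) / Q m := by
    intro m
    rw [hQ_succ m]
    have h1 : ((n (m + 1) : ℝ)) ^ (-(1 : ℝ) / α) =
        (((n (m + 1) : ℝ)) ^ ((1 : ℝ) / α))⁻¹ := by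
      rw [neg_div, Real.rpow_neg (hnpos m).le]
    have hrpos : (0 : ℝ) < ((n (m + 1) : ℝ)) ^ ((1 : ℝ) / α) :=
      Real.rpow_pos_of_pos (hnpos m) _
    have h2 : ((( n (m + 1) : ℝ)) ^ ((1 : ℝ) / α))⁻¹ < δ (m + 1) := by
      rw [← h1]; exact hδ_big m
    calc 1 / (Q m * ((n (m + 1) : ℝ)) ^ ((1 : ℝ) / α))
        = (((n (m + 1) : ℝ)) ^ ((1 : ℝ) / α))⁻¹ / Q m := by
          field_simp
      _ < δ (m + 1) / Q m := (div_lt_div_iff_of_pos_right (hQ_pos m)).2 h2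
  -- triangle inequality
  have rho_tri : ∀ x y z : X, ρ x z ≤ ρ x y + ρ y z := by
    intro x y z
    by_cases hxz : x = z
    · rw [hxz, rho_self]
      exact add_nonneg (rho_nonneg _ _) (rho_nonneg _ _)
    by_cases hxy : x = y
    · rw [hxy, rho_self, zero_add]
    by_cases hyz : y = z
    · rw [hyz, rho_self, add_zero]
    obtain ⟨m1, hm1⟩ : ∃ m, firstDiff x y hxy = m := ⟨_, rfl⟩
    obtain ⟨m2, hm2⟩ : ∃ m, firstDiff y z hyz = m := ⟨_, rfl⟩
    have hxy_spec : x m1 ≠ y m1 := hm1 ▸ fd_spec x y hxy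
    have hyz_spec : y m2 ≠ z m2 := hm2 ▸ fd_spec y z hyz
    have hxy_min : ∀ i, i < m1 → x i = y i := fun i hi => fd_min x y hxy (hm1 ▸ hi)
    have hyz_min : ∀ i, i < m2 → y i = z i := fun i hi => fd_min y z hyz (hm2 ▸ hi)
    rcases lt_trichotomy m1 m2 with hlt | heq | hgt
    · -- first difference of (x,z) is m1, and ρ x z = ρ x y
      have hz : y m1 = z m1 := hyz_min m1 hlt
      have hxzM : x m1 ≠ z m1 := fun hcon => hxy_spec (hcon.trans hz.symm)
      have hMle : firstDiff x z hxz ≤ m1 := fd_le x z hxz hxzM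
      have hMge : m1 ≤ firstDiff x z hxz := by
        by_contra hc
        push_neg at hc
        exact fd_spec x z hxz
          ((hxy_min _ hc).trans (hyz_min _ (hc.trans hlt)))
      have hM : firstDiff x z hxz = m1 := le_antisymm hMle hMge
      have hre : ρ x z = ρ x y := by
        rw [rho_eq' x z hxz m1 hM, rho_eq' x y hxy m1 hm1, ← hz]
      rw [hre]
      exact le_add_of_nonneg_right (rho_nonneg _ _)
    · -- m1 = m2
      subst heq
      by_cases hsame : x m1 = z m1
      · -- firstDiff x z ≥ m1 + 1; use the δ-vs-n^{-1/α} comparison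
        have hMge : m1 + 1 ≤ firstDiff x z hxz := by
          by_contra hc
          push_neg at hc
          have hle : firstDiff x z hxz ≤ m1 := by omega
          rcases lt_or_eq_of_le hle with h | h
          · exact fd_spec x z hxz ((hxy_min _ h).trans (hyz_min _ h))
          · exact fd_spec x z hxz (h ▸ hsame)
        refine le_of_lt ?_
        calc ρ x z ≤ 1 / Q (firstDiff x z hxz) := rho_le x z hxz
          _ ≤ 1 / Q (m1 + 1) := by
              apply one_div_le_one_div_of_le (hQ_pos _) (hQ_mono hMge)
          _ < δ (m1 + 1) / Q m1 := key_lt m1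
          _ ≤ ρ x y := rho_ge x y hxy m1 hm1
          _ ≤ ρ x y + ρ y z := le_add_of_nonneg_right (rho_nonneg _ _)
      · -- firstDiff x z = m1, use triangle for d m1
        have hMle : firstDiff x z hxz ≤ m1 := fd_le x z hxz hsame
        have hMge : m1 ≤ firstDiff x z hxz := by
          by_contra hc
          push_neg at hc
          exact fd_spec x z hxz ((hxy_min _ hc).trans (hyz_min _ hc))
        have hM : firstDiff x z hxz = m1 := le_antisymm hMle hMge
        rw [rho_eq' x z hxz m1 hM, rho_eq' x y hxy m1 hm1, rho_eq' y z hyz m1 hm2,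
          ← add_div]
        gcongr
        exact hd_tri m1 _ _ _
    · -- m2 < m1 : ρ x z = ρ y z
      have hx : x m2 = y m2 := hxy_min m2 hgt
      have hxzM : x m2 ≠ z m2 := fun hcon => hyz_spec (hx.symm.trans hcon)
      have hMle : firstDiff x z hxz ≤ m2 := fd_le x z hxz hxzM
      have hMge : m2 ≤ firstDiff x z hxz := by
        by_contra hc
        push_neg at hc
        exact fd_spec x z hxz ((hxy_min _ (hc.trans hgt)).trans (hyz_min _ hc))
      have hM : firstDiff x z hxz = m2 := le_antisymm hMle hMge
      have hre : ρ x z = ρ y z := by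
        rw [rho_eq' x z hxz m2 hM, rho_eq' y z hyz m2 hm2, hx]
      rw [hre]
      exact le_add_of_nonneg_left (rho_nonneg _ _)
  -- small cylinders are inside small balls
  have pow_key : ∀ m : ℕ, ((2 : ℝ) ^ ((1 : ℝ) / α)) ^ m = ((2 : ℝ) ^ m) ^ ((1 : ℝ) / α) := by
    intro m
    rw [← Real.rpow_natCast ((2 : ℝ) ^ ((1 : ℝ) / α)) m, ← Real.rpow_mul (by norm_num),
      ← Real.rpow_natCast (2 : ℝ) m, ← Real.rpow_mul (by norm_num), mul_comm]
  have two_rpow_gt : (1 : ℝ) < (2 : ℝ) ^ ((1 : ℝ) / α) := by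
    rw [Real.one_lt_rpow_iff_of_pos (by norm_num)]
    left
    exact ⟨by norm_num, by positivity⟩
  have L1 : ∀ ε : ℝ, 0 < ε → ∃ N : ℕ, ∀ x y : X,
      (∀ i, i < N → x i = y i) → ρ x y < ε := by
    intro ε hε
    set c : ℝ := ((2 : ℝ) ^ ((1 : ℝ) / α))⁻¹ with hc
    have hc0 : 0 < c := by positivity
    have hc1 : c < 1 := by
      rw [hc, inv_lt_one_iff₀]; right; exact two_rpow_gt
    obtain ⟨N, hN⟩ := exists_pow_lt_of_lt_one hε hc1
    refine ⟨N, fun x y hagree => ?_⟩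
    by_cases h : x = y
    · rw [h, rho_self]; exact hε
    · have hfd : N ≤ firstDiff x y h := by
        by_contra hcon
        push_neg at hcon
        exact fd_spec x y h (hagree _ hcon)
      have hQge : ((2 : ℝ) ^ ((1 : ℝ) / α)) ^ N ≤ Q (firstDiff x y h) := by
        calc ((2 : ℝ) ^ ((1 : ℝ) / α)) ^ N ≤ ((2 : ℝ) ^ ((1 : ℝ) / α)) ^ (firstDiff x y h) :=
              pow_le_pow_right₀ two_rpow_gt.le hfd
          _ = ((2 : ℝ) ^ (firstDiff x y h)) ^ ((1 : ℝ) / α) := pow_key _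
          _ ≤ Q (firstDiff x y h) :=
              Real.rpow_le_rpow (by positivity) (hP_ge _) (by positivity)
      calc ρ x y ≤ 1 / Q (firstDiff x y h) := rho_le x y h
        _ ≤ 1 / ((2 : ℝ) ^ ((1 : ℝ) / α)) ^ N :=
            one_div_le_one_div_of_le (by positivity) hQge
        _ = c ^ N := by rw [hc, one_div, ← inv_pow]
        _ < ε := hN
  -- small balls are inside cylinders
  have L2 : ∀ N : ℕ, ∃ ε : ℝ, 0 < ε ∧ ∀ x y : X, ρ x y < ε → ∀ i, i < N → x i = y i := by
    intro N
    rcases Nat.eq_zero_or_pos N with rfl | hN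
    · exact ⟨1, one_pos, fun x y _ i hi => absurd hi (Nat.not_lt_zero i)⟩
    obtain ⟨m0, hm0s, hm0⟩ := Finset.exists_min_image (Finset.range N)
      (fun m => δ (m + 1) / Q m) ⟨0, Finset.mem_range.2 hN⟩
    refine ⟨δ (m0 + 1) / Q m0, div_pos (hδpos m0) (hQ_pos m0), ?_⟩
    intro x y hxy i hi
    by_contra hne
    have hxyne : x ≠ y := fun h => hne (congrFun h i)
    obtain ⟨m, hm⟩ : ∃ m, firstDiff x y hxyne = m := ⟨_, rfl⟩
    have hmle : m ≤ i := hm ▸ fd_le x y hxyne hne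
    have hmem : m ∈ Finset.range N := Finset.mem_range.2 (lt_of_le_of_lt hmle hi)
    have h1 : δ (m0 + 1) / Q m0 ≤ δ (m + 1) / Q m := hm0 m hmem
    have h2 : δ (m + 1) / Q m ≤ ρ x y := rho_ge x y hxyne m hm
    linarith
  -- the metric topology is the product topology
  have H : ∀ s : Set X, IsOpen s ↔ ∀ x ∈ s, ∃ ε > 0, ∀ y, ρ x y < ε → y ∈ s := by
    intro s
    constructor
    · intro hs x hx
      obtain ⟨I, u, hIu, hsub⟩ := isOpen_pi_iff.1 hs x hx
      obtain ⟨ε, hε, hball⟩ := L2 (I.sup id + 1)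
      refine ⟨ε, hε, fun y hy => hsub ?_⟩
      intro i hiI
      have hxi : x i = y i :=
        hball x y hy i (Nat.lt_succ_of_le (Finset.le_sup (f := id) hiI))
      rw [← hxi]
      exact (hIu i hiI).2
    · intro hs
      rw [isOpen_iff_mem_nhds]
      intro x hx
      obtain ⟨ε, hε, hball⟩ := hs x hx
      obtain ⟨N, hN⟩ := L1 ε hε
      have hopen : IsOpen (Set.pi (↑(Finset.range N))
          (fun i => ({x i} : Set (Fin (n (i + 1)))))) :=
        isOpen_set_pi (Finset.range N).finite_toSet fun i _ => isOpen_discrete _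
      apply Filter.mem_of_superset (hopen.mem_nhds ?_)
      · intro y hy
        exact hball y (hN x y fun i hi =>
          (hy i (Finset.mem_coe.2 (Finset.mem_range.2 hi))).symm)
      · intro i _
        rfl
  refine ⟨MetricSpace.ofDistTopology ρ rho_self rho_comm rho_tri H
    (fun x y h => ?_), fun x y => rfl, ?_⟩
  · by_contra hne
    exact absurd h (ne_of_gt (rho_pos x y hne))
  · exact ⟨isCompact_univ⟩
end

section
/- With the notation of the tree-of-metric-spaces construction (n_0 = 1, n_k ≥ 2, metrics d_k on {1,…,n_k} of diameter 1 and minimal distance δ_k, and the metric ρ_α on Y = ∏_{k≥1}{1,…,n_k}), assume δ_k > n_k^{−1/α} for all k and lim_{k→∞} log(1/δ_k) / ∑_{i=1}^{k−1} log n_i = 0. Then the Hausdorff dimension of (Y, ρ_α) equals α. -/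
open scoped Classical

namespace S4

open Filter Metric Set MeasureTheory
open scoped ENNReal NNReal

noncomputable def Np (n : ℕ → ℕ) (k : ℕ) : ℝ := ∏ i ∈ Finset.range k, (n i : ℝ)

structure Ctx (Y : Type*) [MetricSpace Y] where
  n : ℕ → ℕ
  hn0 : n 0 = 1
  hn : ∀ k, 1 ≤ k → 2 ≤ n k
  d : ∀ k : ℕ, Fin (n (k + 1)) → Fin (n (k + 1)) → ℝ
  hd_symm : ∀ k i j, d k i j = d k j i
  hd_self : ∀ k i, d k i i = 0
  hd_tri : ∀ k i j l, d k i l ≤ d k i j + d k j l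
  hd_le : ∀ k i j, d k i j ≤ 1
  δ : ℕ → ℝ
  hδ_min : ∀ k i j, i ≠ j → δ (k + 1) ≤ d k i j
  hδ_le : ∀ k, δ (k + 1) ≤ 1
  α : ℝ
  hα : 0 < α
  hδ_big : ∀ k : ℕ, ((n (k + 1) : ℝ)) ^ (-(1 : ℝ) / α) < δ (k + 1)
  e : Y ≃ (∀ k : ℕ, Fin (n (k + 1)))
  hdist : ∀ a b : Y, dist a b = rhoAlpha n d α (e a) (e b)

namespace Ctx

variable {Y : Type*} [MetricSpace Y] (c : Ctx Y)

lemma hn1 (i : ℕ) : 1 ≤ c.n i := by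
  cases i with
  | zero => exact c.hn0.ge
  | succ i => have := c.hn (i + 1) (by omega); omega

lemma npos (i : ℕ) : 0 < c.n i := c.hn1 i

lemma hd_nonneg (k : ℕ) (i j : Fin (c.n (k + 1))) : 0 ≤ c.d k i j := by
  have h := c.hd_tri k i j i
  rw [c.hd_self] at h
  have h2 := c.hd_symm k j i
  nlinarith

lemma Np_pos (k : ℕ) : 0 < Np c.n k :=
  Finset.prod_pos fun i _ => by exact_mod_cast c.npos i

lemma one_le_prod_cast {ι : Type*} (s : Finset ι) (g : ι → ℕ) (hg : ∀ i, 1 ≤ g i) :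
    1 ≤ ∏ i ∈ s, (g i : ℝ) := by
  have := Finset.prod_le_prod (s := s) (f := fun _ => (1:ℝ)) (g := fun i => (g i : ℝ))
    (fun i _ => zero_le_one) (fun i _ => by show (1:ℝ) ≤ (g i : ℝ); exact_mod_cast hg i)
  simpa using this

lemma one_le_Np (k : ℕ) : 1 ≤ Np c.n k := one_le_prod_cast _ _ c.hn1

lemma Np_mono {k l : ℕ} (h : k ≤ l) : Np c.n k ≤ Np c.n l := by
  obtain ⟨m, rfl⟩ := Nat.exists_eq_add_of_le h
  unfold Np
  rw [Finset.prod_range_add]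
  exact le_mul_of_one_le_right (by positivity) (one_le_prod_cast _ _ fun i => c.hn1 _)

lemma Np_succ (k : ℕ) : Np c.n (k + 1) = Np c.n k * (c.n k : ℝ) :=
  Finset.prod_range_succ _ _

lemma two_pow_le_Np (k : ℕ) : (2 : ℝ) ^ k ≤ Np c.n (k + 1) := by
  induction k with
  | zero => simp [Np, c.hn0]
  | succ k ih =>
      rw [c.Np_succ (k + 1), pow_succ]
      have h2 : (2 : ℝ) ≤ (c.n (k + 1) : ℝ) := by exact_mod_cast c.hn (k + 1) (by omega)
      have := c.Np_pos (k + 1)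
      nlinarith

lemma tendsto_Np : Tendsto (fun k => Np c.n (k + 1)) atTop atTop :=
  tendsto_atTop_mono c.two_pow_le_Np (tendsto_pow_atTop_atTop_of_one_lt one_lt_two)

/-- the `k`-th "shift" formula : `Np (k+1) = ∏_{i<k} n (i+1)` -/
lemma Np_shift (k : ℕ) : Np c.n (k + 1) = ∏ i ∈ Finset.range k, (c.n (i + 1) : ℝ) := by
  rw [Np, Finset.prod_range_succ']
  simp [c.hn0]

lemma Np_rpow_pos (k : ℕ) : 0 < Np c.n k ^ ((1 : ℝ) / c.α) :=
  Real.rpow_pos_of_pos (c.Np_pos k) _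

lemma Np_rpow_mono {k l : ℕ} (h : k ≤ l) :
    Np c.n k ^ ((1 : ℝ) / c.α) ≤ Np c.n l ^ ((1 : ℝ) / c.α) :=
  Real.rpow_le_rpow (c.Np_pos k).le (c.Np_mono h) (le_of_lt (div_pos one_pos c.hα))

noncomputable def ts (k : ℕ) : ℝ := c.δ (k + 1) / Np c.n (k + 1) ^ ((1 : ℝ) / c.α)

lemma hδ_pos (k : ℕ) : 0 < c.δ (k + 1) :=
  lt_trans (Real.rpow_pos_of_pos (by exact_mod_cast c.npos (k + 1)) _) (c.hδ_big k)

lemma ts_pos (k : ℕ) : 0 < c.ts k := div_pos (c.hδ_pos k) (c.Np_rpow_pos (k + 1))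

lemma ts_le (k : ℕ) : c.ts k ≤ 1 / Np c.n (k + 1) ^ ((1 : ℝ) / c.α) :=
  div_le_div₀ (by norm_num) (c.hδ_le k) (c.Np_rpow_pos (k + 1)) le_rfl

lemma lt_ts (k : ℕ) : 1 / Np c.n (k + 2) ^ ((1 : ℝ) / c.α) < c.ts k := by
  have hb := c.hδ_big k
  have hnp : (0:ℝ) < (c.n (k + 1) : ℝ) := by exact_mod_cast c.npos (k + 1)
  have hsplit : Np c.n (k + 2) ^ ((1 : ℝ) / c.α)
      = Np c.n (k + 1) ^ ((1 : ℝ) / c.α) * (c.n (k + 1) : ℝ) ^ ((1 : ℝ) / c.α) := by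
    rw [c.Np_succ (k + 1), Real.mul_rpow (c.Np_pos (k + 1)).le hnp.le]
  have hneg : ((c.n (k + 1) : ℝ)) ^ (-(1 : ℝ) / c.α)
      = 1 / (c.n (k + 1) : ℝ) ^ ((1 : ℝ) / c.α) := by
    rw [neg_div, Real.rpow_neg hnp.le]
    exact (one_div _).symm
  rw [hsplit]
  rw [hneg] at hb
  have h1 : 0 < (c.n (k + 1) : ℝ) ^ ((1 : ℝ) / c.α) := Real.rpow_pos_of_pos hnp _
  have h2 := c.Np_rpow_pos (k + 1)
  rw [ts, lt_div_iff₀ h2, one_div, mul_inv, div_eq_mul_inv]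
  calc (Np c.n (k + 1) ^ ((1:ℝ) / c.α))⁻¹ * ((c.n (k + 1):ℝ) ^ ((1:ℝ) / c.α))⁻¹ * Np c.n (k + 1) ^ ((1:ℝ) / c.α)
      = ((c.n (k + 1):ℝ) ^ ((1:ℝ) / c.α))⁻¹ := by field_simp
    _ = 1 / (c.n (k + 1):ℝ) ^ ((1:ℝ) / c.α) := (one_div _).symm
    _ < c.δ (k + 1) := hb

lemma tendsto_invNp :
    Tendsto (fun k => 1 / Np c.n (k + 1) ^ ((1 : ℝ) / c.α)) atTop (nhds 0) := by
  have h1 : Tendsto (fun x : ℝ => x ^ (-((1 : ℝ) / c.α))) atTop (nhds 0) :=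
    tendsto_rpow_neg_atTop (div_pos one_pos c.hα)
  have h2 := h1.comp c.tendsto_Np
  refine h2.congr fun k => ?_
  simp only [Function.comp]
  rw [Real.rpow_neg (c.Np_pos (k + 1)).le]
  exact (one_div _).symm

lemma tendsto_ts : Tendsto c.ts atTop (nhds 0) := by
  refine squeeze_zero (fun k => (c.ts_pos k).le) (fun k => c.ts_le k) c.tendsto_invNp


lemma firstDiff_spec {x y : ∀ k, Fin (c.n (k + 1))} (h : x ≠ y) :
    x (firstDiff x y h) ≠ y (firstDiff x y h) := Nat.find_spec (Function.ne_iff.mp h)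

lemma firstDiff_le {x y : ∀ k, Fin (c.n (k + 1))} (h : x ≠ y) {j : ℕ} (hj : x j ≠ y j) :
    firstDiff x y h ≤ j := Nat.find_min' _ hj

lemma rho_eq {x y : ∀ k, Fin (c.n (k + 1))} (h : x ≠ y) :
    rhoAlpha c.n c.d c.α x y
      = c.d (firstDiff x y h) (x (firstDiff x y h)) (y (firstDiff x y h)) /
          Np c.n (firstDiff x y h + 1) ^ ((1:ℝ)/c.α) := by
  rw [rhoAlpha, dif_neg h]; rfl

lemma rho_le_of_agree {x y : ∀ k, Fin (c.n (k + 1))} {k : ℕ} (hag : ∀ j < k, x j = y j) :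
    rhoAlpha c.n c.d c.α x y ≤ 1 / Np c.n (k + 1) ^ ((1:ℝ)/c.α) := by
  by_cases h : x = y
  · rw [rhoAlpha, dif_pos h]
    exact le_of_lt (div_pos one_pos (c.Np_rpow_pos _))
  · have hkF : k ≤ firstDiff x y h := by
      by_contra hlt
      push_neg at hlt
      exact (c.firstDiff_spec h) (hag _ hlt)
    rw [c.rho_eq h]
    exact div_le_div₀ zero_le_one (c.hd_le _ _ _) (c.Np_rpow_pos _) (c.Np_rpow_mono (by omega))

lemma ts_le_rho {x y : ∀ k, Fin (c.n (k + 1))} (h : x ≠ y) :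
    c.ts (firstDiff x y h) ≤ rhoAlpha c.n c.d c.α x y := by
  rw [c.rho_eq h, ts]
  exact div_le_div₀ (c.hd_nonneg _ _ _) (c.hδ_min _ _ _ (c.firstDiff_spec h))
    (c.Np_rpow_pos _) le_rfl

lemma agree_of_rho_lt {x y : ∀ k, Fin (c.n (k + 1))} {k : ℕ}
    (hlt : ∀ j < k, rhoAlpha c.n c.d c.α x y < c.ts j) : ∀ j < k, x j = y j := by
  by_contra hc
  push_neg at hc
  obtain ⟨j0, hj0k, hj0⟩ := hc
  have hxy : x ≠ y := fun he => hj0 (by rw [he])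
  have hF : firstDiff x y hxy ≤ j0 := c.firstDiff_le hxy hj0
  exact absurd (c.ts_le_rho hxy) (not_le.2 (hlt _ (lt_of_le_of_lt hF hj0k)))

def cyl (a : Y) (k : ℕ) : Set Y := {b | ∀ j < k, c.e b j = c.e a j}

lemma mem_cyl_self (a : Y) (k : ℕ) : a ∈ c.cyl a k := fun _ _ => rfl

lemma dist_le_of_mem_cyl {a b1 b2 : Y} {k : ℕ} (h1 : b1 ∈ c.cyl a k) (h2 : b2 ∈ c.cyl a k) :
    dist b1 b2 ≤ 1 / Np c.n (k + 1) ^ ((1:ℝ)/c.α) := by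
  rw [c.hdist]
  exact c.rho_le_of_agree fun j hj => (h1 j hj).trans (h2 j hj).symm

lemma ediam_le_of_subset_cyl {s : Set Y} {a : Y} {k : ℕ} (hs : s ⊆ c.cyl a k) :
    EMetric.diam s ≤ ENNReal.ofReal (1 / Np c.n (k + 1) ^ ((1:ℝ)/c.α)) :=
  Metric.ediam_le_of_forall_dist_le fun x hx y hy => c.dist_le_of_mem_cyl (hs hx) (hs hy)

lemma mem_cyl_of_dist_lt_ts {a b : Y} {k : ℕ} (h : ∀ j < k, dist a b < c.ts j) :
    b ∈ c.cyl a k := by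
  intro j hj
  refine (c.agree_of_rho_lt (x := c.e a) (y := c.e b) ?_ j hj).symm
  intro j' hj'
  rw [← c.hdist]
  exact h j' hj'

lemma mem_cyl_of_dist_lt {a b : Y} {k : ℕ} (h : dist a b < 1 / Np c.n (k + 1) ^ ((1:ℝ)/c.α)) :
    b ∈ c.cyl a k := by
  refine c.mem_cyl_of_dist_lt_ts fun j hj => lt_trans (lt_of_lt_of_le h ?_) (c.lt_ts j)
  exact one_div_le_one_div_of_le (c.Np_rpow_pos _) (c.Np_rpow_mono (by omega))

lemma isOpen_cyl (a : Y) (k : ℕ) : IsOpen (c.cyl a k) := by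
  rw [Metric.isOpen_iff]
  intro b hb
  refine ⟨1 / Np c.n (k + 1) ^ ((1:ℝ)/c.α), div_pos one_pos (c.Np_rpow_pos (k+1)), ?_⟩
  intro b' hb'
  have hb'' : b' ∈ c.cyl b k :=
    c.mem_cyl_of_dist_lt (by rwa [Metric.mem_ball, dist_comm] at hb')
  intro j hj
  rw [hb'' j hj, hb j hj]

noncomputable def extend (K : ℕ) (w : ∀ i : Fin K, Fin (c.n (i + 1))) (j : ℕ) :
    Fin (c.n (j + 1)) :=
  if h : j < K then w ⟨j, h⟩ else ⟨0, c.npos _⟩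

noncomputable def pext (K : ℕ) (w : ∀ i : Fin K, Fin (c.n (i + 1))) : Y :=
  c.e.symm (c.extend K w)

lemma e_pext (K : ℕ) (w : ∀ i : Fin K, Fin (c.n (i + 1))) :
    c.e (c.pext K w) = c.extend K w := c.e.apply_symm_apply _

lemma mem_cyl_pext (b : Y) (K : ℕ) :
    b ∈ c.cyl (c.pext K (fun i => c.e b i)) K := by
  intro j hj
  rw [c.e_pext, extend, dif_pos hj]

include c in
lemma totallyBounded : TotallyBounded (univ : Set Y) := by
  rw [Metric.totallyBounded_iff]
  intro ε hε
  obtain ⟨K, hK⟩ : ∃ K, 1 / Np c.n (K + 1) ^ ((1:ℝ)/c.α) < ε :=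
    (c.tendsto_invNp.eventually (gt_mem_nhds hε)).exists
  refine ⟨Set.range (c.pext K), Set.finite_range _, ?_⟩
  intro b _
  simp only [Set.mem_iUnion]
  refine ⟨c.pext K (fun i => c.e b i), Set.mem_range_self _, ?_⟩
  rw [Metric.mem_ball]
  calc dist b (c.pext K fun i => c.e b i)
      ≤ 1 / Np c.n (K + 1) ^ ((1:ℝ)/c.α) :=
        c.dist_le_of_mem_cyl (c.mem_cyl_pext b K) (c.mem_cyl_self _ _)
    _ < ε := hK

include c in
lemma completeSpace : CompleteSpace Y := by
  apply Metric.complete_of_cauchySeq_tendsto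
  intro u hu
  have hM : ∀ k : ℕ, ∃ M, ∀ m1, M ≤ m1 → ∀ m2, M ≤ m2 →
      dist (u m1) (u m2) < 1 / Np c.n (k + 1) ^ ((1:ℝ)/c.α) := by
    intro k
    rcases Metric.cauchySeq_iff.1 hu _ (div_pos one_pos (c.Np_rpow_pos (k+1))) with ⟨M, hMs⟩
    exact ⟨M, fun m1 h1 m2 h2 => hMs m1 h1 m2 h2⟩
  choose M hMspec using hM
  have hagree : ∀ k m1, M k ≤ m1 → ∀ m2, M k ≤ m2 → ∀ j, j < k →
      c.e (u m2) j = c.e (u m1) j := by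
    intro k m1 h1 m2 h2 j hj
    exact (c.mem_cyl_of_dist_lt (hMspec k m1 h1 m2 h2) : u m2 ∈ c.cyl (u m1) k) j hj
  set x : ∀ j, Fin (c.n (j+1)) := fun j => c.e (u (M (j+1))) j with hx
  refine ⟨c.e.symm x, ?_⟩
  rw [Metric.tendsto_atTop]
  intro ε hε
  obtain ⟨K, hK⟩ : ∃ K, 1 / Np c.n (K + 1) ^ ((1:ℝ)/c.α) < ε :=
    (c.tendsto_invNp.eventually (gt_mem_nhds hε)).exists
  refine ⟨Finset.sup (Finset.range (K+1)) (fun j => M (j+1)), fun m hm => ?_⟩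
  have hxm : ∀ j, j < K → c.e (u m) j = x j := by
    intro j hj
    have h1 : M (j + 1) ≤ m :=
      le_trans (Finset.le_sup (f := fun j => M (j+1)) (Finset.mem_range.2 (by omega : j < K + 1))) hm
    exact hagree (j+1) (M (j+1)) le_rfl m h1 j (by omega)
  have hmem : u m ∈ c.cyl (c.e.symm x) K := by
    intro j hj
    rw [hxm j hj, c.e.apply_symm_apply]
  exact lt_of_le_of_lt (c.dist_le_of_mem_cyl hmem (c.mem_cyl_self _ _)) hK

include c in
lemma compactSpace : CompactSpace Y := by
  haveI := c.completeSpace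
  exact ⟨isCompact_iff_totallyBounded_isComplete.2
    ⟨c.totallyBounded, completeSpace_iff_isComplete_univ.1 c.completeSpace⟩⟩


include c in
lemma counting {ι : Type*} (J : Finset ι) (a : ι → Y) (k : ι → ℕ) (K : ℕ)
    (hkK : ∀ i ∈ J, k i ≤ K)
    (hcover : (univ : Set Y) ⊆ ⋃ i ∈ J, c.cyl (a i) (k i)) :
    1 ≤ ∑ i ∈ J, 1 / Np c.n (k i + 1) := by
  classical
  have hchoice : ∀ w : ∀ i : Fin K, Fin (c.n (i + 1)),
      ∃ i, i ∈ J ∧ c.pext K w ∈ c.cyl (a i) (k i) := by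
    intro w
    have h := hcover (Set.mem_univ (c.pext K w))
    simpa using h
  choose φ hφJ hφmem using hchoice
  have hcard := Finset.card_eq_sum_card_fiberwise (f := φ) (s := Finset.univ) (t := J)
    (fun w _ => hφJ w)
  have hfiber : ∀ i ∈ J, (Finset.univ.filter (fun w => φ w = i)).card
      ≤ ∏ j ∈ Finset.Ico (k i) K, c.n (j + 1) := by
    intro i hi
    have hsub : Finset.univ.filter (fun w => φ w = i) ⊆
        Fintype.piFinset (fun j : Fin K => if ((j:ℕ)) < k i
          then ({c.e (a i) j} : Finset (Fin (c.n ((j:ℕ) + 1)))) else Finset.univ) := by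
      intro w hw
      rw [Finset.mem_filter] at hw
      rw [Fintype.mem_piFinset]
      intro j
      by_cases hj : ((j:ℕ)) < k i
      · rw [if_pos hj, Finset.mem_singleton]
        have hmem := hφmem w
        rw [hw.2] at hmem
        have h2 := hmem (j:ℕ) hj
        rw [c.e_pext, extend, dif_pos j.isLt] at h2
        simpa using h2
      · rw [if_neg hj]
        exact Finset.mem_univ _
    calc (Finset.univ.filter (fun w => φ w = i)).card
        ≤ (Fintype.piFinset _).card := Finset.card_le_card hsub
      _ = ∏ j : Fin K, (if ((j:ℕ)) < k i
            then ({c.e (a i) j} : Finset (Fin (c.n ((j:ℕ) + 1)))) else Finset.univ).card :=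
          Fintype.card_piFinset _
      _ = ∏ j : Fin K, (if ((j:ℕ)) < k i then 1 else c.n ((j:ℕ) + 1)) := by
          apply Finset.prod_congr rfl
          intro j _
          split_ifs <;> simp
      _ = ∏ j ∈ Finset.range K, (if j < k i then 1 else c.n (j + 1)) :=
          Fin.prod_univ_eq_prod_range (fun j => if j < k i then 1 else c.n (j + 1)) K
      _ = ∏ j ∈ Finset.Ico (k i) K, c.n (j + 1) := by
          rw [Finset.range_eq_Ico,
            ← Finset.prod_Ico_consecutive _ (Nat.zero_le (k i)) (hkK i hi)]
          have h1 : ∏ j ∈ Finset.Ico 0 (k i), (if j < k i then 1 else c.n (j + 1)) = 1 := by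
            apply Finset.prod_eq_one
            intro j hj
            rw [Finset.mem_Ico] at hj
            rw [if_pos hj.2]
          have h2 : ∏ j ∈ Finset.Ico (k i) K, (if j < k i then 1 else c.n (j + 1))
              = ∏ j ∈ Finset.Ico (k i) K, c.n (j + 1) := by
            apply Finset.prod_congr rfl
            intro j hj
            rw [Finset.mem_Ico] at hj
            rw [if_neg (by omega)]
          rw [h1, h2, one_mul]
  have hW : Fintype.card (∀ i : Fin K, Fin (c.n (i + 1)))
      = ∏ j ∈ Finset.range K, c.n (j + 1) := by
    rw [Fintype.card_pi, ← Fin.prod_univ_eq_prod_range (fun j => c.n (j + 1)) K]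
    apply Finset.prod_congr rfl
    intro j _
    exact Fintype.card_fin _
  have htotnat : ∏ j ∈ Finset.range K, c.n (j + 1)
      ≤ ∑ i ∈ J, ∏ j ∈ Finset.Ico (k i) K, c.n (j + 1) := by
    rw [← hW]
    rw [Fintype.card, hcard]
    exact Finset.sum_le_sum hfiber
  have htot : Np c.n (K + 1) ≤ ∑ i ∈ J, Np c.n (K + 1) * (1 / Np c.n (k i + 1)) := by
    have hcast : (((∏ j ∈ Finset.range K, c.n (j + 1)) : ℕ) : ℝ)
        ≤ ((∑ i ∈ J, ∏ j ∈ Finset.Ico (k i) K, c.n (j + 1) : ℕ) : ℝ) := by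
      exact_mod_cast htotnat
    push_cast at hcast
    rw [← c.Np_shift K] at hcast
    refine le_trans hcast (le_of_eq (Finset.sum_congr rfl ?_))
    intro i hi
    rw [mul_one_div, eq_div_iff (ne_of_gt (c.Np_pos (k i + 1))), c.Np_shift (k i),
      c.Np_shift K, Finset.range_eq_Ico, mul_comm]
    rw [Finset.range_eq_Ico]
    exact Finset.prod_Ico_consecutive (fun j => ((c.n (j + 1) : ℝ)))
      (Nat.zero_le (k i)) (hkK i hi)
  rw [← Finset.mul_sum] at htot
  have hNpos := c.Np_pos (K + 1)
  nlinarith [Finset.sum_nonneg (fun i (_ : i ∈ J) =>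
    le_of_lt (div_pos one_pos (c.Np_pos (k i + 1))))]


lemma exists_pos_lb {f : ℕ → ℝ} (hpos : ∀ k, 0 < f k) (hf : Tendsto f atTop atTop) :
    ∃ c0 > 0, ∀ k, c0 ≤ f k := by
  obtain ⟨K, hK⟩ := Filter.eventually_atTop.1 (hf.eventually_ge_atTop 1)
  refine ⟨min 1 ((Finset.range (K + 1)).inf' Finset.nonempty_range_add_one f), ?_, ?_⟩
  · apply lt_min one_pos
    rw [Finset.lt_inf'_iff]
    intro i _
    exact hpos i
  · intro k
    rcases le_or_gt k K with h | h
    · exact le_trans (min_le_right _ _) (Finset.inf'_le f (Finset.mem_range.2 (by omega)))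
    · exact le_trans (min_le_left _ _) (hK k (by omega))

include c in
lemma log_Np (k : ℕ) :
    Real.log (Np c.n (k + 1)) = ∑ i ∈ Finset.Ico 1 (k + 1), Real.log (c.n i) := by
  rw [Np, Real.log_prod (fun i _ => by
    have := c.npos i
    positivity)]
  rw [Finset.range_eq_Ico, Finset.sum_eq_sum_Ico_succ_bot (by omega) (fun i => Real.log (c.n i))]
  simp [c.hn0]

include c in
lemma exists_c0
    (hlim : Tendsto (fun k : ℕ =>
        Real.log (1 / c.δ k) / ∑ i ∈ Finset.Ico 1 k, Real.log (c.n i)) atTop (nhds 0))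
    {β : ℝ} (hβ0 : 0 ≤ β) (hβα : β < c.α) :
    ∃ c0 > 0, ∀ k, c0 * (1 / Np c.n (k + 1)) ≤ (c.ts k) ^ β := by
  -- the ratio log δ (k+1) / log Np (k+1) tends to 0
  have hratio : Tendsto (fun k : ℕ =>
      Real.log (c.δ (k + 1)) / Real.log (Np c.n (k + 1))) atTop (nhds 0) := by
    have h1 := hlim.comp (Filter.tendsto_add_atTop_nat 1)
    have h2 : (fun k : ℕ => Real.log (1 / c.δ (k + 1)) /
        ∑ i ∈ Finset.Ico 1 (k + 1), Real.log (c.n i))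
        = fun k : ℕ => -(Real.log (c.δ (k + 1)) / Real.log (Np c.n (k + 1))) := by
      funext k
      rw [c.log_Np k, one_div, Real.log_inv, neg_div]
    rw [show Function.comp (fun k : ℕ =>
        Real.log (1 / c.δ k) / ∑ i ∈ Finset.Ico 1 k, Real.log (c.n i)) (fun a => a + 1)
        = (fun k : ℕ => Real.log (1 / c.δ (k + 1)) /
            ∑ i ∈ Finset.Ico 1 (k + 1), Real.log (c.n i)) from rfl, h2] at h1
    have h3 := h1.neg
    simpa using h3
  -- the logs of Np tend to ∞
  have hL : Tendsto (fun k : ℕ => Real.log (Np c.n (k + 1))) atTop atTop :=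
    Real.tendsto_log_atTop.comp c.tendsto_Np
  -- the factor tends to 1 - β/α > 0
  have hfac : Tendsto (fun k : ℕ => (1 - β / c.α) +
      β * (Real.log (c.δ (k + 1)) / Real.log (Np c.n (k + 1)))) atTop
      (nhds (1 - β / c.α)) := by
    have := tendsto_const_nhds (x := (1 - β / c.α)) (f := atTop (α := ℕ)) |>.add
      ((hratio.const_mul β))
    simpa using this
  have hfacpos : 0 < 1 - β / c.α := by
    have : β / c.α < 1 := (div_lt_one c.hα).2 hβα
    linarith
  have hg : Tendsto (fun k : ℕ => Real.log (Np c.n (k + 1)) * ((1 - β / c.α) +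
      β * (Real.log (c.δ (k + 1)) / Real.log (Np c.n (k + 1))))) atTop atTop :=
    Filter.Tendsto.atTop_mul_pos hfacpos hL hfac
  -- f k := ts k ^ β * Np (k+1) tends to ∞
  have hfpos : ∀ k, 0 < (c.ts k) ^ β * Np c.n (k + 1) := fun k => by
    have h1 := c.ts_pos k
    have h2 := c.Np_pos (k + 1)
    positivity
  have hftend : Tendsto (fun k => (c.ts k) ^ β * Np c.n (k + 1)) atTop atTop := by
    refine (Real.tendsto_exp_atTop.comp hg).congr' ?_
    filter_upwards [Filter.eventually_ge_atTop 1] with k hk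
    have hLpos : 0 < Real.log (Np c.n (k + 1)) := by
      apply Real.log_pos
      calc (1:ℝ) < 2 ^ k := by
            apply one_lt_pow₀ (by norm_num)
            omega
        _ ≤ Np c.n (k + 1) := c.two_pow_le_Np k
    have hLne : Real.log (Np c.n (k + 1)) ≠ 0 := ne_of_gt hLpos
    show Real.exp (Real.log (Np c.n (k + 1)) * ((1 - β / c.α) +
        β * (Real.log (c.δ (k + 1)) / Real.log (Np c.n (k + 1))))) = _
    have hts : Real.log (c.ts k) = Real.log (c.δ (k + 1)) -
        (1 / c.α) * Real.log (Np c.n (k + 1)) := by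
      rw [ts, Real.log_div (ne_of_gt (c.hδ_pos k)) (ne_of_gt (c.Np_rpow_pos (k + 1))),
        Real.log_rpow (c.Np_pos (k + 1))]
    have hexp : Real.log (Np c.n (k + 1)) * ((1 - β / c.α) +
        β * (Real.log (c.δ (k + 1)) / Real.log (Np c.n (k + 1))))
        = Real.log (c.ts k) * β + Real.log (Np c.n (k + 1)) := by
      rw [hts]
      field_simp
      ring
    rw [hexp, Real.exp_add, ← Real.rpow_def_of_pos (c.ts_pos k),
      Real.exp_log (c.Np_pos (k + 1))]
  obtain ⟨c0, hc0pos, hc0⟩ := exists_pos_lb hfpos hftend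
  refine ⟨c0, hc0pos, fun k => ?_⟩
  have h1 := hc0 k
  have h2 := c.Np_pos (k + 1)
  rw [mul_one_div, div_le_iff₀ h2]
  linarith [h1]


include c in
lemma dimH_le_alpha [MeasurableSpace Y] [BorelSpace Y] :
    dimH (Set.univ : Set Y) ≤ ENNReal.ofReal c.α := by
  refine dimH_le fun β hβ => ?_
  by_contra hcon
  push_neg at hcon
  have hβα : c.α < (β : ℝ) := by
    rw [← ENNReal.ofReal_coe_nnreal] at hcon
    exact (ENNReal.ofReal_lt_ofReal_iff_of_nonneg c.hα.le).1 hcon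
  set t : ∀ K : ℕ, (∀ i : Fin K, Fin (c.n (i + 1))) → Set Y :=
    fun K w => c.cyl (c.pext K w) K with ht
  have hdiam : ∀ K w, EMetric.diam (t K w)
      ≤ ENNReal.ofReal (1 / Np c.n (K + 1) ^ ((1:ℝ)/c.α)) :=
    fun K w => c.ediam_le_of_subset_cyl subset_rfl
  have hcov : ∀ K : ℕ, (Set.univ : Set Y) ⊆ ⋃ w, t K w := by
    intro K b _
    rw [Set.mem_iUnion]
    exact ⟨fun i => c.e b i, c.mem_cyl_pext b K⟩
  have hr : Tendsto (fun K => ENNReal.ofReal (1 / Np c.n (K + 1) ^ ((1:ℝ)/c.α)))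
      atTop (nhds 0) := by
    have h := ENNReal.tendsto_ofReal c.tendsto_invNp
    simpa using h
  have hle := MeasureTheory.Measure.hausdorffMeasure_le_liminf_sum (β : ℝ) (Set.univ : Set Y)
    (fun K => ENNReal.ofReal (1 / Np c.n (K + 1) ^ ((1:ℝ)/c.α))) hr t
    (Filter.Eventually.of_forall fun K w => hdiam K w)
    (Filter.Eventually.of_forall hcov)
  have hsum : ∀ K : ℕ, (∑ w : (∀ i : Fin K, Fin (c.n (i + 1))),
      EMetric.diam (t K w) ^ ((β:ℝ)))
      ≤ ENNReal.ofReal (Np c.n (K + 1) ^ (1 - (β:ℝ)/c.α)) := by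
    intro K
    have hRpos : 0 < 1 / Np c.n (K + 1) ^ ((1:ℝ)/c.α) :=
      div_pos one_pos (c.Np_rpow_pos (K+1))
    have hbd : ∀ w, EMetric.diam (t K w) ^ ((β:ℝ))
        ≤ ENNReal.ofReal ((1 / Np c.n (K + 1) ^ ((1:ℝ)/c.α)) ^ ((β:ℝ))) := by
      intro w
      rw [← ENNReal.ofReal_rpow_of_pos hRpos]
      exact ENNReal.rpow_le_rpow (hdiam K w) β.2
    have hW : ((Fintype.card (∀ i : Fin K, Fin (c.n (i + 1))) : ℝ)) = Np c.n (K + 1) := by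
      rw [Fintype.card_pi, c.Np_shift K]
      push_cast
      rw [← Fin.prod_univ_eq_prod_range (fun j => ((c.n (j + 1) : ℝ))) K]
      apply Finset.prod_congr rfl
      intro j _
      rw [Fintype.card_fin]
    calc ∑ w : (∀ i : Fin K, Fin (c.n (i + 1))), EMetric.diam (t K w) ^ ((β:ℝ))
        ≤ ∑ _w : (∀ i : Fin K, Fin (c.n (i + 1))),
            ENNReal.ofReal ((1 / Np c.n (K + 1) ^ ((1:ℝ)/c.α)) ^ ((β:ℝ))) :=
          Finset.sum_le_sum fun w _ => hbd w
      _ = (Fintype.card (∀ i : Fin K, Fin (c.n (i + 1))) : ℝ≥0∞) *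
            ENNReal.ofReal ((1 / Np c.n (K + 1) ^ ((1:ℝ)/c.α)) ^ ((β:ℝ))) := by
          rw [Finset.sum_const, nsmul_eq_mul, Finset.card_univ]
      _ = ENNReal.ofReal (Np c.n (K + 1) * (1 / Np c.n (K + 1) ^ ((1:ℝ)/c.α)) ^ ((β:ℝ))) := by
          rw [← ENNReal.ofReal_natCast (Fintype.card (∀ i : Fin K, Fin (c.n (i + 1)))), hW,
            ← ENNReal.ofReal_mul (c.Np_pos (K + 1)).le]
      _ = ENNReal.ofReal (Np c.n (K + 1) ^ (1 - (β:ℝ)/c.α)) := by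
          congr 1
          rw [one_div, ← Real.rpow_neg (c.Np_pos (K + 1)).le,
            ← Real.rpow_mul (c.Np_pos (K + 1)).le]
          nth_rewrite 1 [← Real.rpow_one (Np c.n (K + 1))]
          rw [← Real.rpow_add (c.Np_pos (K + 1))]
          congr 1
          ring
  have hlim0 : Tendsto (fun K => ENNReal.ofReal (Np c.n (K + 1) ^ (1 - (β:ℝ)/c.α)))
      atTop (nhds 0) := by
    have hneg : (0:ℝ) < ((β:ℝ)/c.α) - 1 := by
      rw [lt_sub_iff_add_lt, zero_add, lt_div_iff₀ c.hα, one_mul]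
      exact hβα
    have h1 : Tendsto (fun x : ℝ => x ^ (-((((β:ℝ))/c.α) - 1))) atTop (nhds 0) :=
      tendsto_rpow_neg_atTop hneg
    have h2 := h1.comp c.tendsto_Np
    have h3 : (fun K => Np c.n (K + 1) ^ (1 - ((β:ℝ))/c.α))
        = (fun x : ℝ => x ^ (-((((β:ℝ))/c.α) - 1))) ∘ (fun K => Np c.n (K + 1)) := by
      funext K
      simp only [Function.comp, neg_sub]
    have h4 : Tendsto (fun K => Np c.n (K + 1) ^ (1 - ((β:ℝ))/c.α)) atTop (nhds 0) := by
      rw [h3]; exact h2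
    have h5 := ENNReal.tendsto_ofReal h4
    simpa using h5
  have hliminf : Filter.liminf (fun K => ∑ w : (∀ i : Fin K, Fin (c.n (i + 1))),
      EMetric.diam (t K w) ^ ((β:ℝ))) atTop = 0 := by
    have hle2 := Filter.liminf_le_liminf (f := (atTop : Filter ℕ)) (Filter.Eventually.of_forall hsum)
    rw [hlim0.liminf_eq] at hle2
    exact le_antisymm hle2 (zero_le)
  replace hle := hle.trans_eq hliminf
  rw [hβ] at hle
  simp at hle

include c in
lemma alpha_le_dimH [MeasurableSpace Y] [BorelSpace Y]
    (hlim : Tendsto (fun k : ℕ =>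
        Real.log (1 / c.δ k) / ∑ i ∈ Finset.Ico 1 k, Real.log (c.n i)) atTop (nhds 0)) :
    ENNReal.ofReal c.α ≤ dimH (Set.univ : Set Y) := by
  refine ENNReal.le_of_forall_nnreal_lt fun β hβ => ?_
  have hβα : ((β:ℝ)) < c.α := by
    have h := (ENNReal.lt_ofReal_iff_toReal_lt (by simp)).1 hβ
    simpa using h
  obtain ⟨c0, hc0pos, hc0⟩ := c.exists_c0 hlim (β := ((β:ℝ))) β.2 hβα
  refine le_dimH_of_hausdorffMeasure_ne_zero (d := β) ?_
  have hmain : ENNReal.ofReal (c0/2) ≤ μH[((β:ℝ))] (Set.univ : Set Y) := by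
    rw [MeasureTheory.Measure.hausdorffMeasure_apply]
    refine le_trans ?_ (le_iSup₂ (α := ℝ≥0∞) (1 : ℝ≥0∞) one_pos)
    refine le_iInf fun tt => le_iInf fun hcov => le_iInf fun hdiam => ?_
    classical
    haveI := c.compactSpace
    have hfin : ∀ m : ℕ, EMetric.diam (tt m) ≠ ⊤ :=
      fun m => ne_top_of_le_ne_top ENNReal.one_ne_top (hdiam m)
    set D : ℕ → ℝ := fun m => Metric.diam (tt m) with hD
    have hex : ∀ m, 0 < D m → ∃ j, c.ts j ≤ D m := by
      intro m hm
      obtain ⟨j, hj⟩ := (c.tendsto_ts.eventually (gt_mem_nhds hm)).exists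
      exact ⟨j, le_of_lt hj⟩
    set kk : ℕ → ℕ := fun m => if h : 0 < D m then Nat.find (hex m h) else m + 2 with hkk
    set x : ℕ → Y := fun m => if h : (tt m).Nonempty then h.some
      else c.pext 0 (fun i => i.elim0) with hx
    have hsubcyl : ∀ m, tt m ⊆ c.cyl (x m) (kk m) := by
      intro m b hb
      have hne : (tt m).Nonempty := ⟨b, hb⟩
      have hxm : x m ∈ tt m := by
        simp only [hx, dif_pos hne]
        exact hne.some_mem
      have hdb : dist (x m) b ≤ D m := Metric.dist_le_diam_of_mem' (hfin m) hxm hb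
      apply c.mem_cyl_of_dist_lt_ts
      intro j hj
      by_cases hDm : 0 < D m
      · have hkm : kk m = Nat.find (hex m hDm) := by simp only [hkk, dif_pos hDm]
        rw [hkm] at hj
        have hmin : ¬ c.ts j ≤ D m := Nat.find_min (hex m hDm) hj
        exact lt_of_le_of_lt hdb (not_le.1 hmin)
      · exact lt_of_le_of_lt (le_trans hdb (not_lt.1 hDm)) (c.ts_pos j)
    set U : ℕ → Set Y := fun m => if (tt m).Nonempty then c.cyl (x m) (kk m) else ∅ with hU
    have hUopen : ∀ m, IsOpen (U m) := by
      intro m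
      by_cases h : (tt m).Nonempty
      · simp only [hU, if_pos h]
        exact c.isOpen_cyl _ _
      · simp only [hU, if_neg h]
        exact isOpen_empty
    have hUcov : (Set.univ : Set Y) ⊆ ⋃ m, U m := by
      intro b _
      obtain ⟨m, hm⟩ := Set.mem_iUnion.1 (hcov (Set.mem_univ b))
      refine Set.mem_iUnion.2 ⟨m, ?_⟩
      simp only [hU, if_pos (Set.nonempty_of_mem hm)]
      exact hsubcyl m hm
    obtain ⟨J, hJ⟩ := isCompact_univ.elim_finite_subcover U hUopen hUcov
    have hcycov : (Set.univ : Set Y) ⊆ ⋃ m ∈ J, c.cyl (x m) (kk m) := by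
      intro b hb
      obtain ⟨m, hmJ, hmU⟩ := Set.mem_iUnion₂.1 (hJ hb)
      refine Set.mem_iUnion₂.2 ⟨m, hmJ, ?_⟩
      by_cases h : (tt m).Nonempty
      · simp only [hU, if_pos h] at hmU
        exact hmU
      · simp only [hU, if_neg h] at hmU
        exact absurd hmU (Set.notMem_empty b)
    have hcount := c.counting J x kk (J.sup kk) (fun m hm => Finset.le_sup hm) hcycov
    set J1 := J.filter (fun m => 0 < D m) with hJ1
    set J2 := J.filter (fun m => ¬ 0 < D m) with hJ2
    have hJsplit : ∑ m ∈ J1, 1 / Np c.n (kk m + 1) + ∑ m ∈ J2, 1 / Np c.n (kk m + 1)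
        = ∑ m ∈ J, 1 / Np c.n (kk m + 1) :=
      Finset.sum_filter_add_sum_filter_not J _ _
    have hJ2small : ∑ m ∈ J2, 1 / Np c.n (kk m + 1) ≤ 1/2 := by
      have hterm : ∀ m ∈ J2, 1 / Np c.n (kk m + 1) ≤ (1/2:ℝ) ^ (m + 2) := by
        intro m hm
        have hmD : ¬ 0 < D m := (Finset.mem_filter.1 hm).2
        have hkm : kk m = m + 2 := by simp only [hkk, dif_neg hmD]
        rw [hkm, div_pow, one_pow]
        have h2p := c.two_pow_le_Np (m + 2)
        have h2pos : (0:ℝ) < 2 ^ (m + 2) := by positivity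
        exact one_div_le_one_div_of_le h2pos h2p
      have hsummable : Summable (fun m : ℕ => (1/2:ℝ) ^ (m + 2)) := by
        apply Summable.comp_injective ?_ (add_left_injective 2)
        exact summable_geometric_of_lt_one (by norm_num) (by norm_num)
      calc ∑ m ∈ J2, 1 / Np c.n (kk m + 1) ≤ ∑ m ∈ J2, (1/2:ℝ)^(m+2) :=
            Finset.sum_le_sum hterm
        _ ≤ ∑' m : ℕ, (1/2:ℝ)^(m+2) :=
            Summable.sum_le_tsum J2 (fun m _ => by positivity) hsummable
        _ = 1/2 := by
            have h1 : ∀ m : ℕ, (1/2:ℝ)^(m+2) = (1/2:ℝ)^m * (1/4:ℝ) := by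
              intro m
              rw [pow_add]
              norm_num
            rw [tsum_congr h1, tsum_mul_right, tsum_geometric_of_lt_one (by norm_num) (by norm_num)]
            norm_num
    have hJ1big : (1:ℝ)/2 ≤ ∑ m ∈ J1, 1 / Np c.n (kk m + 1) := by
      rw [← hJsplit] at hcount
      linarith
    have hts_le_D : ∀ m ∈ J1, c.ts (kk m) ≤ D m := by
      intro m hm
      have hmD : 0 < D m := by
        have := (Finset.mem_filter.1 hm).2
        simpa using this
      have hkm : kk m = Nat.find (hex m hmD) := by simp only [hkk, dif_pos hmD]
      rw [hkm]
      exact Nat.find_spec (hex m hmD)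
    have hkey : ∀ m ∈ J1, c0 * (1 / Np c.n (kk m + 1)) ≤ D m ^ ((β:ℝ)) := by
      intro m hm
      refine le_trans (hc0 (kk m)) ?_
      exact Real.rpow_le_rpow (c.ts_pos (kk m)).le (hts_le_D m hm) β.2
    have hsumD : c0 / 2 ≤ ∑ m ∈ J1, D m ^ ((β:ℝ)) := by
      calc c0/2 = c0 * (1/2) := by ring
        _ ≤ c0 * ∑ m ∈ J1, 1 / Np c.n (kk m + 1) :=
            mul_le_mul_of_nonneg_left hJ1big hc0pos.le
        _ = ∑ m ∈ J1, c0 * (1 / Np c.n (kk m + 1)) := Finset.mul_sum _ _ _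
        _ ≤ ∑ m ∈ J1, D m ^ ((β:ℝ)) := Finset.sum_le_sum hkey
    calc ENNReal.ofReal (c0/2) ≤ ENNReal.ofReal (∑ m ∈ J1, D m ^ ((β:ℝ))) :=
          ENNReal.ofReal_le_ofReal hsumD
      _ = ∑ m ∈ J1, ENNReal.ofReal (D m ^ ((β:ℝ))) :=
          ENNReal.ofReal_sum_of_nonneg (fun m _ => by positivity)
      _ ≤ ∑ m ∈ J1, ⨆ _ : (tt m).Nonempty, EMetric.diam (tt m) ^ ((β:ℝ)) := by
          apply Finset.sum_le_sum
          intro m hm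
          have hmD : 0 < D m := by
            have := (Finset.mem_filter.1 hm).2
            simpa using this
          have hne : (tt m).Nonempty := by
            rw [Set.nonempty_iff_ne_empty]
            intro hemp
            rw [hD] at hmD
            simp only [hemp, Metric.diam_empty] at hmD
            exact lt_irrefl 0 hmD
          rw [iSup_pos hne]
          have hofD : ENNReal.ofReal (D m) = EMetric.diam (tt m) := by
            simp only [hD, Metric.diam]
            exact ENNReal.ofReal_toReal (hfin m)
          rw [← ENNReal.ofReal_rpow_of_pos hmD, hofD]
      _ ≤ ∑' m, ⨆ _ : (tt m).Nonempty, EMetric.diam (tt m) ^ ((β:ℝ)) :=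
          ENNReal.sum_le_tsum J1
  intro h0
  rw [h0] at hmain
  have hpos := ENNReal.ofReal_pos.2 (half_pos hc0pos)
  exact hpos.ne' (le_antisymm hmain (zero_le))

end Ctx
end S4

/-- With the tree-of-metric-spaces construction, if `δ_k > n_k^{−1/α}` for
all `k` and `log(1/δ_k) / ∑_{i=1}^{k−1} log n_i → 0`, then the Hausdorff dimension of
`(∏_{k≥1}{1,…,n_k}, ρ_α)` equals `α`. -/
theorem stmt4 {Y : Type*} [MetricSpace Y] [MeasurableSpace Y] [BorelSpace Y]
    (n : ℕ → ℕ) (hn0 : n 0 = 1) (hn : ∀ k, 1 ≤ k → 2 ≤ n k)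
    (d : ∀ k : ℕ, Fin (n (k + 1)) → Fin (n (k + 1)) → ℝ)
    (hd_symm : ∀ k i j, d k i j = d k j i)
    (hd_self : ∀ k i, d k i i = 0)
    (hd_tri : ∀ k i j l, d k i l ≤ d k i j + d k j l)
    (hd_le : ∀ k i j, d k i j ≤ 1)
    (hd_diam : ∀ k, ∃ i j, d k i j = 1)
    (δ : ℕ → ℝ)
    (hδ_min : ∀ k i j, i ≠ j → δ (k + 1) ≤ d k i j)
    (hδ_att : ∀ k, ∃ i j, i ≠ j ∧ d k i j = δ (k + 1))
    (α : ℝ) (hα : 0 < α)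
    (hδ_big : ∀ k : ℕ, ((n (k + 1) : ℝ)) ^ (-(1 : ℝ) / α) < δ (k + 1))
    (hlim : Filter.Tendsto
      (fun k : ℕ => Real.log (1 / δ k) / ∑ i ∈ Finset.Ico 1 k, Real.log (n i))
      Filter.atTop (nhds 0))
    (e : Y ≃ (∀ k : ℕ, Fin (n (k + 1))))
    (hdist : ∀ a b : Y, dist a b = rhoAlpha n d α (e a) (e b)) :
    dimH (Set.univ : Set Y) = ENNReal.ofReal α := by
  have hδ_le : ∀ k, δ (k + 1) ≤ 1 := by
    intro k
    obtain ⟨i, j, hne, heq⟩ := hδ_att k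
    rw [← heq]
    exact hd_le k i j
  exact le_antisymm
    (S4.Ctx.dimH_le_alpha
      ⟨n, hn0, hn, d, hd_symm, hd_self, hd_tri, hd_le, δ, hδ_min, hδ_le, α, hα, hδ_big,
        e, hdist⟩)
    (S4.Ctx.alpha_le_dimH
      ⟨n, hn0, hn, d, hd_symm, hd_self, hd_tri, hd_le, δ, hδ_min, hδ_le, α, hα, hδ_big,
        e, hdist⟩ hlim)
end

section
/- Fix integers h ≥ k ≥ 2. Let T be a finite rooted tree all of whose leaves are at depth h, let w : T → (0,∞) satisfy w(u) ≤ ∑_{v child of u} w(v) for every non-leaf u, and suppose each non-leaf u has a designated child c(u) maximizing the modified weight w_h^k among children of u, where w_h^k(v) = ∑_{leaves ℓ below v} w(ℓ)^((k−1)/k) (this equals the formula since all leaves are at depth h ≤ h). For i ∈ {1,…,h} let T^(i) be the subtree obtained from T by deleting, for every vertex u at depth i−1, all subtrees rooted at non-designated children of u. Then there exists a set L ⊆ {1,…,h} with |L| ≥ h−k+1 such that for every i ∈ L, ∑_{ℓ ∈ L(T^(i))} w(ℓ)^((k−1)/k) ≥ w(r)^((k−1)/k), where r is the root of T and L(T^(i))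 is the set of leaves of T^(i). -/
set_option linter.unusedSectionVars false
set_option linter.unusedVariables false

open scoped Classical

/-- The modified weight of a vertex `v` in a tree of height `h`:
`∑_{leaves ℓ below v} w(ℓ)^e`. -/
noncomputable def leafSum {V : Type*} [Fintype V] (parent : V → V) (root : V)
    (w : V → ℝ) (e : ℝ) (v : V) : ℝ :=
  ∑ ℓ ∈ Finset.univ.filter (fun ℓ => IsTreeLeaf parent root ℓ ∧ anc parent v ℓ), w ℓ ^ e

section Stmt6Aux

variable {V : Type*} [Fintype V] [DecidableEq V]

theorem stmt6_anc_refl (parent : V → V) (v : V) : anc parent v v := ⟨0, rfl⟩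

theorem stmt6_anc_iter (parent : V → V) (n : ℕ) (v : V) : anc parent (parent^[n] v) v :=
  ⟨n, rfl⟩

theorem stmt6_anc_trans {parent : V → V} {a b c : V} (h1 : anc parent a b)
    (h2 : anc parent b c) : anc parent a c := by
  obtain ⟨n, hn⟩ := h1
  obtain ⟨m, hm⟩ := h2
  exact ⟨n + m, by rw [Function.iterate_add_apply, hm, hn]⟩

variable {h : ℕ} {root : V} {parent : V → V} {depth : V → ℕ}

theorem stmt6_iter_depth (hdepth_root : depth root = 0)
    (hdepth : ∀ v, v ≠ root → depth v = depth (parent v) + 1) :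
    ∀ (n : ℕ) (v : V), n ≤ depth v → depth (parent^[n] v) = depth v - n := by
  intro n
  induction n with
  | zero => intro v _; simp
  | succ n ih =>
    intro v hn
    rw [Function.iterate_succ_apply']
    have hx : depth (parent^[n] v) = depth v - n := ih v (by omega)
    have hxr : parent^[n] v ≠ root := by
      intro hr; rw [hr, hdepth_root] at hx; omega
    have := hdepth _ hxr
    omega

theorem stmt6_depth_zero (hdepth_root : depth root = 0)
    (hdepth : ∀ v, v ≠ root → depth v = depth (parent v) + 1)
    {v : V} (h0 : depth v = 0) : v = root := by
  by_contra hne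
  have := hdepth v hne
  omega

/-- ancestor of `v` at depth `d`. -/
def stmt6A (parent : V → V) (depth : V → ℕ) (d : ℕ) (v : V) : V :=
  parent^[depth v - d] v

theorem stmt6A_anc (parent : V → V) (depth : V → ℕ) (d : ℕ) (v : V) :
    anc parent (stmt6A parent depth d v) v := ⟨_, rfl⟩

theorem stmt6A_depth (hdepth_root : depth root = 0)
    (hdepth : ∀ v, v ≠ root → depth v = depth (parent v) + 1)
    {d : ℕ} {v : V} (hd : d ≤ depth v) :
    depth (stmt6A parent depth d v) = d := by
  unfold stmt6A
  rw [stmt6_iter_depth hdepth_root hdepth _ _ (Nat.sub_le _ _)]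
  omega

theorem stmt6_iter_root (hparent_root : parent root = root) (hdepth_root : depth root = 0)
    (hdepth : ∀ v, v ≠ root → depth v = depth (parent v) + 1) :
    ∀ (n : ℕ) (v : V), depth v ≤ n → parent^[n] v = root := by
  intro n
  induction n with
  | zero =>
    intro v hv
    simp only [Function.iterate_zero_apply]
    exact stmt6_depth_zero hdepth_root hdepth (by omega)
  | succ n ih =>
    intro v hv
    rw [Function.iterate_succ_apply]
    by_cases hvr : v = root
    · rw [hvr, hparent_root]
      exact ih root (by omega)
    · exact ih (parent v) (by have := hdepth v hvr; omega)

theorem stmt6_anc_eq_A (hparent_root : parent root = root) (hdepth_root : depth root = 0)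
    (hdepth : ∀ v, v ≠ root → depth v = depth (parent v) + 1) {a v : V}
    (ha : anc parent a v) : stmt6A parent depth (depth a) v = a := by
  obtain ⟨n, hn⟩ := ha
  by_cases hnd : n ≤ depth v
  · have hda : depth a = depth v - n := by
      rw [← hn]; exact stmt6_iter_depth hdepth_root hdepth n v hnd
    unfold stmt6A
    rw [hda]
    have heq : depth v - (depth v - n) = n := by omega
    rw [heq, hn]
  · have har : a = root := by
      rw [← hn]; exact stmt6_iter_root hparent_root hdepth_root hdepth n v (by omega)
    subst har
    unfold stmt6A
    rw [hdepth_root]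
    exact stmt6_iter_root hparent_root hdepth_root hdepth _ v (by omega)

theorem stmt6A_comp (hdepth_root : depth root = 0)
    (hdepth : ∀ v, v ≠ root → depth v = depth (parent v) + 1)
    {d' d : ℕ} {v : V} (h1 : d' ≤ d) (h2 : d ≤ depth v) :
    stmt6A parent depth d' (stmt6A parent depth d v) = stmt6A parent depth d' v := by
  have hA : depth (stmt6A parent depth d v) = d := stmt6A_depth hdepth_root hdepth h2
  show parent^[depth (stmt6A parent depth d v) - d'] (stmt6A parent depth d v) = _
  rw [hA]
  unfold stmt6A
  rw [← Function.iterate_add_apply]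
  congr 1
  omega

theorem stmt6A_parent (hdepth_root : depth root = 0)
    (hdepth : ∀ v, v ≠ root → depth v = depth (parent v) + 1)
    {d : ℕ} {v : V} (h1 : d + 1 ≤ depth v) :
    parent (stmt6A parent depth (d + 1) v) = stmt6A parent depth d v := by
  have hiter : depth v - (d + 1) + 1 = depth v - d := by omega
  show parent (parent^[depth v - (d + 1)] v) = parent^[depth v - d] v
  rw [← Function.iterate_succ_apply' parent (depth v - (d + 1)) v]
  show parent^[depth v - (d + 1) + 1] v = parent^[depth v - d] v
  rw [hiter]

theorem stmt6A_child (hdepth_root : depth root = 0)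
    (hdepth : ∀ v, v ≠ root → depth v = depth (parent v) + 1)
    {d : ℕ} {v : V} (h1 : d + 1 ≤ depth v) :
    stmt6A parent depth (d + 1) v ∈ childrenOf parent root (stmt6A parent depth d v) := by
  refine ⟨stmt6A_parent hdepth_root hdepth h1, ?_⟩
  intro hr
  have hdd : depth (stmt6A parent depth (d + 1) v) = d + 1 :=
    stmt6A_depth hdepth_root hdepth h1
  rw [hr, hdepth_root] at hdd
  omega

/-- the set of vertices at depth `d`. -/
def stmt6lvl (depth : V → ℕ) (d : ℕ) : Finset V :=
  Finset.univ.filter (fun v => depth v = d)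

@[simp] theorem stmt6lvl_mem {depth : V → ℕ} {d : ℕ} {v : V} :
    v ∈ stmt6lvl depth d ↔ depth v = d := by simp [stmt6lvl]

variable {w : V → ℝ} {e : ℝ}

theorem stmt6_leafSum_nonneg (hw : ∀ v, 0 < w v) (v : V) :
    0 ≤ leafSum parent root w e v :=
  Finset.sum_nonneg fun ℓ _ => Real.rpow_nonneg (hw ℓ).le e

theorem stmt6_leafSum_mono (hw : ∀ v, 0 < w v) {a b : V} (hab : anc parent a b) :
    leafSum parent root w e b ≤ leafSum parent root w e a := by
  apply Finset.sum_le_sum_of_subset_of_nonneg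
  · intro ℓ hl
    simp only [Finset.mem_filter, Finset.mem_univ, true_and] at hl ⊢
    exact ⟨hl.1, stmt6_anc_trans hab hl.2⟩
  · intro ℓ _ _
    exact Real.rpow_nonneg (hw ℓ).le e

theorem stmt6_depth_le (hdepth_root : depth root = 0)
    (hdepth : ∀ v, v ≠ root → depth v = depth (parent v) + 1)
    (hleafdepth : ∀ v, IsTreeLeaf parent root v ↔ depth v = h)
    {c : V → V} (hc_child : ∀ u, ¬ IsTreeLeaf parent root u → c u ∈ childrenOf parent root u)
    (v : V) : depth v ≤ h := by
  by_contra hv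
  push_neg at hv
  have key : ∀ n : ℕ, depth (c^[n] v) = depth v + n := by
    intro n
    induction n with
    | zero => simp
    | succ n ih =>
      have hnl : ¬ IsTreeLeaf parent root (c^[n] v) := by
        rw [hleafdepth]; omega
      obtain ⟨hp, hr⟩ := hc_child _ hnl
      rw [Function.iterate_succ_apply', hdepth _ hr, hp, ih]
      omega
  obtain ⟨a, b, hab, heq⟩ := Finite.exists_ne_map_eq_of_infinite (fun n : ℕ => c^[n] v)
  apply hab
  have h1 := key a
  rw [heq, key b] at h1
  omega

theorem stmt6_fiber_sum (hparent_root : parent root = root) (hdepth_root : depth root = 0)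
    (hdepth : ∀ v, v ≠ root → depth v = depth (parent v) + 1)
    (hleafdepth : ∀ v, IsTreeLeaf parent root v ↔ depth v = h)
    {d' D : ℕ} (hd' : d' ≤ D) (hD : D ≤ h) {p : V} (hp : depth p = d') :
    ∑ u ∈ (stmt6lvl depth D).filter (fun u => stmt6A parent depth d' u = p),
        leafSum parent root w e u = leafSum parent root w e p := by
  have hmaps : ∀ ℓ ∈ Finset.univ.filter
      (fun ℓ => IsTreeLeaf parent root ℓ ∧ anc parent p ℓ),
      stmt6A parent depth D ℓ ∈
        (stmt6lvl depth D).filter (fun u => stmt6A parent depth d' u = p) := by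
    intro ℓ hℓ
    simp only [Finset.mem_filter, Finset.mem_univ, true_and, stmt6lvl_mem] at hℓ ⊢
    have hdl : depth ℓ = h := (hleafdepth ℓ).1 hℓ.1
    refine ⟨stmt6A_depth hdepth_root hdepth (by omega), ?_⟩
    rw [stmt6A_comp hdepth_root hdepth hd' (by omega)]
    have := stmt6_anc_eq_A hparent_root hdepth_root hdepth hℓ.2
    rwa [hp] at this
  conv_rhs => rw [leafSum]
  rw [← Finset.sum_fiberwise_of_maps_to hmaps (fun ℓ => w ℓ ^ e)]
  apply Finset.sum_congr rfl
  intro u hu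
  simp only [Finset.mem_filter, stmt6lvl_mem] at hu
  rw [leafSum]
  congr 1
  ext ℓ
  simp only [Finset.mem_filter, Finset.mem_univ, true_and]
  constructor
  · rintro ⟨hleaf, hanc⟩
    have hdl : depth ℓ = h := (hleafdepth ℓ).1 hleaf
    have hpu : anc parent p u := by
      rw [← hu.2]; exact stmt6A_anc _ _ _ _
    refine ⟨⟨hleaf, stmt6_anc_trans hpu hanc⟩, ?_⟩
    have := stmt6_anc_eq_A hparent_root hdepth_root hdepth hanc
    rwa [hu.1] at this
  · rintro ⟨⟨hleaf, _⟩, hAu⟩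
    exact ⟨hleaf, by rw [← hAu]; exact stmt6A_anc _ _ _ _⟩

theorem stmt6_level_transfer (hparent_root : parent root = root) (hdepth_root : depth root = 0)
    (hdepth : ∀ v, v ≠ root → depth v = depth (parent v) + 1)
    (hleafdepth : ∀ v, IsTreeLeaf parent root v ↔ depth v = h)
    {d' D : ℕ} (hd' : d' ≤ D) (hD : D ≤ h) (F : V → ℝ) :
    ∑ u ∈ stmt6lvl depth D, F (stmt6A parent depth d' u) * leafSum parent root w e u
      = ∑ p ∈ stmt6lvl depth d', F p * leafSum parent root w e p := by
  have hmaps : ∀ u ∈ stmt6lvl depth D, stmt6A parent depth d' u ∈ stmt6lvl depth d' := by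
    intro u hu
    simp only [stmt6lvl_mem] at hu ⊢
    exact stmt6A_depth hdepth_root hdepth (by omega)
  rw [← Finset.sum_fiberwise_of_maps_to hmaps
    (fun u => F (stmt6A parent depth d' u) * leafSum parent root w e u)]
  apply Finset.sum_congr rfl
  intro p hp
  simp only [stmt6lvl_mem] at hp
  have hcong : ∀ u ∈ (stmt6lvl depth D).filter (fun u => stmt6A parent depth d' u = p),
      F (stmt6A parent depth d' u) * leafSum parent root w e u
        = F p * leafSum parent root w e u := by
    intro u hu
    simp only [Finset.mem_filter] at hu
    rw [hu.2]
  rw [Finset.sum_congr rfl hcong, ← Finset.mul_sum,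
    stmt6_fiber_sum hparent_root hdepth_root hdepth hleafdepth hd' hD hp]

theorem stmt6_g_children (hparent_root : parent root = root) (hdepth_root : depth root = 0)
    (hdepth : ∀ v, v ≠ root → depth v = depth (parent v) + 1)
    (hleafdepth : ∀ v, IsTreeLeaf parent root v ↔ depth v = h)
    {u : V} (hu : depth u < h) :
    leafSum parent root w e u
      = ∑ v ∈ Finset.univ.filter (fun v => v ∈ childrenOf parent root u),
          leafSum parent root w e v := by
  have hkey := stmt6_fiber_sum (w := w) (e := e) hparent_root hdepth_root hdepth hleafdepth
      (d' := depth u) (D := depth u + 1) (by omega) (by omega) (p := u) rfl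
  rw [← hkey]
  apply Finset.sum_congr _ (fun _ _ => rfl)
  ext v
  simp only [Finset.mem_filter, stmt6lvl_mem, Finset.mem_univ, true_and, childrenOf,
    Set.mem_setOf_eq]
  constructor
  · rintro ⟨hdv, hA⟩
    have hone : depth v - depth u = 1 := by omega
    have hA' : parent^[depth v - depth u] v = u := hA
    rw [hone, Function.iterate_one] at hA'
    refine ⟨hA', fun hr => ?_⟩
    rw [hr, hdepth_root] at hdv
    omega
  · rintro ⟨hp, hr⟩
    have hdv : depth v = depth u + 1 := by rw [hdepth v hr, hp]
    have hone : depth v - depth u = 1 := by omega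
    refine ⟨hdv, ?_⟩
    show parent^[depth v - depth u] v = u
    rw [hone, Function.iterate_one, hp]

theorem stmt6_rpow_sum {ι : Type*} (s : Finset ι) (f : ι → ℝ) (hf : ∀ i ∈ s, 0 ≤ f i)
    (he0 : 0 < e) (he1 : e ≤ 1) :
    (∑ i ∈ s, f i) ^ e ≤ ∑ i ∈ s, f i ^ e := by
  induction s using Finset.cons_induction with
  | empty => simp [Real.zero_rpow he0.ne']
  | cons a s ha ih =>
    rw [Finset.sum_cons, Finset.sum_cons]
    have h1 : (0:ℝ) ≤ f a := hf a (Finset.mem_cons_self a s)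
    have h2 : (0:ℝ) ≤ ∑ i ∈ s, f i :=
      Finset.sum_nonneg fun i hi => hf i (Finset.mem_cons.mpr (Or.inr hi))
    have h3 : (∑ i ∈ s, f i) ^ e ≤ ∑ i ∈ s, f i ^ e :=
      ih fun i hi => hf i (Finset.mem_cons.mpr (Or.inr hi))
    have h4 := NNReal.rpow_add_le_add_rpow (⟨f a, h1⟩ : NNReal) (⟨_, h2⟩ : NNReal) he0.le he1
    have h5 : (f a + ∑ i ∈ s, f i) ^ e ≤ f a ^ e + (∑ i ∈ s, f i) ^ e := by
      exact_mod_cast h4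
    linarith

theorem stmt6_w_rpow_le (hparent_root : parent root = root) (hdepth_root : depth root = 0)
    (hdepth : ∀ v, v ≠ root → depth v = depth (parent v) + 1)
    (hleafdepth : ∀ v, IsTreeLeaf parent root v ↔ depth v = h)
    (hw : ∀ v, 0 < w v)
    (hsub : ∀ u, ¬ IsTreeLeaf parent root u →
      w u ≤ ∑ v ∈ Finset.univ.filter (fun v => v ∈ childrenOf parent root u), w v)
    {c : V → V} (hc_child : ∀ u, ¬ IsTreeLeaf parent root u → c u ∈ childrenOf parent root u)
    (he0 : 0 < e) (he1 : e ≤ 1) :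
    ∀ v, w v ^ e ≤ leafSum parent root w e v := by
  have hdle := stmt6_depth_le hdepth_root hdepth hleafdepth hc_child
  have hleafcase : ∀ v, depth v = h → w v ^ e ≤ leafSum parent root w e v := by
    intro v hv
    have hm : v ∈ Finset.univ.filter
        (fun ℓ => IsTreeLeaf parent root ℓ ∧ anc parent v ℓ) := by
      simp only [Finset.mem_filter, Finset.mem_univ, true_and]
      exact ⟨(hleafdepth v).2 hv, stmt6_anc_refl parent v⟩
    exact Finset.single_le_sum (fun ℓ _ => Real.rpow_nonneg (hw ℓ).le e) hm
  suffices H : ∀ n v, h - depth v ≤ n → w v ^ e ≤ leafSum parent root w e v by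
    intro v; exact H (h - depth v) v le_rfl
  intro n
  induction n with
  | zero =>
    intro v hv
    exact hleafcase v (by have := hdle v; omega)
  | succ n ih =>
    intro v hv
    by_cases hvh : depth v = h
    · exact hleafcase v hvh
    · have hvlt : depth v < h := by have := hdle v; omega
      have hnl : ¬ IsTreeLeaf parent root v := by
        rw [hleafdepth]; omega
      have hchild_depth : ∀ x ∈ Finset.univ.filter
          (fun x => x ∈ childrenOf parent root v), depth x = depth v + 1 := by
        intro x hx
        simp only [Finset.mem_filter, Finset.mem_univ, true_and, childrenOf,
          Set.mem_setOf_eq] at hx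
        rw [hdepth x hx.2, hx.1]
      calc w v ^ e ≤ (∑ x ∈ Finset.univ.filter
            (fun x => x ∈ childrenOf parent root v), w x) ^ e :=
            Real.rpow_le_rpow (hw v).le (hsub v hnl) he0.le
        _ ≤ ∑ x ∈ Finset.univ.filter
            (fun x => x ∈ childrenOf parent root v), w x ^ e :=
            stmt6_rpow_sum _ _ (fun i _ => (hw i).le) he0 he1
        _ ≤ ∑ x ∈ Finset.univ.filter
            (fun x => x ∈ childrenOf parent root v), leafSum parent root w e x :=
            Finset.sum_le_sum (fun x hx => ih x (by have := hchild_depth x hx; omega))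
        _ = leafSum parent root w e v :=
            (stmt6_g_children hparent_root hdepth_root hdepth hleafdepth hvlt).symm

variable {k : ℕ} {c : V → V}

theorem stmt6_M (hparent_root : parent root = root) (hdepth_root : depth root = 0)
    (hdepth : ∀ v, v ≠ root → depth v = depth (parent v) + 1)
    (hleafdepth : ∀ v, IsTreeLeaf parent root v ↔ depth v = h)
    (hw : ∀ v, 0 < w v)
    (hsub : ∀ u, ¬ IsTreeLeaf parent root u →
      w u ≤ ∑ v ∈ Finset.univ.filter (fun v => v ∈ childrenOf parent root u), w v)
    (hc_child : ∀ u, ¬ IsTreeLeaf parent root u → c u ∈ childrenOf parent root u)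
    (hc_max : ∀ u, ¬ IsTreeLeaf parent root u → ∀ v ∈ childrenOf parent root u,
      leafSum parent root w (((k : ℝ) - 1) / k) v ≤
        leafSum parent root w (((k : ℝ) - 1) / k) (c u))
    (hk : 2 ≤ k) {u : V} (hu : depth u < h) :
    w u ≤ leafSum parent root w (((k : ℝ) - 1) / k) (c u) ^ ((k : ℝ) - 1)⁻¹ *
      leafSum parent root w (((k : ℝ) - 1) / k) u := by
  have hK2 : (2:ℝ) ≤ (k:ℝ) := by exact_mod_cast hk
  have hK0 : (0:ℝ) < (k:ℝ) := by linarith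
  have hK1 : (0:ℝ) < (k:ℝ) - 1 := by linarith
  set e : ℝ := ((k : ℝ) - 1) / k with he_def
  have he0 : 0 < e := div_pos hK1 hK0
  have he1 : e ≤ 1 := by
    rw [he_def, div_le_one hK0]; linarith
  have hrle := stmt6_w_rpow_le hparent_root hdepth_root hdepth hleafdepth hw hsub hc_child
    he0 he1
  have hnl : ¬ IsTreeLeaf parent root u := by rw [hleafdepth]; omega
  have key : ∀ x ∈ Finset.univ.filter (fun x => x ∈ childrenOf parent root u),
      w x ≤ leafSum parent root w e (c u) ^ ((k : ℝ) - 1)⁻¹ * leafSum parent root w e x := by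
    intro x hx
    simp only [Finset.mem_filter, Finset.mem_univ, true_and] at hx
    have h1 : w x ^ e ≤ leafSum parent root w e x := hrle x
    have h2 : leafSum parent root w e x ≤ leafSum parent root w e (c u) := hc_max u hnl x hx
    have hxe_nonneg : (0:ℝ) ≤ w x ^ e := Real.rpow_nonneg (hw x).le e
    have h3 : w x = (w x ^ e) ^ ((k : ℝ) - 1)⁻¹ * w x ^ e := by
      rw [← Real.rpow_mul (hw x).le, ← Real.rpow_add (hw x)]
      have : e * ((k : ℝ) - 1)⁻¹ + e = 1 := by
        rw [he_def]; field_simp; ring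
      rw [this, Real.rpow_one]
    rw [h3]
    apply mul_le_mul
    · exact Real.rpow_le_rpow hxe_nonneg (h1.trans h2) (by positivity)
    · exact h1
    · exact hxe_nonneg
    · exact Real.rpow_nonneg (stmt6_leafSum_nonneg hw _) _
  calc w u ≤ ∑ x ∈ Finset.univ.filter (fun x => x ∈ childrenOf parent root u), w x :=
        hsub u hnl
    _ ≤ ∑ x ∈ Finset.univ.filter (fun x => x ∈ childrenOf parent root u),
        leafSum parent root w e (c u) ^ ((k : ℝ) - 1)⁻¹ * leafSum parent root w e x :=
        Finset.sum_le_sum key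
    _ = leafSum parent root w e (c u) ^ ((k : ℝ) - 1)⁻¹ *
        ∑ x ∈ Finset.univ.filter (fun x => x ∈ childrenOf parent root u),
          leafSum parent root w e x := by rw [Finset.mul_sum]
    _ = leafSum parent root w e (c u) ^ ((k : ℝ) - 1)⁻¹ * leafSum parent root w e u := by
        rw [← stmt6_g_children hparent_root hdepth_root hdepth hleafdepth hu]

theorem stmt6_chain (hparent_root : parent root = root) (hdepth_root : depth root = 0)
    (hdepth : ∀ v, v ≠ root → depth v = depth (parent v) + 1)
    (hleafdepth : ∀ v, IsTreeLeaf parent root v ↔ depth v = h)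
    (hw : ∀ v, 0 < w v)
    (hc_max : ∀ u, ¬ IsTreeLeaf parent root u → ∀ v ∈ childrenOf parent root u,
      leafSum parent root w e v ≤ leafSum parent root w e (c u))
    {u : V} {d : ℕ} (hd1 : 1 ≤ d) (hdD : d ≤ depth u) (hdh : d < h) :
    leafSum parent root w e u ≤
      leafSum parent root w e (c (stmt6A parent depth (d - 1) u)) := by
  have hpd : depth (stmt6A parent depth (d - 1) u) = d - 1 :=
    stmt6A_depth hdepth_root hdepth (by omega)
  have hnl : ¬ IsTreeLeaf parent root (stmt6A parent depth (d - 1) u) := by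
    rw [hleafdepth]; omega
  have hchild := stmt6A_child (root := root) hdepth_root hdepth (d := d - 1) (v := u)
    (by omega)
  have heq : d - 1 + 1 = d := by omega
  rw [heq] at hchild
  calc leafSum parent root w e u ≤ leafSum parent root w e (stmt6A parent depth d u) :=
        stmt6_leafSum_mono hw (stmt6A_anc _ _ _ _)
    _ ≤ leafSum parent root w e (c (stmt6A parent depth (d - 1) u)) :=
        hc_max _ hnl _ hchild

theorem stmt6_pushdown (hparent_root : parent root = root) (hdepth_root : depth root = 0)
    (hdepth : ∀ v, v ≠ root → depth v = depth (parent v) + 1)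
    (hleafdepth : ∀ v, IsTreeLeaf parent root v ↔ depth v = h)
    (hw : ∀ v, 0 < w v)
    (hsub : ∀ u, ¬ IsTreeLeaf parent root u →
      w u ≤ ∑ v ∈ Finset.univ.filter (fun v => v ∈ childrenOf parent root u), w v) :
    ∀ d, d ≤ h → w root ≤ ∑ u ∈ stmt6lvl depth d, w u := by
  intro d
  induction d with
  | zero =>
    intro _
    have hset : stmt6lvl depth 0 = {root} := by
      ext v
      simp only [stmt6lvl_mem, Finset.mem_singleton]
      exact ⟨fun h0 => stmt6_depth_zero hdepth_root hdepth h0, fun hr => by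
        rw [hr, hdepth_root]⟩
    rw [hset, Finset.sum_singleton]
  | succ d ih =>
    intro hdh
    refine (ih (by omega)).trans ?_
    have hmaps : ∀ u ∈ stmt6lvl depth (d + 1), parent u ∈ stmt6lvl depth d := by
      intro u hu
      simp only [stmt6lvl_mem] at hu ⊢
      have hur : u ≠ root := by intro hr; rw [hr, hdepth_root] at hu; omega
      have := hdepth u hur; omega
    rw [← Finset.sum_fiberwise_of_maps_to hmaps w]
    apply Finset.sum_le_sum
    intro p hp
    simp only [stmt6lvl_mem] at hp
    have hnl : ¬ IsTreeLeaf parent root p := by rw [hleafdepth]; omega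
    refine (hsub p hnl).trans (le_of_eq ?_)
    apply Finset.sum_congr _ (fun _ _ => rfl)
    ext v
    simp only [Finset.mem_filter, stmt6lvl_mem, Finset.mem_univ, true_and, childrenOf,
      Set.mem_setOf_eq]
    constructor
    · rintro ⟨hp1, hr⟩
      have hdv := hdepth v hr
      rw [hp1, hp] at hdv
      exact ⟨by omega, hp1⟩
    · rintro ⟨hd1, hp1⟩
      refine ⟨hp1, fun hr => ?_⟩
      rw [hr, hdepth_root] at hd1
      omega

theorem stmt6_W_eq (hparent_root : parent root = root) (hdepth_root : depth root = 0)
    (hdepth : ∀ v, v ≠ root → depth v = depth (parent v) + 1)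
    (hleafdepth : ∀ v, IsTreeLeaf parent root v ↔ depth v = h)
    (hc_child : ∀ u, ¬ IsTreeLeaf parent root u → c u ∈ childrenOf parent root u)
    {i : ℕ} (hi1 : 1 ≤ i) (hih : i ≤ h) :
    ∑ ℓ ∈ Finset.univ.filter (fun ℓ => IsTreeLeaf parent root ℓ ∧
        ∀ a : V, anc parent a ℓ → depth a = i → c (parent a) = a), w ℓ ^ e
      = ∑ p ∈ stmt6lvl depth (i - 1), leafSum parent root w e (c p) := by
  have hcp : ∀ p : V, depth p = i - 1 →
      (¬ IsTreeLeaf parent root p) ∧ parent (c p) = p ∧ c p ≠ root ∧ depth (c p) = i := by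
    intro p hp
    have hnl : ¬ IsTreeLeaf parent root p := by rw [hleafdepth]; omega
    obtain ⟨h1, h2⟩ := hc_child p hnl
    refine ⟨hnl, h1, h2, ?_⟩
    rw [hdepth _ h2, h1, hp]
    omega
  have hmaps : ∀ ℓ ∈ Finset.univ.filter (fun ℓ => IsTreeLeaf parent root ℓ ∧
      ∀ a : V, anc parent a ℓ → depth a = i → c (parent a) = a),
      stmt6A parent depth (i - 1) ℓ ∈ stmt6lvl depth (i - 1) := by
    intro ℓ hℓ
    simp only [Finset.mem_filter, Finset.mem_univ, true_and] at hℓ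
    have hdl : depth ℓ = h := (hleafdepth ℓ).1 hℓ.1
    simp only [stmt6lvl_mem]
    exact stmt6A_depth hdepth_root hdepth (by omega)
  rw [← Finset.sum_fiberwise_of_maps_to hmaps (fun ℓ => w ℓ ^ e)]
  apply Finset.sum_congr rfl
  intro p hp
  simp only [stmt6lvl_mem] at hp
  obtain ⟨hnl, hcp1, hcp2, hcp3⟩ := hcp p hp
  rw [leafSum]
  congr 1
  ext ℓ
  simp only [Finset.mem_filter, Finset.mem_univ, true_and]
  constructor
  · rintro ⟨⟨hleaf, hP⟩, hA⟩
    have hdl : depth ℓ = h := (hleafdepth ℓ).1 hleaf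
    have hda : depth (stmt6A parent depth i ℓ) = i :=
      stmt6A_depth hdepth_root hdepth (by omega)
    have hanc : anc parent (stmt6A parent depth i ℓ) ℓ := stmt6A_anc _ _ _ _
    have hcd := hP _ hanc hda
    have hpar : parent (stmt6A parent depth i ℓ) = stmt6A parent depth (i - 1) ℓ := by
      have := stmt6A_parent (root := root) hdepth_root hdepth (d := i - 1) (v := ℓ)
        (by omega)
      have heq : i - 1 + 1 = i := by omega
      rw [heq] at this
      exact this
    rw [hpar, hA] at hcd
    refine ⟨hleaf, ?_⟩
    rw [hcd]
    exact hanc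
  · rintro ⟨hleaf, hanc⟩
    have hdl : depth ℓ = h := (hleafdepth ℓ).1 hleaf
    have hAi : stmt6A parent depth i ℓ = c p := by
      have := stmt6_anc_eq_A hparent_root hdepth_root hdepth hanc
      rwa [hcp3] at this
    have hpar : parent (stmt6A parent depth i ℓ) = stmt6A parent depth (i - 1) ℓ := by
      have := stmt6A_parent (root := root) hdepth_root hdepth (d := i - 1) (v := ℓ)
        (by omega)
      have heq : i - 1 + 1 = i := by omega
      rw [heq] at this
      exact this
    have hAi1 : stmt6A parent depth (i - 1) ℓ = p := by
      rw [← hpar, hAi, hcp1]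
    refine ⟨⟨hleaf, ?_⟩, hAi1⟩
    intro a hanca hda
    have hAa : stmt6A parent depth i ℓ = a := by
      have := stmt6_anc_eq_A hparent_root hdepth_root hdepth hanca
      rwa [hda] at this
    rw [← hAa, hpar, hAi1, hAi]

theorem stmt6_holder {ι : Type*} (s : Finset ι) (f g : ι → ℝ) (hf : ∀ i ∈ s, 0 ≤ f i)
    (hg : ∀ i ∈ s, 0 ≤ g i) {p : ℝ} (hp1 : 1 < p) :
    ∑ i ∈ s, f i ^ p⁻¹ * g i ≤
      (∑ i ∈ s, f i) ^ p⁻¹ * (∑ i ∈ s, g i ^ (p / (p - 1))) ^ ((p - 1) / p) := by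
  have hp0 : (0:ℝ) < p := by linarith
  have hpm1 : (0:ℝ) < p - 1 := by linarith
  have hpq : p.HolderConjugate (p / (p - 1)) := by
    rw [Real.holderConjugate_iff]
    constructor
    · exact hp1
    · rw [inv_div]
      field_simp
      ring
  have H := Real.inner_le_Lp_mul_Lq_of_nonneg (s := s) hpq (f := fun i => f i ^ p⁻¹)
    (g := g) (fun i hi => Real.rpow_nonneg (hf i hi) _) hg
  have hfix : ∑ i ∈ s, (f i ^ p⁻¹) ^ p = ∑ i ∈ s, f i :=
    Finset.sum_congr rfl fun i hi => Real.rpow_inv_rpow (hf i hi) hp0.ne'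
  rw [hfix] at H
  have hq : 1 / (p / (p - 1)) = (p - 1) / p := one_div_div _ _
  rw [hq, one_div] at H
  exact H


theorem stmt6_main (hparent_root : parent root = root) (hdepth_root : depth root = 0)
    (hdepth : ∀ v, v ≠ root → depth v = depth (parent v) + 1)
    (hleafdepth : ∀ v, IsTreeLeaf parent root v ↔ depth v = h)
    (hw : ∀ v, 0 < w v)
    (hsub : ∀ u, ¬ IsTreeLeaf parent root u →
      w u ≤ ∑ v ∈ Finset.univ.filter (fun v => v ∈ childrenOf parent root u), w v)
    (hc_child : ∀ u, ¬ IsTreeLeaf parent root u → c u ∈ childrenOf parent root u)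
    (hc_max : ∀ u, ¬ IsTreeLeaf parent root u → ∀ v ∈ childrenOf parent root u,
      leafSum parent root w (((k : ℝ) - 1) / k) v ≤
        leafSum parent root w (((k : ℝ) - 1) / k) (c u))
    (hk : 2 ≤ k) (idx : ℕ → ℕ)
    (hrange : ∀ t, t < k → 1 ≤ idx t ∧ idx t ≤ h)
    (hmono : ∀ s t, s < t → t < k → idx s < idx t) :
    w root ≤ (∏ t ∈ Finset.range k, ∑ p ∈ stmt6lvl depth (idx t - 1),
      leafSum parent root w (((k : ℝ) - 1) / k) (c p)) ^ ((k : ℝ) - 1)⁻¹ := by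
  have hK2 : (2:ℝ) ≤ (k:ℝ) := by exact_mod_cast hk
  have hK0 : (0:ℝ) < (k:ℝ) := by linarith
  have hK1 : (0:ℝ) < (k:ℝ) - 1 := by linarith
  set e : ℝ := ((k : ℝ) - 1) / k with he_def
  have hgnn : ∀ v, 0 ≤ leafSum parent root w e v := stmt6_leafSum_nonneg hw
  have hmain : ∀ m, 1 ≤ m → m ≤ k - 1 →
      ∑ u ∈ stmt6lvl depth (idx m - 1),
          leafSum parent root w e (c u) ^ ((m:ℝ))⁻¹ * leafSum parent root w e u
        ≤ (∏ t ∈ Finset.range (m + 1), ∑ p ∈ stmt6lvl depth (idx t - 1),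
            leafSum parent root w e (c p)) ^ ((m:ℝ))⁻¹ := by
    intro m hm1
    induction m, hm1 using Nat.le_induction with
    | base =>
      intro _
      have h1k : 1 < k := by omega
      have hm01 := hmono 0 1 (by omega) h1k
      obtain ⟨h01, h0h⟩ := hrange 0 (by omega)
      obtain ⟨h11, h1h⟩ := hrange 1 h1k
      simp only [Nat.cast_one, inv_one, Real.rpow_one]
      rw [Finset.prod_range_succ, Finset.prod_range_one]
      have hper : ∀ u ∈ stmt6lvl depth (idx 1 - 1),
          leafSum parent root w e (c u) * leafSum parent root w e u ≤
          leafSum parent root w e (c u) *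
            ∑ p ∈ stmt6lvl depth (idx 0 - 1), leafSum parent root w e (c p) := by
        intro u hu
        simp only [stmt6lvl_mem] at hu
        refine mul_le_mul_of_nonneg_left ?_ (hgnn _)
        have hchain := stmt6_chain (e := e) hparent_root hdepth_root hdepth hleafdepth hw
          hc_max (u := u) (d := idx 0) h01 (by omega) (by omega)
        refine hchain.trans ?_
        refine Finset.single_le_sum (fun p _ => hgnn _) ?_
        simp only [stmt6lvl_mem]
        exact stmt6A_depth hdepth_root hdepth (by omega)
      calc ∑ u ∈ stmt6lvl depth (idx 1 - 1),
            leafSum parent root w e (c u) * leafSum parent root w e u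
          ≤ ∑ u ∈ stmt6lvl depth (idx 1 - 1), leafSum parent root w e (c u) *
              ∑ p ∈ stmt6lvl depth (idx 0 - 1), leafSum parent root w e (c p) :=
            Finset.sum_le_sum hper
        _ = (∑ u ∈ stmt6lvl depth (idx 1 - 1), leafSum parent root w e (c u)) *
              ∑ p ∈ stmt6lvl depth (idx 0 - 1), leafSum parent root w e (c p) := by
            rw [← Finset.sum_mul]
        _ = (∑ p ∈ stmt6lvl depth (idx 0 - 1), leafSum parent root w e (c p)) *
              ∑ p ∈ stmt6lvl depth (idx 1 - 1), leafSum parent root w e (c p) :=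
            mul_comm _ _
    | succ n hn ih =>
      intro hnk
      have hihn := ih (by omega)
      have hnk' : n + 1 < k := by omega
      have hn1 : (1:ℝ) ≤ (n:ℝ) := by exact_mod_cast hn
      have hnne : (n:ℝ) ≠ 0 := by linarith
      have hp1 : (1:ℝ) < ((n:ℝ) + 1) := by linarith
      obtain ⟨ha1, hah⟩ := hrange (n + 1) hnk'
      obtain ⟨hb1, hbh⟩ := hrange n (by omega)
      have hmn := hmono n (n + 1) (by omega) hnk'
      have hcast : ((n + 1 : ℕ) : ℝ) = (n:ℝ) + 1 := by push_cast; ring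
      rw [hcast]
      have hH := stmt6_holder (stmt6lvl depth (idx (n + 1) - 1))
        (fun u => leafSum parent root w e (c u)) (leafSum parent root w e)
        (fun u _ => hgnn _) (fun u _ => hgnn _) hp1
      have hq_eq : ((n:ℝ) + 1) / ((n:ℝ) + 1 - 1) = 1 + (n:ℝ)⁻¹ := by
        field_simp
        rw [add_sub_cancel_right, div_self hnne]
      have hper : ∀ u ∈ stmt6lvl depth (idx (n + 1) - 1),
          leafSum parent root w e u ^ (((n:ℝ) + 1) / ((n:ℝ) + 1 - 1)) ≤
            (fun p => leafSum parent root w e (c p) ^ ((n:ℝ))⁻¹)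
                (stmt6A parent depth (idx n - 1) u)
              * leafSum parent root w e u := by
        intro u hu
        simp only [stmt6lvl_mem] at hu
        have hchain := stmt6_chain (e := e) hparent_root hdepth_root hdepth hleafdepth hw
          hc_max (u := u) (d := idx n) hb1 (by omega) (by omega)
        have hgu := hgnn u
        have hone : (0:ℝ) < 1 + (n:ℝ)⁻¹ := by
          have h9 : (0:ℝ) ≤ (n:ℝ)⁻¹ := by positivity
          linarith
        have hmono_pow : leafSum parent root w e u ^ ((n:ℝ))⁻¹ ≤
            leafSum parent root w e (c (stmt6A parent depth (idx n - 1) u)) ^ ((n:ℝ))⁻¹ :=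
          Real.rpow_le_rpow hgu hchain (by positivity)
        calc leafSum parent root w e u ^ (((n:ℝ) + 1) / ((n:ℝ) + 1 - 1))
            = leafSum parent root w e u * leafSum parent root w e u ^ ((n:ℝ))⁻¹ := by
              rw [hq_eq, Real.rpow_add' hgu hone.ne', Real.rpow_one]
          _ ≤ leafSum parent root w e u *
              leafSum parent root w e (c (stmt6A parent depth (idx n - 1) u)) ^ ((n:ℝ))⁻¹ :=
              mul_le_mul_of_nonneg_left hmono_pow hgu
          _ = (fun p => leafSum parent root w e (c p) ^ ((n:ℝ))⁻¹)
                (stmt6A parent depth (idx n - 1) u) * leafSum parent root w e u := by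
              simp only []
              ring
      have htrans := stmt6_level_transfer (w := w) (e := e) hparent_root hdepth_root hdepth
        hleafdepth (d' := idx n - 1) (D := idx (n + 1) - 1) (by omega) (by omega)
        (fun p => leafSum parent root w e (c p) ^ ((n:ℝ))⁻¹)
      have hsum_q : ∑ u ∈ stmt6lvl depth (idx (n + 1) - 1),
          leafSum parent root w e u ^ (((n:ℝ) + 1) / ((n:ℝ) + 1 - 1))
          ≤ ∑ p ∈ stmt6lvl depth (idx n - 1),
              leafSum parent root w e (c p) ^ ((n:ℝ))⁻¹ * leafSum parent root w e p := by
        refine (Finset.sum_le_sum hper).trans (le_of_eq ?_)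
        exact htrans
      have hq_bound : ∑ p ∈ stmt6lvl depth (idx n - 1),
          leafSum parent root w e (c p) ^ ((n:ℝ))⁻¹ * leafSum parent root w e p
          ≤ (∏ t ∈ Finset.range (n + 1), ∑ p ∈ stmt6lvl depth (idx t - 1),
              leafSum parent root w e (c p)) ^ ((n:ℝ))⁻¹ := hihn
      have hWnn1 : (0:ℝ) ≤ ∑ u ∈ stmt6lvl depth (idx (n + 1) - 1),
          leafSum parent root w e (c u) := Finset.sum_nonneg fun u _ => hgnn _
      have hprod_nn : (0:ℝ) ≤ ∏ t ∈ Finset.range (n + 1),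
          ∑ p ∈ stmt6lvl depth (idx t - 1), leafSum parent root w e (c p) :=
        Finset.prod_nonneg fun t _ => Finset.sum_nonneg fun p _ => hgnn _
      have hsq_nn : (0:ℝ) ≤ ∑ u ∈ stmt6lvl depth (idx (n + 1) - 1),
          leafSum parent root w e u ^ (((n:ℝ) + 1) / ((n:ℝ) + 1 - 1)) :=
        Finset.sum_nonneg fun u _ => Real.rpow_nonneg (hgnn _) _
      have hexp_nn : (0:ℝ) ≤ ((n:ℝ) + 1 - 1) / ((n:ℝ) + 1) := by
        rw [show ((n:ℝ) + 1 - 1) = (n:ℝ) by ring]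
        positivity
      have hstep2 : (∑ u ∈ stmt6lvl depth (idx (n + 1) - 1),
            leafSum parent root w e u ^ (((n:ℝ) + 1) / ((n:ℝ) + 1 - 1)))
              ^ (((n:ℝ) + 1 - 1) / ((n:ℝ) + 1))
          ≤ (∏ t ∈ Finset.range (n + 1), ∑ p ∈ stmt6lvl depth (idx t - 1),
              leafSum parent root w e (c p)) ^ (((n:ℝ))⁻¹ * (((n:ℝ) + 1 - 1) / ((n:ℝ) + 1))) := by
        rw [Real.rpow_mul hprod_nn]
        exact Real.rpow_le_rpow hsq_nn (hsum_q.trans hq_bound) hexp_nn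
      have hexp_eq : ((n:ℝ))⁻¹ * (((n:ℝ) + 1 - 1) / ((n:ℝ) + 1)) = ((n:ℝ) + 1)⁻¹ := by
        field_simp
        ring
      rw [hexp_eq] at hstep2
      calc ∑ u ∈ stmt6lvl depth (idx (n + 1) - 1),
            leafSum parent root w e (c u) ^ ((n:ℝ) + 1)⁻¹ * leafSum parent root w e u
          ≤ (∑ u ∈ stmt6lvl depth (idx (n + 1) - 1), leafSum parent root w e (c u))
              ^ ((n:ℝ) + 1)⁻¹ *
            (∑ u ∈ stmt6lvl depth (idx (n + 1) - 1),
              leafSum parent root w e u ^ (((n:ℝ) + 1) / ((n:ℝ) + 1 - 1)))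
              ^ (((n:ℝ) + 1 - 1) / ((n:ℝ) + 1)) := hH
        _ ≤ (∑ u ∈ stmt6lvl depth (idx (n + 1) - 1), leafSum parent root w e (c u))
              ^ ((n:ℝ) + 1)⁻¹ *
            (∏ t ∈ Finset.range (n + 1), ∑ p ∈ stmt6lvl depth (idx t - 1),
              leafSum parent root w e (c p)) ^ ((n:ℝ) + 1)⁻¹ :=
            mul_le_mul_of_nonneg_left hstep2 (Real.rpow_nonneg hWnn1 _)
        _ = (∏ t ∈ Finset.range (n + 1 + 1), ∑ p ∈ stmt6lvl depth (idx t - 1),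
              leafSum parent root w e (c p)) ^ ((n:ℝ) + 1)⁻¹ := by
            conv_rhs => rw [Finset.prod_range_succ]
            rw [Real.mul_rpow hprod_nn hWnn1]
            ring
  have hfk : 1 ≤ k - 1 := by omega
  have hfk2 : k - 1 ≤ k - 1 := le_rfl
  have hlast := hmain (k - 1) hfk hfk2
  have hrangeeq : k - 1 + 1 = k := by omega
  rw [hrangeeq] at hlast
  have hcast : ((k - 1 : ℕ) : ℝ) = (k:ℝ) - 1 := by
    rw [Nat.cast_sub (by omega : 1 ≤ k), Nat.cast_one]
  rw [hcast] at hlast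
  obtain ⟨hi1, hih⟩ := hrange (k - 1) (by omega)
  have hstart : w root ≤ ∑ u ∈ stmt6lvl depth (idx (k - 1) - 1),
      leafSum parent root w e (c u) ^ ((k:ℝ) - 1)⁻¹ * leafSum parent root w e u := by
    refine (stmt6_pushdown hparent_root hdepth_root hdepth hleafdepth hw hsub _
      (by omega)).trans (Finset.sum_le_sum ?_)
    intro u hu
    simp only [stmt6lvl_mem] at hu
    exact stmt6_M hparent_root hdepth_root hdepth hleafdepth hw hsub hc_child hc_max hk
      (u := u) (by omega)
  exact hstart.trans hlast

end Stmt6Aux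


/-- **iterated Hölder argument.** Let `T` be a finite rooted tree all of whose
leaves are at depth `h ≥ k ≥ 2`, let `w` be subadditive, and let each non-leaf `u` have a
designated child `c(u)` maximizing `w_h^k(v) = ∑_{leaves ℓ below v} w(ℓ)^((k−1)/k)` among
children of `u`. For `i ∈ {1,…,h}` let `T^(i)` be obtained by deleting, below every vertex
of depth `i−1`, the subtrees rooted at its non-designated children. Then there exists
`L ⊆ {1,…,h}` with `|L| ≥ h−k+1` such that for each `i ∈ L`,
`∑_{ℓ leaf of T^(i)} w(ℓ)^((k−1)/k) ≥ w(root)^((k−1)/k)`. -/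
theorem stmt6 {V : Type*} [Fintype V] [DecidableEq V]
    (h k : ℕ) (hk : 2 ≤ k) (hkh : k ≤ h)
    (root : V) (parent : V → V) (depth : V → ℕ)
    (hparent_root : parent root = root)
    (hdepth_root : depth root = 0)
    (hdepth : ∀ v, v ≠ root → depth v = depth (parent v) + 1)
    (hleafdepth : ∀ v, IsTreeLeaf parent root v ↔ depth v = h)
    (w : V → ℝ) (hw : ∀ v, 0 < w v)
    (hsub : ∀ u, ¬ IsTreeLeaf parent root u →
      w u ≤ ∑ v ∈ Finset.univ.filter (fun v => v ∈ childrenOf parent root u), w v)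
    (c : V → V)
    (hc_child : ∀ u, ¬ IsTreeLeaf parent root u → c u ∈ childrenOf parent root u)
    (hc_max : ∀ u, ¬ IsTreeLeaf parent root u → ∀ v ∈ childrenOf parent root u,
      leafSum parent root w (((k : ℝ) - 1) / k) v ≤
        leafSum parent root w (((k : ℝ) - 1) / k) (c u)) :
    ∃ L : Finset ℕ, L ⊆ Finset.Icc 1 h ∧ h - k + 1 ≤ L.card ∧
      ∀ i ∈ L,
        w root ^ (((k : ℝ) - 1) / k) ≤
          ∑ ℓ ∈ Finset.univ.filter (fun ℓ => IsTreeLeaf parent root ℓ ∧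
              ∀ a : V, anc parent a ℓ → depth a = i → c (parent a) = a),
            w ℓ ^ (((k : ℝ) - 1) / k) := by
  classical
  have hK2 : (2:ℝ) ≤ (k:ℝ) := by exact_mod_cast hk
  have hK0 : (0:ℝ) < (k:ℝ) := by linarith
  have hK1 : (0:ℝ) < (k:ℝ) - 1 := by linarith
  set e : ℝ := ((k : ℝ) - 1) / k with he_def
  have hgnn : ∀ v, 0 ≤ leafSum parent root w e v := stmt6_leafSum_nonneg hw
  set Lset := (Finset.Icc 1 h).filter (fun i => w root ^ e ≤
    ∑ ℓ ∈ Finset.univ.filter (fun ℓ => IsTreeLeaf parent root ℓ ∧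
        ∀ a : V, anc parent a ℓ → depth a = i → c (parent a) = a),
      w ℓ ^ e) with hLset_def
  refine ⟨Lset, Finset.filter_subset _ _, ?_, ?_⟩
  swap
  · intro i hi
    have := (Finset.mem_filter.mp hi).2
    simpa using this
  by_contra hcard
  push_neg at hcard
  have hLsub : Lset ⊆ Finset.Icc 1 h := Finset.filter_subset _ _
  have hbadcard : k ≤ ((Finset.Icc 1 h) \ Lset).card := by
    have h1 := Finset.card_le_card hLsub
    rw [Finset.card_sdiff_of_subset hLsub]
    rw [Nat.card_Icc] at h1 ⊢
    omega
  obtain ⟨B, hBsub, hBcard⟩ := Finset.exists_subset_card_eq hbadcard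
  set σ := B.orderEmbOfFin hBcard with hσ_def
  set idx : ℕ → ℕ := fun t => if ht : t < k then σ ⟨t, ht⟩ else 0 with hidx_def
  have hidx_bad : ∀ t, ∀ ht : t < k, (1 ≤ idx t ∧ idx t ≤ h) ∧
      (∑ ℓ ∈ Finset.univ.filter (fun ℓ => IsTreeLeaf parent root ℓ ∧
          ∀ a : V, anc parent a ℓ → depth a = idx t → c (parent a) = a),
        w ℓ ^ e) < w root ^ e := by
    intro t ht
    have h1 : σ ⟨t, ht⟩ ∈ B := Finset.orderEmbOfFin_mem B hBcard _
    have h2 := hBsub h1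
    rw [Finset.mem_sdiff] at h2
    obtain ⟨hIcc, hnotL⟩ := h2
    have h3 : idx t = σ ⟨t, ht⟩ := by rw [hidx_def]; simp [ht]
    rw [Finset.mem_Icc] at hIcc
    refine ⟨⟨by omega, by omega⟩, ?_⟩
    by_contra hcon
    push_neg at hcon
    apply hnotL
    rw [hLset_def]
    refine Finset.mem_filter.mpr ⟨Finset.mem_Icc.mpr hIcc, ?_⟩
    rw [← h3]
    exact hcon
  have hidx_mono : ∀ s t, s < t → t < k → idx s < idx t := by
    intro s t hst ht
    have hs' : s < k := lt_trans hst ht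
    have h3 : idx s = σ ⟨s, hs'⟩ := by rw [hidx_def]; simp [hs']
    have h4 : idx t = σ ⟨t, ht⟩ := by rw [hidx_def]; simp [ht]
    rw [h3, h4]
    exact σ.strictMono (Fin.mk_lt_mk.mpr hst)
  have hfinal := stmt6_main hparent_root hdepth_root hdepth hleafdepth hw hsub hc_child
    hc_max hk idx (fun t ht => (hidx_bad t ht).1) hidx_mono
  have hWbad : ∀ t ∈ Finset.range k,
      (∑ p ∈ stmt6lvl depth (idx t - 1), leafSum parent root w e (c p)) < w root ^ e := by
    intro t ht
    rw [Finset.mem_range] at ht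
    obtain ⟨⟨hi1, hih⟩, hlt⟩ := hidx_bad t ht
    have hWeq := stmt6_W_eq (w := w) (e := e) hparent_root hdepth_root hdepth hleafdepth
      hc_child hi1 hih
    rw [← hWeq]
    exact hlt
  set P : ℝ := ∏ t ∈ Finset.range k, ∑ p ∈ stmt6lvl depth (idx t - 1),
      leafSum parent root w e (c p) with hP_def
  have hPnn : 0 ≤ P := Finset.prod_nonneg fun t _ => Finset.sum_nonneg fun p _ => hgnn _
  have hRpos : 0 < w root := hw root
  have hkinv_pos : (0:ℝ) < ((k:ℝ) - 1)⁻¹ := by positivity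
  have hPpos : 0 < P := by
    rcases hPnn.lt_or_eq with hpos | hzero
    · exact hpos
    · exfalso
      rw [← hzero, Real.zero_rpow hkinv_pos.ne'] at hfinal
      linarith
  have hfacpos : ∀ t ∈ Finset.range k,
      0 < ∑ p ∈ stmt6lvl depth (idx t - 1), leafSum parent root w e (c p) := by
    intro t ht
    rcases (Finset.sum_nonneg fun p _ => hgnn (c p) :
        (0:ℝ) ≤ ∑ p ∈ stmt6lvl depth (idx t - 1), leafSum parent root w e (c p)).lt_or_eq
      with hpos | hzero
    · exact hpos
    · exfalso
      exact hPpos.ne' (by rw [hP_def]; exact Finset.prod_eq_zero ht hzero.symm)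
  have hPlt : P < (w root ^ e) ^ k := by
    have h2 := Finset.prod_lt_prod_of_nonempty hfacpos hWbad
      ⟨0, Finset.mem_range.mpr (by omega)⟩
    rw [Finset.prod_const, Finset.card_range] at h2
    rw [hP_def]
    exact h2
  have hconv : ((w root ^ e) ^ k : ℝ) ^ ((k:ℝ) - 1)⁻¹ = w root := by
    rw [← Real.rpow_natCast (w root ^ e) k, ← Real.rpow_mul hRpos.le,
      ← Real.rpow_mul hRpos.le]
    rw [show e * (k:ℝ) * ((k:ℝ) - 1)⁻¹ = 1 by rw [he_def]; field_simp]
    exact Real.rpow_one _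
  have hcontra : w root < w root := by
    calc w root ≤ P ^ ((k:ℝ) - 1)⁻¹ := hfinal
      _ < ((w root ^ e) ^ k) ^ ((k:ℝ) - 1)⁻¹ := Real.rpow_lt_rpow hPnn hPlt hkinv_pos
      _ = w root := hconv
  exact absurd hcontra (lt_irrefl _)
end

section
/- Let (X,d) be a compact metric space, α, K > 0, and μ a Borel measure on X with μ(X) > 0 and μ(B(x,r)) ≤ K·r^α for all x ∈ X and r > 0. Let ε ∈ (0,1), c > 0, and suppose S ⊆ X is a closed subset such that every cover of S by closed balls {B(x_i, r_i)}_{i∈I} satisfies ∑_{i∈I} μ(B(x_i, c·r_i))^(1−ε) ≥ μ(X)^(1−ε). Then the Hausdorff dimension of S is at least (1−ε)·α. -/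
open MeasureTheory Metric
open scoped ENNReal NNReal

/-- Let `(X,d)` be a compact metric space, `α, K > 0`, and `μ` a Borel
measure with `μ(X) > 0` and `μ(B(x,r)) ≤ K·r^α`. If `ε ∈ (0,1)`, `c > 0`, and `S ⊆ X` is a
closed subset such that every cover of `S` by closed balls `{B(xᵢ,rᵢ)}` satisfies
`∑ᵢ μ(B(xᵢ, c·rᵢ))^(1−ε) ≥ μ(X)^(1−ε)`, then `dim_H S ≥ (1−ε)·α`. -/
theorem stmt9 {X : Type*} [MetricSpace X] [CompactSpace X]
    [MeasurableSpace X] [BorelSpace X]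
    (μ : Measure X) (α K : ℝ) (hα : 0 < α) (hK : 0 < K)
    (hμpos : 0 < μ Set.univ)
    (hμball : ∀ (x : X) (r : ℝ), 0 < r → μ (closedBall x r) ≤ ENNReal.ofReal (K * r ^ α))
    (ε c : ℝ) (hε : ε ∈ Set.Ioo (0 : ℝ) 1) (hc : 0 < c)
    (S : Set X) (hS : IsClosed S)
    (hcover : ∀ (I : Type) (x : I → X) (r : I → ℝ), (∀ i, 0 ≤ r i) →
      S ⊆ ⋃ i, closedBall (x i) (r i) →
      (μ Set.univ) ^ (1 - ε) ≤ ∑' i, (μ (closedBall (x i) (c * r i))) ^ (1 - ε)) :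
    ENNReal.ofReal ((1 - ε) * α) ≤ dimH S := by
  classical
  obtain ⟨hε0, hε1⟩ := hε
  have h1ε : (0 : ℝ) < 1 - ε := by linarith
  set β : ℝ := (1 - ε) * α with hβdef
  have hβ : 0 < β := mul_pos h1ε hα
  -- X is nonempty
  have hXne : Nonempty X := by
    by_contra h
    rw [Set.univ_eq_empty_iff.mpr (not_nonempty_iff.mp h), measure_empty] at hμpos
    exact lt_irrefl 0 hμpos
  obtain ⟨x0⟩ := hXne
  -- singletons have measure zero
  have hsing : ∀ x : X, μ {x} = 0 := by
    intro x
    have htend : Filter.Tendsto (fun δ : ℝ => ENNReal.ofReal (K * δ ^ α))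
        (nhdsWithin 0 (Set.Ioi 0)) (nhds 0) := by
      have h1 : Filter.Tendsto (fun δ : ℝ => K * δ ^ α) (nhdsWithin 0 (Set.Ioi 0)) (nhds 0) := by
        have h := (Real.continuousAt_rpow_const 0 α (Or.inr hα.le)).tendsto
        rw [Real.zero_rpow hα.ne'] at h
        have h2 : Filter.Tendsto (fun δ : ℝ => δ ^ α) (nhdsWithin 0 (Set.Ioi 0)) (nhds 0) :=
          h.mono_left nhdsWithin_le_nhds
        simpa using h2.const_mul K
      simpa [Function.comp_def] using (ENNReal.continuous_ofReal.tendsto 0).comp h1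
    have hev : ∀ᶠ δ in nhdsWithin (0:ℝ) (Set.Ioi 0),
        μ {x} ≤ ENNReal.ofReal (K * δ ^ α) := by
      filter_upwards [self_mem_nhdsWithin] with δ hδ
      exact le_trans (measure_mono (by simp [Set.singleton_subset_iff, le_of_lt (Set.mem_Ioi.mp hδ)]))
        (hμball x δ hδ)
    have := ge_of_tendsto htend hev
    simpa using this
  -- extended ball bound including r = 0
  have hball' : ∀ (x : X) (r : ℝ), 0 ≤ r →
      μ (closedBall x r) ≤ ENNReal.ofReal (K * r ^ α) := by
    intro x r hr
    rcases hr.lt_or_eq with h | h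
    · exact hμball x r h
    · subst h
      simp [closedBall_zero, hsing x, Real.zero_rpow hα.ne']
  set C : ℝ≥0∞ := ENNReal.ofReal (K ^ (1 - ε) * c ^ β) with hCdef
  have hCpos : (0:ℝ) < K ^ (1 - ε) * c ^ β :=
    mul_pos (Real.rpow_pos_of_pos hK _) (Real.rpow_pos_of_pos hc _)
  have hC0 : C ≠ 0 := by simp [hCdef, hCpos]
  have hCtop : C ≠ ⊤ := ENNReal.ofReal_ne_top
  set L : ℝ≥0∞ := (μ Set.univ) ^ (1 - ε) / C with hLdef
  have hL0 : L ≠ 0 := by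
    rw [hLdef]
    apply ENNReal.div_ne_zero.mpr
    constructor
    · simp only [ne_eq, ENNReal.rpow_eq_zero_iff, not_or]
      exact ⟨fun h => by simp [h.1] at hμpos, fun h => by linarith [h.2]⟩
    · exact hCtop
  -- Key: every countable cover has ∑ diam^β ≥ L
  have key : ∀ t : ℕ → Set X, S ⊆ ⋃ n, t n →
      L ≤ ∑' n, ⨆ _ : (t n).Nonempty, EMetric.diam (t n) ^ β := by
    intro t ht
    set x : ℕ → X := fun n => if h : (t n).Nonempty then h.some else x0 with hxdef
    set r : ℕ → ℝ := fun n => diam (t n) with hrdef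
    have hr0 : ∀ n, 0 ≤ r n := fun n => diam_nonneg
    have hbdd : ∀ n, Bornology.IsBounded (t n) := fun n =>
      isCompact_univ.isBounded.subset (Set.subset_univ _)
    have hcov : S ⊆ ⋃ n, closedBall (x n) (r n) := by
      intro a ha
      obtain ⟨n, hn⟩ := Set.mem_iUnion.mp (ht ha)
      refine Set.mem_iUnion.mpr ⟨n, ?_⟩
      have hne : (t n).Nonempty := ⟨a, hn⟩
      simp only [hxdef, dif_pos hne, mem_closedBall]
      exact dist_le_diam_of_mem (hbdd n) hn hne.some_mem
    have h1 := hcover ℕ x r hr0 hcov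
    have h2 : ∀ n, (μ (closedBall (x n) (c * r n))) ^ (1 - ε) ≤
        C * ⨆ _ : (t n).Nonempty, EMetric.diam (t n) ^ β := by
      intro n
      by_cases hne : (t n).Nonempty
      · have hb : μ (closedBall (x n) (c * r n)) ≤ ENNReal.ofReal (K * (c * r n) ^ α) :=
          hball' _ _ (mul_nonneg hc.le (hr0 n))
        calc (μ (closedBall (x n) (c * r n))) ^ (1 - ε)
            ≤ (ENNReal.ofReal (K * (c * r n) ^ α)) ^ (1 - ε) :=
              ENNReal.rpow_le_rpow hb h1ε.le
          _ = ENNReal.ofReal ((K * (c * r n) ^ α) ^ (1 - ε)) :=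
              ENNReal.ofReal_rpow_of_nonneg
                (mul_nonneg hK.le (Real.rpow_nonneg (mul_nonneg hc.le (hr0 n)) _)) h1ε.le
          _ = ENNReal.ofReal (K ^ (1 - ε) * c ^ β * (r n) ^ β) := by
              congr 1
              rw [Real.mul_rpow hc.le (hr0 n), ← mul_assoc,
                Real.mul_rpow (mul_nonneg hK.le (Real.rpow_nonneg hc.le _))
                  (Real.rpow_nonneg (hr0 n) _),
                Real.mul_rpow hK.le (Real.rpow_nonneg hc.le _),
                ← Real.rpow_mul hc.le, ← Real.rpow_mul (hr0 n), mul_comm α (1 - ε)]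
          _ = C * ENNReal.ofReal ((r n) ^ β) := by
              rw [hCdef, ← ENNReal.ofReal_mul hCpos.le]
          _ ≤ C * ⨆ _ : (t n).Nonempty, EMetric.diam (t n) ^ β := by
              apply mul_le_mul_right
              rw [iSup_pos hne]
              rw [← ENNReal.ofReal_rpow_of_nonneg (hr0 n) hβ.le]
              apply ENNReal.rpow_le_rpow _ hβ.le
              rw [hrdef]
              simp only [Metric.diam]
              exact ENNReal.ofReal_toReal_le
      · have hx : x n = x0 := by simp [hxdef, hne]
        have hr : r n = 0 := by
          simp [hrdef, Set.not_nonempty_iff_eq_empty.mp hne]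
        rw [hx, hr, mul_zero, closedBall_zero]
        rw [hsing x0, ENNReal.zero_rpow_of_pos h1ε]
        exact zero_le
    have h3 : (μ Set.univ) ^ (1 - ε) ≤
        C * ∑' n, ⨆ _ : (t n).Nonempty, EMetric.diam (t n) ^ β := by
      calc (μ Set.univ) ^ (1 - ε) ≤ ∑' n, (μ (closedBall (x n) (c * r n))) ^ (1 - ε) := h1
        _ ≤ ∑' n, C * ⨆ _ : (t n).Nonempty, EMetric.diam (t n) ^ β := ENNReal.tsum_le_tsum h2
        _ = C * ∑' n, ⨆ _ : (t n).Nonempty, EMetric.diam (t n) ^ β := ENNReal.tsum_mul_left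
    rw [hLdef]
    exact ENNReal.div_le_of_le_mul' h3
  -- lower bound on Hausdorff measure
  have hH : L ≤ μH[β] S := by
    rw [Measure.hausdorffMeasure_apply]
    refine le_trans ?_ (le_iSup_of_le 1 (le_iSup_of_le one_pos le_rfl))
    exact le_iInf fun t => le_iInf fun ht => le_iInf fun _ => key t ht
  have hne : μH[(β.toNNReal : ℝ)] S ≠ 0 := by
    rw [Real.coe_toNNReal _ hβ.le]
    exact fun h => hL0 (le_antisymm (h ▸ hH) zero_le)
  have := le_dimH_of_hausdorffMeasure_ne_zero hne
  rwa [← ENNReal.ofReal.eq_1] at this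
end

section
/- Let (X,d) be a finite metric space, β > 0, T a finite rooted tree, and F : T → 2^X a fragmentation map such that every vertex u ∈ T is β-separated: for all x ∈ ∂F_{r(T)} \ ∂F_u, d(x, F_u) ≥ β·diam(F_u). Define, for a non-leaf u and distinct children x,y of u, d̄_u(x,y) = diam(∂F_x ∪ ∂F_y). Then d̄_u is a metric on the set of children of u, and for any p ∈ ∂F_v, q ∈ ∂F_w with v,w distinct children of u, d(p,q) ≤ d̄_u(v,w) ≤ (1 + 2/β)·d(p,q). -/
open scoped Classical

/-- The induced distance `d̄_u` on the children of a vertex: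
`d̄_u(v,w) = diam(∂F_v ∪ ∂F_w)` for `v ≠ w`, and `0` on the diagonal. -/
noncomputable def childDist {V X : Type*} [MetricSpace X] (parent : V → V) (root : V)
    (F : V → Set X) (v w : V) : ℝ :=
  if v = w then 0 else Metric.diam (bdry parent root F v ∪ bdry parent root F w)

/-- If `F` is a `β`-separated fragmentation map of a finite metric space,
then for every non-leaf `u` the function `d̄_u(v,w) = diam(∂F_v ∪ ∂F_w)` is a metric on the
children of `u`, and for `p ∈ ∂F_v`, `q ∈ ∂F_w` with `v ≠ w` children of `u`,
`d(p,q) ≤ d̄_u(v,w) ≤ (1 + 2/β)·d(p,q)`. -/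
theorem stmt13 {V X : Type*} [Fintype V] [DecidableEq V] [Fintype X] [MetricSpace X]
    (root : V) (parent : V → V) (depth : V → ℕ)
    (hparent_root : parent root = root)
    (hdepth_root : depth root = 0)
    (hdepth : ∀ v, v ≠ root → depth v = depth (parent v) + 1)
    (F : V → Set X) (β : ℝ) (hβ : 0 < β)
    (hFroot : F root = Set.univ)
    (hFleaf : ∀ v, IsTreeLeaf parent root v → ∃ x, F v = {x})
    (hFmono : ∀ v, v ≠ root → F v ⊆ F (parent v))
    (hFdisj : ∀ u v : V, ¬ anc parent u v → ¬ anc parent v u → Disjoint (F u) (F v))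
    (hsep : ∀ u : V, ∀ x ∈ bdry parent root F root \ bdry parent root F u,
      β * Metric.diam (F u) ≤ Metric.infDist x (F u)) :
    ∀ u : V, ¬ IsTreeLeaf parent root u →
      (∀ v ∈ childrenOf parent root u, ∀ w ∈ childrenOf parent root u,
        childDist parent root F v w = childDist parent root F w v) ∧
      (∀ v ∈ childrenOf parent root u, childDist parent root F v v = 0) ∧
      (∀ v ∈ childrenOf parent root u, ∀ w ∈ childrenOf parent root u, v ≠ w →
        0 < childDist parent root F v w) ∧
      (∀ v ∈ childrenOf parent root u, ∀ w ∈ childrenOf parent root u,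
        ∀ z ∈ childrenOf parent root u,
          childDist parent root F v w ≤
            childDist parent root F v z + childDist parent root F z w) ∧
      (∀ v ∈ childrenOf parent root u, ∀ w ∈ childrenOf parent root u, v ≠ w →
        ∀ p ∈ bdry parent root F v, ∀ q ∈ bdry parent root F w,
          dist p q ≤ childDist parent root F v w ∧
          childDist parent root F v w ≤ (1 + 2 / β) * dist p q) := by

  intro u _hu
  -- basic facts
  have hbdd : ∀ s : Set X, Bornology.IsBounded s := fun s => (Set.toFinite s).isBounded
  have hdp : ∀ x : V, depth (parent x) ≤ depth x := by
    intro x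
    by_cases hx : x = root
    · subst hx; rw [hparent_root]
    · rw [hdepth x hx]; omega
  have hdpn : ∀ n : ℕ, ∀ x : V, depth (parent^[n] x) ≤ depth x := by
    intro n
    induction n with
    | zero => intro x; simp
    | succ n ih =>
      intro x
      rw [Function.iterate_succ_apply']
      exact le_trans (hdp _) (ih x)
  have hanc_root : ∀ v : V, anc parent root v := by
    have H : ∀ n : ℕ, ∀ v : V, depth v ≤ n → anc parent root v := by
      intro n
      induction n with
      | zero =>
        intro v hv
        have hv0 : depth v = 0 := Nat.le_zero.mp hv
        by_cases h : v = root
        · exact ⟨0, by simpa using h⟩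
        · rw [hdepth v h] at hv0; omega
      | succ n ih =>
        intro v hv
        by_cases h : v = root
        · exact ⟨0, by simpa using h⟩
        · have hd : depth (parent v) ≤ n := by
            have := hdepth v h; omega
          obtain ⟨m, hm⟩ := ih (parent v) hd
          exact ⟨m + 1, by rw [Function.iterate_succ_apply]; exact hm⟩
    exact fun v => H (depth v) v le_rfl
  have hFiter : ∀ n : ℕ, ∀ x : V, parent^[n] x ≠ root → F x ⊆ F (parent^[n] x) := by
    intro n
    induction n with
    | zero => intro x _; simp
    | succ n ih =>
      intro x hx
      rw [Function.iterate_succ_apply'] at hx ⊢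
      have hne : parent^[n] x ≠ root := by
        intro h; rw [h, hparent_root] at hx; exact hx rfl
      exact (ih x hne).trans (hFmono _ hne)
  have hbdry_sub : ∀ v : V, v ≠ root → bdry parent root F v ⊆ F v := by
    intro v hv x hx
    simp only [bdry, Set.mem_iUnion, Set.mem_setOf_eq, exists_prop] at hx
    obtain ⟨ℓ, ⟨_, n, hn⟩, hxℓ⟩ := hx
    have := hFiter n ℓ (by rw [hn]; exact hv)
    rw [hn] at this
    exact this hxℓ
  have hmem_bdry : ∀ v ℓ : V, IsTreeLeaf parent root ℓ → anc parent v ℓ →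
      F ℓ ⊆ bdry parent root F v := by
    intro v ℓ hℓ ha x hx
    simp only [bdry, Set.mem_iUnion, Set.mem_setOf_eq, exists_prop]
    exact ⟨ℓ, ⟨hℓ, ha⟩, hx⟩
  have hleafdesc : ∀ v : V, ∃ ℓ, IsTreeLeaf parent root ℓ ∧ anc parent v ℓ := by
    intro v
    have hsne : (Finset.univ.filter (fun w => anc parent v w)).Nonempty :=
      ⟨v, by simp only [Finset.mem_filter, Finset.mem_univ, true_and]; exact ⟨0, rfl⟩⟩
    obtain ⟨ℓ, hℓmem, hℓmax⟩ := Finset.exists_max_image _ depth hsne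
    simp only [Finset.mem_filter, Finset.mem_univ, true_and] at hℓmem
    refine ⟨ℓ, ?_, hℓmem⟩
    by_contra hnl
    rw [IsTreeLeaf, ← Set.not_nonempty_iff_eq_empty, not_not] at hnl
    obtain ⟨c, hpc, hcr⟩ := hnl
    obtain ⟨n, hn⟩ := hℓmem
    have hanc_c : anc parent v c :=
      ⟨n + 1, by rw [Function.iterate_succ_apply, hpc]; exact hn⟩
    have := hℓmax c (by simp [hanc_c])
    rw [hdepth c hcr, hpc] at this
    omega
  have hbdry_ne : ∀ v : V, ∃ x, x ∈ bdry parent root F v := by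
    intro v
    obtain ⟨ℓ, hℓ, ha⟩ := hleafdesc v
    obtain ⟨x, hx⟩ := hFleaf ℓ hℓ
    exact ⟨x, hmem_bdry v ℓ hℓ ha (by rw [hx]; rfl)⟩
  have hmem_root : ∀ v : V, bdry parent root F v ⊆ bdry parent root F root := by
    intro v x hx
    simp only [bdry, Set.mem_iUnion, Set.mem_setOf_eq, exists_prop] at hx ⊢
    obtain ⟨ℓ, ⟨hℓ, _⟩, hxℓ⟩ := hx
    exact ⟨ℓ, ⟨hℓ, hanc_root ℓ⟩, hxℓ⟩
  -- children of u facts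
  have hnotanc : ∀ v w : V, v ∈ childrenOf parent root u → w ∈ childrenOf parent root u →
      v ≠ w → ¬ anc parent v w := by
    rintro v w ⟨hpv, hvr⟩ ⟨hpw, _⟩ hne ⟨n, hn⟩
    cases n with
    | zero => exact hne (by simpa using hn.symm)
    | succ n =>
      rw [Function.iterate_succ_apply, hpw] at hn
      have h1 : depth v ≤ depth u := by rw [← hn]; exact hdpn n u
      rw [hdepth v hvr, hpv] at h1
      omega
  have hFvw : ∀ v w : V, v ∈ childrenOf parent root u → w ∈ childrenOf parent root u →
      v ≠ w → Disjoint (F v) (F w) := fun v w hv hw hne =>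
    hFdisj v w (hnotanc v w hv hw hne) (hnotanc w v hw hv hne.symm)
  have hbdisj : ∀ v w : V, v ∈ childrenOf parent root u → w ∈ childrenOf parent root u →
      v ≠ w → Disjoint (bdry parent root F v) (bdry parent root F w) := fun v w hv hw hne =>
    (hFvw v w hv hw hne).mono (hbdry_sub v hv.2) (hbdry_sub w hw.2)
  -- separation consequence
  have hdiamF : ∀ v w : V, v ∈ childrenOf parent root u → w ∈ childrenOf parent root u →
      v ≠ w → ∀ p ∈ bdry parent root F v, ∀ q ∈ bdry parent root F w,
      Metric.diam (F v) ≤ dist p q / β := by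
    intro v w hv hw hne p hp q hq
    have hq1 : q ∈ bdry parent root F root \ bdry parent root F v :=
      ⟨hmem_root w hq, fun h => (hbdisj v w hv hw hne).ne_of_mem h hq rfl⟩
    have h1 := hsep v q hq1
    have h2 : Metric.infDist q (F v) ≤ dist q p :=
      Metric.infDist_le_dist_of_mem (hbdry_sub v hv.2 hp)
    rw [dist_comm] at h2
    rw [le_div_iff₀ hβ]
    linarith [h1.trans h2]
  have hcd_nonneg : ∀ v w : V, 0 ≤ childDist parent root F v w := by
    intro v w
    unfold childDist
    split
    · exact le_rfl
    · exact Metric.diam_nonneg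
  -- the five properties
  refine ⟨?_, ?_, ?_, ?_, ?_⟩
  · intro v _ w _
    unfold childDist
    by_cases h : v = w
    · simp [h]
    · rw [if_neg h, if_neg (Ne.symm h), Set.union_comm]
  · intro v _
    simp [childDist]
  · intro v hv w hw hne
    obtain ⟨p, hp⟩ := hbdry_ne v
    obtain ⟨q, hq⟩ := hbdry_ne w
    have hpq : p ≠ q := fun h => (hbdisj v w hv hw hne).ne_of_mem hp hq h
    have : dist p q ≤ childDist parent root F v w := by
      rw [childDist, if_neg hne]
      exact Metric.dist_le_diam_of_mem (hbdd _) (Or.inl hp) (Or.inr hq)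
    have h0 : 0 < dist p q := dist_pos.mpr hpq
    linarith
  · intro v hv w hw z hz
    by_cases hvw : v = w
    · rw [hvw, childDist, if_pos rfl]
      exact add_nonneg (hcd_nonneg _ _) (hcd_nonneg _ _)
    by_cases hvz : v = z
    · subst hvz
      have h0 : childDist parent root F v v = 0 := by simp [childDist]
      rw [h0, zero_add]
    by_cases hzw : z = w
    · subst hzw
      have h0 : childDist parent root F z z = 0 := by simp [childDist]
      rw [h0, add_zero]
    rw [childDist, if_neg hvw, childDist, if_neg hvz, childDist, if_neg hzw]
    obtain ⟨c, hc⟩ := hbdry_ne z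
    refine Metric.diam_le_of_forall_dist_le
      (add_nonneg Metric.diam_nonneg Metric.diam_nonneg) ?_
    rintro a (ha | ha) b (hb | hb)
    · exact le_trans (Metric.dist_le_diam_of_mem (hbdd _) (Or.inl ha) (Or.inl hb))
        (le_add_of_nonneg_right Metric.diam_nonneg)
    · calc dist a b ≤ dist a c + dist c b := dist_triangle a c b
        _ ≤ _ := add_le_add
            (Metric.dist_le_diam_of_mem (hbdd _) (Or.inl ha) (Or.inr hc))
            (Metric.dist_le_diam_of_mem (hbdd _) (Or.inl hc) (Or.inr hb))
    · have h1 : dist a c ≤ Metric.diam (bdry parent root F z ∪ bdry parent root F w) := by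
        rw [dist_comm]
        exact Metric.dist_le_diam_of_mem (hbdd _) (Or.inl hc) (Or.inr ha)
      have h2 : dist c b ≤ Metric.diam (bdry parent root F v ∪ bdry parent root F z) := by
        rw [dist_comm]
        exact Metric.dist_le_diam_of_mem (hbdd _) (Or.inl hb) (Or.inr hc)
      calc dist a b ≤ dist a c + dist c b := dist_triangle a c b
        _ ≤ _ := by linarith
    · exact le_trans (Metric.dist_le_diam_of_mem (hbdd _) (Or.inr ha) (Or.inr hb))
        (le_add_of_nonneg_left Metric.diam_nonneg)
  · intro v hv w hw hne p hp q hq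
    constructor
    · rw [childDist, if_neg hne]
      exact Metric.dist_le_diam_of_mem (hbdd _) (Or.inl hp) (Or.inr hq)
    · rw [childDist, if_neg hne]
      have hDv : Metric.diam (F v) ≤ dist p q / β := hdiamF v w hv hw hne p hp q hq
      have hDw : Metric.diam (F w) ≤ dist p q / β := by
        have := hdiamF w v hw hv hne.symm q hq p hp
        rwa [dist_comm] at this
      have hd0 : (0:ℝ) ≤ dist p q := dist_nonneg
      have hbound : (0:ℝ) ≤ (1 + 2 / β) * dist p q := by positivity
      refine Metric.diam_le_of_forall_dist_le hbound ?_
      have hsubv : bdry parent root F v ⊆ F v := hbdry_sub v hv.2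
      have hsubw : bdry parent root F w ⊆ F w := hbdry_sub w hw.2
      have hDv0 : (0:ℝ) ≤ Metric.diam (F v) := Metric.diam_nonneg
      have hDw0 : (0:ℝ) ≤ Metric.diam (F w) := Metric.diam_nonneg
      have hdivle : dist p q / β ≤ (1 + 2 / β) * dist p q := by
        rw [div_le_iff₀ hβ]
        have h2 : (0:ℝ) ≤ β * dist p q := mul_nonneg hβ.le hd0
        have h3 : (1 + 2 / β) * dist p q * β = β * dist p q + 2 * dist p q := by
          field_simp
        linarith
      rintro a (ha | ha) b (hb | hb)
      · exact le_trans (Metric.dist_le_diam_of_mem (hbdd _) (hsubv ha) (hsubv hb))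
          (hDv.trans hdivle)
      · have h1 : dist a p ≤ dist p q / β :=
          le_trans (Metric.dist_le_diam_of_mem (hbdd _) (hsubv ha) (hsubv hp)) hDv
        have h2 : dist q b ≤ dist p q / β :=
          le_trans (Metric.dist_le_diam_of_mem (hbdd _) (hsubw hq) (hsubw hb)) hDw
        have h3 : dist a b ≤ dist a p + dist p q + dist q b := dist_triangle4 a p q b
        calc dist a b ≤ dist p q / β + dist p q + dist p q / β := by linarith
          _ = (1 + 2 / β) * dist p q := by field_simp; ring
      · have h1 : dist b p ≤ dist p q / β :=
          le_trans (Metric.dist_le_diam_of_mem (hbdd _) (hsubv hb) (hsubv hp)) hDv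
        have h2 : dist q a ≤ dist p q / β :=
          le_trans (Metric.dist_le_diam_of_mem (hbdd _) (hsubw hq) (hsubw ha)) hDw
        have h3 : dist b a ≤ dist b p + dist p q + dist q a := dist_triangle4 b p q a
        rw [dist_comm a b]
        calc dist b a ≤ dist p q / β + dist p q + dist p q / β := by linarith
          _ = (1 + 2 / β) * dist p q := by field_simp; ring
      · exact le_trans (Metric.dist_le_diam_of_mem (hbdd _) (hsubw ha) (hsubw hb))
          (hDw.trans hdivle)
end

section
/- Let (X,d) be a finite metric space with n = |X| ≥ 2 points, diameter 1, and minimal positive distance δ, and let Ψ > 1/δ (so that Ψ·δ > 1 = diam(X)). Consider Y = X^ℕ (sequences in X) with the metric ρ(x,y) = d(x_{k}, y_{k}) / n^{(k−1)/α} where k = k(x,y) is the first coordinate at which x and y differ and α = log n / log Ψ. Then (Y, ρ) is a compact metric space of Hausdorff dimension exactly log_Ψ n. -/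
open scoped Classical ENNReal NNReal

/-- Base-`n` digit expansion of `j/n^m` with finitely many nonzero digits. -/
private lemma digit_aux (n : ℕ) (hn2 : 2 ≤ n) :
    ∀ m j : ℕ, j < n ^ m → ∃ w : ℕ → Fin n, (∀ k, m ≤ k → (w k : ℕ) = 0) ∧
      (∑ k ∈ Finset.range m, ((w k : ℕ) : ℝ) / (n : ℝ) ^ (k + 1)) = j / (n : ℝ) ^ m := by
  have hn0 : (0:ℝ) < n := by positivity
  intro m
  induction m with
  | zero =>
    intro j hj
    have : j = 0 := by simpa using hj
    subst this
    exact ⟨fun _ => ⟨0, by omega⟩, fun _ _ => rfl, by simp⟩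
  | succ m ih =>
    intro j hj
    have hq : j / n ^ m < n := Nat.div_lt_of_lt_mul (by simpa [pow_succ, mul_comm] using hj)
    obtain ⟨w', hw'0, hw'sum⟩ := ih (j % n ^ m) (Nat.mod_lt _ (Nat.pow_pos (by omega)))
    refine ⟨fun k => Nat.casesOn k ⟨j / n ^ m, hq⟩ (fun k' => w' k'), ?_, ?_⟩
    · intro k hk
      match k, hk with
      | k' + 1, hk => exact hw'0 k' (by omega)
    · rw [Finset.sum_range_succ']
      have hshift : (∑ i ∈ Finset.range m,
          ((w' i : ℕ) : ℝ) / (n : ℝ) ^ (i + 1 + 1)) =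
          (j % n ^ m : ℕ) / (n : ℝ) ^ (m + 1) := by
        have : (∑ i ∈ Finset.range m, ((w' i : ℕ) : ℝ) / (n : ℝ) ^ (i + 1 + 1)) =
            (∑ i ∈ Finset.range m, ((w' i : ℕ) : ℝ) / (n : ℝ) ^ (i + 1)) / n := by
          rw [Finset.sum_div]
          refine Finset.sum_congr rfl fun i _ => ?_
          rw [div_div, ← pow_succ]
        rw [this, hw'sum, div_div, ← pow_succ]
      rw [hshift]
      have hmod := Nat.div_add_mod j (n ^ m)
      have hcast : ((n:ℝ)) ^ m * ((j / n ^ m : ℕ) : ℝ) + ((j % n ^ m : ℕ) : ℝ) = (j : ℝ) := by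
        exact_mod_cast congrArg (Nat.cast : ℕ → ℝ) hmod
      have hnm : (0:ℝ) < (n:ℝ) ^ m := by positivity
      field_simp
      simp only [Nat.rec_zero]
      linear_combination (n:ℝ) * hcast

/-- The self-similar distance on `X^ℕ`: for `x ≠ y`, with `m` the first differing
coordinate (the paper's `k = m+1`), `ρ(x,y) = d(x_m, y_m) / n^(m/α)`. -/
noncomputable def selfSimDist {X : Type*} [MetricSpace X] (n : ℕ) (α : ℝ)
    (x y : ℕ → X) : ℝ :=
  if h : x = y then 0
  else
    dist (x (Nat.find (Function.ne_iff.mp h))) (y (Nat.find (Function.ne_iff.mp h))) /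
      (n : ℝ) ^ ((Nat.find (Function.ne_iff.mp h) : ℝ) / α)

/-- Let `(X,d)` be a finite metric space with `n = |X| ≥ 2` points,
diameter `1` and minimal positive distance `δ`, and let `Ψ > 1/δ`. Then `X^ℕ` with the
self-similar metric `ρ` (scaling by `n^{−(k−1)/α}`, `α = log n / log Ψ`) is a compact
metric space of Hausdorff dimension exactly `log_Ψ n`. -/
theorem stmt15 {X : Type*} [Fintype X] [MetricSpace X]
    {Y : Type*} [MetricSpace Y] [MeasurableSpace Y] [BorelSpace Y]
    (n : ℕ) (hn : n = Fintype.card X) (hn2 : 2 ≤ n)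
    (hdiam : Metric.diam (Set.univ : Set X) = 1)
    (δ : ℝ) (hδpos : 0 < δ)
    (hδ_min : ∀ x y : X, x ≠ y → δ ≤ dist x y)
    (hδ_att : ∃ x y : X, x ≠ y ∧ dist x y = δ)
    (Ψ : ℝ) (hΨ : 1 / δ < Ψ)
    (α : ℝ) (hα : α = Real.log n / Real.log Ψ)
    (e : Y ≃ (ℕ → X))
    (hdist : ∀ a b : Y, dist a b = selfSimDist n α (e a) (e b)) :
    CompactSpace Y ∧
      dimH (Set.univ : Set Y) = ENNReal.ofReal (Real.log n / Real.log Ψ) := by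
  have hn0 : 0 < n := by omega
  have hnR : (2:ℝ) ≤ (n:ℝ) := by exact_mod_cast hn2
  have hnR0 : (0:ℝ) < n := by linarith
  have hdistX_le : ∀ x y : X, dist x y ≤ 1 := by
    intro x y
    have hb : Bornology.IsBounded (Set.univ : Set X) := Set.finite_univ.isBounded
    have := Metric.dist_le_diam_of_mem hb (Set.mem_univ x) (Set.mem_univ y)
    rwa [hdiam] at this
  have hδ1 : δ ≤ 1 := by
    obtain ⟨x, y, hxy, hd⟩ := hδ_att
    have := hdistX_le x y
    linarith
  have hΨ1 : 1 < Ψ := lt_of_le_of_lt (by rw [le_div_iff₀ hδpos]; linarith) hΨ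
  have hΨ0 : 0 < Ψ := by linarith
  have hlogn : 0 < Real.log n := Real.log_pos (by exact_mod_cast hn2)
  have hlogΨ : 0 < Real.log Ψ := Real.log_pos hΨ1
  have hα0 : 0 < α := hα ▸ div_pos hlogn hlogΨ
  have hΨα : Ψ ^ α = (n : ℝ) := by
    rw [Real.rpow_def_of_pos hΨ0, hα, mul_comm, div_mul_cancel₀ _ hlogΨ.ne', Real.exp_log hnR0]
  have hkey : ∀ m : ℕ, (n : ℝ) ^ ((m : ℝ) / α) = Ψ ^ m := by
    intro m
    rw [Real.rpow_def_of_pos hnR0, ← Real.rpow_natCast Ψ m, Real.rpow_def_of_pos hΨ0]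
    congr 1
    rw [hα]
    field_simp
  have hΨpow : ∀ m : ℕ, (0:ℝ) < Ψ ^ m := fun m => pow_pos hΨ0 m
  -- description of the distance for distinct points
  have hdesc : ∀ a b : Y, a ≠ b → ∃ m : ℕ,
      e a m ≠ e b m ∧ (∀ k, k < m → e a k = e b k) ∧
      dist a b = dist (e a m) (e b m) / Ψ ^ m := by
    intro a b hab
    have hne : e a ≠ e b := fun h => hab (e.injective h)
    have hne' := Function.ne_iff.mp hne
    refine ⟨Nat.find hne', Nat.find_spec hne', ?_, ?_⟩
    · intro k hk
      have := Nat.find_min hne' hk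
      simpa [not_not] using this
    · rw [hdist, selfSimDist, dif_neg hne, hkey]
  -- cylinder bound
  have hcyl : ∀ (m : ℕ) (a b : Y), (∀ k, k < m → e a k = e b k) →
      dist a b ≤ (Ψ ^ m)⁻¹ := by
    intro m a b h
    rcases eq_or_ne a b with rfl | hab
    · simp [dist_self, inv_nonneg.mpr (hΨpow m).le]
    · obtain ⟨m', hne', hagr', hd'⟩ := hdesc a b hab
      have hm : m ≤ m' := by
        by_contra h'
        push_neg at h'
        exact hne' (h m' h')
      rw [hd']
      calc dist (e a m') (e b m') / Ψ ^ m' ≤ 1 / Ψ ^ m' := by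
            gcongr
            exact hdistX_le _ _
        _ ≤ (Ψ ^ m)⁻¹ := by
            rw [one_div]
            gcongr
            exact hΨ1.le
  -- compactness
  have hsingleton : ∀ x : X, IsOpen ({x} : Set X) := by
    intro x
    have h : ({x} : Set X) = Metric.ball x δ := by
      ext y
      simp only [Set.mem_singleton_iff, Metric.mem_ball]
      constructor
      · rintro rfl; simpa using hδpos
      · intro h
        by_contra hne
        exact absurd (hδ_min y x hne) (not_le.mpr h)
    rw [h]
    exact Metric.isOpen_ball
  have hcont : Continuous (fun x : (ℕ → X) => e.symm x) := by
    rw [continuous_iff_continuousAt]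
    intro x
    rw [ContinuousAt, Metric.tendsto_nhds]
    intro ε hε
    obtain ⟨m, hm⟩ : ∃ m : ℕ, (Ψ ^ m)⁻¹ < ε := by
      obtain ⟨m, hm⟩ := exists_pow_lt_of_lt_one hε (by
        rw [inv_lt_one_iff₀]; right; exact hΨ1 : Ψ⁻¹ < 1)
      exact ⟨m, by rwa [inv_pow] at hm⟩
    have hU : IsOpen {y : ℕ → X | ∀ k : Fin m, y k = x k} := by
      have h : {y : ℕ → X | ∀ k : Fin m, y k = x k} =
          ⋂ k : Fin m, (fun y : ℕ → X => y k) ⁻¹' {x k} := by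
        ext y; simp [Set.mem_iInter]
      rw [h]
      exact isOpen_iInter_of_finite fun k =>
        (continuous_apply (k : ℕ)).isOpen_preimage _ (hsingleton _)
    filter_upwards [hU.mem_nhds (by simp)] with y hy
    refine lt_of_le_of_lt ?_ hm
    apply hcyl m
    intro k hk
    simpa using hy ⟨k, hk⟩
  have hYcompact : CompactSpace Y := by
    have : CompactSpace (ℕ → X) := by infer_instance
    constructor
    have himg := (isCompact_univ (X := ℕ → X)).image hcont
    rwa [Set.image_univ, Equiv.range_eq_univ] at himg
  refine ⟨hYcompact, ?_⟩
  rw [← hα]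
  -- upper bound
  have hupper : dimH (Set.univ : Set Y) ≤ ENNReal.ofReal α := by
    apply dimH_le
    intro d hd
    by_contra hlt
    push_neg at hlt
    have hαd : α < (d : ℝ) := by
      have h1 : α.toNNReal < d := by rwa [ENNReal.ofReal, ENNReal.coe_lt_coe] at hlt
      calc α = (α.toNNReal : ℝ) := (Real.coe_toNNReal α hα0.le).symm
        _ < d := NNReal.coe_lt_coe.mpr h1
    set c : ℝ := (n : ℝ) * (Ψ ^ (d : ℝ))⁻¹ with hc
    have hΨd : (0:ℝ) < Ψ ^ (d:ℝ) := Real.rpow_pos_of_pos hΨ0 _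
    have hc1 : c < 1 := by
      have hlt' : (n:ℝ) < Ψ ^ (d:ℝ) := by
        rw [← hΨα]
        exact Real.rpow_lt_rpow_of_exponent_lt hΨ1 hαd
      rw [hc, ← div_eq_mul_inv, div_lt_one hΨd]
      exact hlt'
    have hc0 : 0 ≤ c := by positivity
    set t : ∀ m : ℕ, (Fin m → X) → Set Y := fun m w => {a : Y | ∀ k : Fin m, e a k = w k}
      with htdef
    have hcov : ∀ m, (Set.univ : Set Y) ⊆ ⋃ w, t m w := fun m a _ =>
      Set.mem_iUnion.mpr ⟨fun k => e a k, fun _ => rfl⟩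
    have hdiamt : ∀ m (w : Fin m → X),
        EMetric.diam (t m w) ≤ ENNReal.ofReal ((Ψ ^ m)⁻¹) := by
      intro m w
      apply EMetric.diam_le
      intro a ha b hb
      rw [edist_dist]
      apply ENNReal.ofReal_le_ofReal
      apply hcyl m
      intro k hk
      rw [show e a k = w ⟨k, hk⟩ from ha ⟨k, hk⟩, show e b k = w ⟨k, hk⟩ from hb ⟨k, hk⟩]
    have hr0 : Filter.Tendsto (fun m : ℕ => ENNReal.ofReal ((Ψ ^ m)⁻¹))
        Filter.atTop (nhds 0) := by
      rw [← ENNReal.ofReal_zero]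
      apply ENNReal.tendsto_ofReal
      have := tendsto_pow_atTop_nhds_zero_of_lt_one (inv_nonneg.mpr hΨ0.le)
        ((inv_lt_one_iff₀).mpr (Or.inr hΨ1))
      simpa [inv_pow] using this
    have hle := MeasureTheory.Measure.hausdorffMeasure_le_liminf_sum (d : ℝ) (Set.univ : Set Y)
      (fun m => ENNReal.ofReal ((Ψ ^ m)⁻¹)) hr0 t
      (Filter.Eventually.of_forall hdiamt) (Filter.Eventually.of_forall hcov)
    have hpoweq : ∀ m : ℕ, ((Ψ ^ m)⁻¹) ^ (d : ℝ) = ((Ψ ^ (d:ℝ)) ^ m)⁻¹ := by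
      intro m
      rw [Real.inv_rpow (pow_nonneg hΨ0.le m)]
      congr 1
      rw [← Real.rpow_natCast Ψ m, ← Real.rpow_natCast (Ψ ^ (d:ℝ)) m,
        ← Real.rpow_mul hΨ0.le, ← Real.rpow_mul hΨ0.le, mul_comm]
    have hsum : ∀ m : ℕ, (∑ w : Fin m → X, EMetric.diam (t m w) ^ (d : ℝ)) ≤
        ENNReal.ofReal (c ^ m) := by
      intro m
      calc (∑ w : Fin m → X, EMetric.diam (t m w) ^ (d : ℝ))
          ≤ ∑ _w : Fin m → X, ENNReal.ofReal ((Ψ ^ m)⁻¹) ^ (d : ℝ) :=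
            Finset.sum_le_sum fun w _ => ENNReal.rpow_le_rpow (hdiamt m w) d.coe_nonneg
        _ = (Fintype.card (Fin m → X) : ℝ≥0∞) * ENNReal.ofReal ((Ψ ^ m)⁻¹) ^ (d : ℝ) := by
            rw [Finset.sum_const, Finset.card_univ, nsmul_eq_mul]
        _ = ENNReal.ofReal (c ^ m) := by
            rw [ENNReal.ofReal_rpow_of_pos (inv_pos.mpr (hΨpow m)), hpoweq m,
              Fintype.card_fun, Fintype.card_fin, ← hn]
            rw [show ((n ^ m : ℕ) : ℝ≥0∞) = ENNReal.ofReal ((n:ℝ) ^ m) by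
              rw [← ENNReal.ofReal_natCast]; push_cast; ring_nf]
            rw [← ENNReal.ofReal_mul (by positivity)]
            congr 1
            rw [hc, mul_pow, inv_pow]
    have htendsto : Filter.Tendsto (fun m : ℕ => ENNReal.ofReal (c ^ m))
        Filter.atTop (nhds 0) := by
      rw [← ENNReal.ofReal_zero]
      exact ENNReal.tendsto_ofReal (tendsto_pow_atTop_nhds_zero_of_lt_one hc0 hc1)
    have hliminf : Filter.liminf (fun m : ℕ =>
        ∑ w : Fin m → X, EMetric.diam (t m w) ^ (d : ℝ)) Filter.atTop = 0 := by
      refine le_antisymm ?_ zero_le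
      calc Filter.liminf (fun m : ℕ =>
            ∑ w : Fin m → X, EMetric.diam (t m w) ^ (d : ℝ)) Filter.atTop
          ≤ Filter.liminf (fun m : ℕ => ENNReal.ofReal (c ^ m)) Filter.atTop :=
            Filter.liminf_le_liminf (Filter.Eventually.of_forall hsum)
        _ = 0 := htendsto.liminf_eq
    erw [hliminf] at hle
    rw [le_zero_iff] at hle
    rw [hle] at hd
    exact ENNReal.zero_ne_top hd
  -- lower bound
  have hlower : ENNReal.ofReal α ≤ dimH (Set.univ : Set Y) := by
    haveI := hYcompact
    set cX : X ≃ Fin n := Fintype.equivFinOfCardEq hn.symm with hcdef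
    set f : Y → ℝ := fun a => ∑' k : ℕ, ((cX (e a k) : ℕ) : ℝ) / (n : ℝ) ^ (k + 1) with hf
    have hterm_le : ∀ (u : ℕ → X) (k : ℕ),
        ((cX (u k) : ℕ) : ℝ) / (n : ℝ) ^ (k + 1) ≤ ((n : ℝ)⁻¹) ^ k := by
      intro u k
      have h1 : ((cX (u k) : ℕ) : ℝ) ≤ n := by exact_mod_cast (cX (u k)).isLt.le
      rw [div_le_iff₀ (by positivity)]
      calc ((cX (u k) : ℕ) : ℝ) ≤ n := h1
        _ = ((n:ℝ)⁻¹) ^ k * (n:ℝ) ^ (k + 1) := by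
            rw [inv_pow, pow_succ]
            field_simp
    have hgeo : Summable (fun k : ℕ => ((n:ℝ)⁻¹) ^ k) :=
      summable_geometric_of_lt_one (by positivity) (by
        rw [inv_lt_one_iff₀]; right; linarith)
    have hsummable : ∀ u : ℕ → X,
        Summable (fun k => ((cX (u k) : ℕ) : ℝ) / (n : ℝ) ^ (k + 1)) := by
      intro u
      exact Summable.of_nonneg_of_le (fun k => by positivity) (hterm_le u) hgeo
    have hδα : (0:ℝ) < δ ^ (-α) := Real.rpow_pos_of_pos hδpos _
    have hfdiff : ∀ a b : Y, |f a - f b| ≤ 2 * δ ^ (-α) * dist a b ^ α := by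
      intro a b
      rcases eq_or_ne a b with rfl | hab
      · simp [Real.zero_rpow hα0.ne']
      · obtain ⟨m, hnem, hagr, hdab⟩ := hdesc a b hab
        set g : ℕ → ℝ := fun k => ((cX (e a k) : ℕ) : ℝ) / (n : ℝ) ^ (k + 1) -
          ((cX (e b k) : ℕ) : ℝ) / (n : ℝ) ^ (k + 1) with hg
        have hga := hsummable (e a)
        have hgb' := hsummable (e b)
        have hgsummable : Summable g := hga.sub hgb'
        have hfg : f a - f b = ∑' k, g k := (Summable.tsum_sub hga hgb').symm
        have hg0 : ∀ k ∈ Finset.range m, g k = 0 := by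
          intro k hk
          rw [hg]
          simp only
          rw [hagr k (Finset.mem_range.mp hk), sub_self]
        have hsplit := Summable.sum_add_tsum_nat_add m hgsummable
        have htail : ∑' k, g k = ∑' j, g (j + m) := by
          rw [← hsplit, Finset.sum_eq_zero hg0, zero_add]
        have hgabs : ∀ k, |g k| ≤ ((n:ℝ)⁻¹) ^ k := by
          intro k
          have h1 := hterm_le (e a) k
          have h2 := hterm_le (e b) k
          have h3 : (0:ℝ) ≤ ((cX (e a k) : ℕ) : ℝ) / (n : ℝ) ^ (k + 1) := by positivity
          have h4 : (0:ℝ) ≤ ((cX (e b k) : ℕ) : ℝ) / (n : ℝ) ^ (k + 1) := by positivity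
          rw [hg, abs_le]
          constructor <;> simp only <;> linarith
        have hsumman : Summable (fun j => |g (j + m)|) :=
          ((summable_nat_add_iff m).mpr hgsummable).abs
        have hbound : |f a - f b| ≤ 2 * ((n:ℝ)⁻¹) ^ m := by
          rw [hfg, htail]
          calc |∑' j, g (j + m)| ≤ ∑' j, |g (j + m)| := by
                simpa [Real.norm_eq_abs] using norm_tsum_le_tsum_norm (f := fun j => g (j + m))
                  (by simpa [Real.norm_eq_abs] using hsumman)
            _ ≤ ∑' j : ℕ, ((n:ℝ)⁻¹) ^ m * ((n:ℝ)⁻¹) ^ j := by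
                refine Summable.tsum_le_tsum (fun j => ?_) hsumman (hgeo.mul_left _)
                calc |g (j + m)| ≤ ((n:ℝ)⁻¹) ^ (j + m) := hgabs (j + m)
                  _ = ((n:ℝ)⁻¹) ^ m * ((n:ℝ)⁻¹) ^ j := by rw [pow_add, mul_comm]
            _ = ((n:ℝ)⁻¹) ^ m * ∑' j : ℕ, ((n:ℝ)⁻¹) ^ j := tsum_mul_left
            _ = ((n:ℝ)⁻¹) ^ m * (1 - (n:ℝ)⁻¹)⁻¹ := by
                rw [tsum_geometric_of_lt_one (by positivity) (by
                  rw [inv_lt_one_iff₀]; right; linarith)]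
            _ ≤ ((n:ℝ)⁻¹) ^ m * 2 := by
                have hn2' : (n:ℝ)⁻¹ ≤ 2⁻¹ := by
                  apply inv_anti₀ (by norm_num) hnR
                have h5 : (2:ℝ)⁻¹ ≤ 1 - (n:ℝ)⁻¹ := by linarith
                have h6 : (1 - (n:ℝ)⁻¹)⁻¹ ≤ 2 := by
                  calc (1 - (n:ℝ)⁻¹)⁻¹ ≤ ((2:ℝ)⁻¹)⁻¹ := inv_anti₀ (by norm_num) h5
                    _ = 2 := by norm_num
                have h7 : (0:ℝ) ≤ ((n:ℝ)⁻¹) ^ m := by positivity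
                nlinarith
            _ = 2 * ((n:ℝ)⁻¹) ^ m := mul_comm _ _
        have hdlow : δ / Ψ ^ m ≤ dist a b := by
          rw [hdab]
          gcongr
          exact hδ_min _ _ hnem
        have hpowψ : ((Ψ:ℝ) ^ m) ^ α = (n:ℝ) ^ m := by
          rw [← Real.rpow_natCast Ψ m, ← Real.rpow_mul hΨ0.le, mul_comm,
            Real.rpow_mul hΨ0.le, hΨα, Real.rpow_natCast]
        have hrp : δ ^ α * ((n:ℝ)⁻¹) ^ m ≤ dist a b ^ α := by
          have h1 : (δ / Ψ ^ m) ^ α ≤ dist a b ^ α :=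
            Real.rpow_le_rpow (by positivity) hdlow hα0.le
          refine le_trans (le_of_eq ?_) h1
          rw [Real.div_rpow hδpos.le (hΨpow m).le, hpowψ, div_eq_mul_inv, inv_pow]
        calc |f a - f b| ≤ 2 * ((n:ℝ)⁻¹) ^ m := hbound
          _ = 2 * δ ^ (-α) * (δ ^ α * ((n:ℝ)⁻¹) ^ m) := by
              rw [Real.rpow_neg hδpos.le]
              have : δ ^ α ≠ 0 := (Real.rpow_pos_of_pos hδpos α).ne'
              field_simp
          _ ≤ 2 * δ ^ (-α) * dist a b ^ α := by
              apply mul_le_mul_of_nonneg_left hrp (by positivity)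
    set Creal : ℝ := 2 * δ ^ (-α) with hC
    have hC0 : 0 ≤ Creal := by positivity
    have hHolder : HolderOnWith Creal.toNNReal α.toNNReal f Set.univ := by
      intro x _ y _
      rw [edist_dist, edist_dist, Real.dist_eq]
      have hcoe : (α.toNNReal : ℝ) = α := Real.coe_toNNReal α hα0.le
      calc ENNReal.ofReal |f x - f y| ≤ ENNReal.ofReal (Creal * dist x y ^ α) :=
            ENNReal.ofReal_le_ofReal (hfdiff x y)
        _ = (Creal.toNNReal : ℝ≥0∞) * ENNReal.ofReal (dist x y ^ α) := by
            rw [ENNReal.ofReal_mul hC0]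
            rfl
        _ = (Creal.toNNReal : ℝ≥0∞) * ENNReal.ofReal (dist x y) ^ (α.toNNReal : ℝ) := by
            rcases eq_or_lt_of_le (dist_nonneg (x := x) (y := y)) with hd0 | hd0
            · rw [← hd0, Real.zero_rpow hα0.ne', ENNReal.ofReal_zero,
                ENNReal.zero_rpow_of_pos (by rw [hcoe]; exact hα0)]
            · rw [ENNReal.ofReal_rpow_of_pos hd0, hcoe]
    have hαnn : 0 < α.toNNReal := Real.toNNReal_pos.mpr hα0
    have hfcont : Continuous f := by
      rw [← continuousOn_univ]
      exact hHolder.continuousOn hαnn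
    have hScompact : IsCompact (f '' Set.univ) := isCompact_univ.image hfcont
    have hdense : Set.Icc (0:ℝ) 1 ⊆ f '' Set.univ := by
      have hclosed : IsClosed (f '' Set.univ) := hScompact.isClosed
      intro tval ht
      rw [← hclosed.closure_eq]
      rw [Metric.mem_closure_iff]
      intro ε hε
      obtain ⟨m, hm⟩ : ∃ m : ℕ, ((n:ℝ)⁻¹) ^ m < ε :=
        exists_pow_lt_of_lt_one hε (by rw [inv_lt_one_iff₀]; right; linarith)
      set N : ℕ := n ^ m with hNdef
      have hN0 : 0 < N := Nat.pow_pos hn0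
      have hNR : (0:ℝ) < (N:ℝ) := by exact_mod_cast hN0
      have hNcast : ((N:ℕ) : ℝ) = (n:ℝ) ^ m := by push_cast [hNdef]; ring
      set j : ℕ := min (⌊tval * (N:ℝ)⌋.toNat) (N - 1) with hjdef
      have hjN : j < N := lt_of_le_of_lt (min_le_right _ _) (by omega)
      have hfl0 : 0 ≤ tval * (N:ℝ) := mul_nonneg ht.1 hNR.le
      have hfl0' : (0:ℤ) ≤ ⌊tval * (N:ℝ)⌋ := Int.floor_nonneg.mpr hfl0
      have hjle : (j:ℝ) ≤ tval * N ∧ tval * N ≤ (j:ℝ) + 1 := by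
        rcases le_or_gt (⌊tval * (N:ℝ)⌋.toNat) (N-1) with hcase | hcase
        · have hjeq : j = ⌊tval * (N:ℝ)⌋.toNat := min_eq_left hcase
          have hcast2 : ((⌊tval * (N:ℝ)⌋.toNat : ℕ) : ℝ) = ((⌊tval * (N:ℝ)⌋ : ℤ) : ℝ) := by
            exact_mod_cast congrArg (Int.cast : ℤ → ℝ) (Int.toNat_of_nonneg hfl0')
          constructor
          · rw [hjeq, hcast2]
            exact Int.floor_le _
          · rw [hjeq, hcast2]
            have := Int.lt_floor_add_one (tval * (N:ℝ))
            linarith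
        · have hjeq : j = N - 1 := min_eq_right (by omega)
          have h1 : (N:ℝ) ≤ tval * N := by
            have h2 : (N:ℤ) ≤ ⌊tval * (N:ℝ)⌋ := by
              rw [← Int.toNat_of_nonneg hfl0']
              exact_mod_cast (by omega : N ≤ ⌊tval * (N:ℝ)⌋.toNat)
            calc (N:ℝ) ≤ ((⌊tval * (N:ℝ)⌋ : ℤ) : ℝ) := by exact_mod_cast h2
              _ ≤ tval * N := Int.floor_le _
          have h2 : tval * N ≤ N := by nlinarith [ht.2]
          have hcast3 : ((j:ℕ) : ℝ) = (N:ℝ) - 1 := by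
            rw [hjeq]
            push_cast [Nat.cast_sub (by omega : 1 ≤ N)]
            ring
          rw [hcast3]
          constructor <;> linarith
      obtain ⟨w, hw0, hwsum⟩ := digit_aux n hn2 m j (by rw [← hNdef]; exact hjN)
      refine ⟨f (e.symm (fun k => cX.symm (w k))), ⟨_, Set.mem_univ _, rfl⟩, ?_⟩
      have hfval : f (e.symm fun k => cX.symm (w k)) = (j:ℝ) / (n:ℝ) ^ m := by
        rw [hf]
        simp only [Equiv.apply_symm_apply]
        rw [tsum_eq_sum (s := Finset.range m) (by
          intro k hk
          have hk0 : (w k : ℕ) = 0 := hw0 k (by simpa using hk)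
          simp [hk0])]
        simpa using hwsum
      rw [hfval, Real.dist_eq]
      have habs : |tval - (j:ℝ)/(n:ℝ)^m| ≤ ((n:ℝ)⁻¹) ^ m := by
        have e1 : ((j:ℝ)+1)/(N:ℝ) = (j:ℝ)/(N:ℝ) + (N:ℝ)⁻¹ := by
          field_simp
        have e2 : (j:ℝ)/(N:ℝ) ≤ tval := (div_le_iff₀ hNR).mpr (by linarith [hjle.1])
        have e3 : tval ≤ ((j:ℝ)+1)/(N:ℝ) := (le_div_iff₀ hNR).mpr hjle.2
        have e4 : ((n:ℝ)⁻¹) ^ m = (N:ℝ)⁻¹ := by rw [inv_pow, hNcast]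
        rw [abs_le]
        constructor
        · rw [e4, ← hNcast]
          linarith [e3, e1]
        · rw [e4, ← hNcast]
          linarith [e2]
      exact lt_of_le_of_lt habs hm
    have h1 : dimH (Set.Icc (0:ℝ) 1) ≤ dimH (f '' Set.univ) := dimH_mono hdense
    have h2 : dimH (f '' Set.univ) ≤ dimH (Set.univ : Set Y) / α.toNNReal :=
      hHolder.dimH_image_le hαnn
    have h3 : dimH (Set.Icc (0:ℝ) 1) = 1 := by
      rw [Real.dimH_of_mem_nhds (Icc_mem_nhds (by norm_num) (by norm_num) :
        Set.Icc (0:ℝ) 1 ∈ nhds (1/2 : ℝ))]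
      simp
    have h4 : (1:ℝ≥0∞) ≤ dimH (Set.univ : Set Y) / α.toNNReal := by
      rw [← h3]
      exact le_trans h1 h2
    rw [ENNReal.le_div_iff_mul_le (Or.inl (by exact_mod_cast hαnn.ne'))
      (Or.inl ENNReal.coe_ne_top), one_mul] at h4
    calc ENNReal.ofReal α = (α.toNNReal : ℝ≥0∞) := rfl
      _ ≤ dimH (Set.univ : Set Y) := h4
  exact le_antisymm hupper hlower
end

section
/- Fix k ≥ 2 and real numbers f_1, …, f_k ≥ 0 associated to each child v of a vertex u in a finite tree as follows: suppose w : {children of u} → (0,∞) and for each child v, nonnegative numbers f_1(v),…,f_k(v) satisfy ∏_{i=1}^k f_i(v) ≥ w(v)^(k−1). Let j ∈ {1,…,k}. Then (max_v f_j(v)) · ∏_{i≠j} (∑_v f_i(v)) ≥ (∑_v ∏_{i=1}^k f_i(v)^(1/(k−1)))^(k−1) ≥ (∑_v w(v))^(k−1). -/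
/-- Generalized Hölder inequality for a finite family of nonnegative functions. -/
lemma hoelder_aux {α ι : Type*} [Fintype ι] (s : Finset α)
    (g : α → ι → ℝ) (hg : ∀ i v, 0 ≤ g i v) (hs : s.Nonempty) :
    ∑ v, ∏ i ∈ s, g i v ^ ((1 : ℝ) / (s.card : ℝ)) ≤
      ∏ i ∈ s, (∑ v, g i v) ^ ((1 : ℝ) / (s.card : ℝ)) := by
  have hn : (0 : ℝ) < (s.card : ℝ) := by exact_mod_cast Finset.card_pos.2 hs
  by_cases hzero : ∃ i ∈ s, ∑ v, g i v = 0
  · obtain ⟨i, hi, hS⟩ := hzero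
    have hgi : ∀ v, g i v = 0 := fun v =>
      (Finset.sum_eq_zero_iff_of_nonneg (fun v _ => hg i v)).1 hS v (Finset.mem_univ v)
    have hL : ∑ v, ∏ j ∈ s, g j v ^ ((1 : ℝ) / (s.card : ℝ)) = 0 := by
      refine Finset.sum_eq_zero fun v _ => Finset.prod_eq_zero hi ?_
      rw [hgi v, Real.zero_rpow (by positivity)]
    rw [hL]
    exact Finset.prod_nonneg fun j _ =>
      Real.rpow_nonneg (Finset.sum_nonneg fun v _ => hg j v) _
  · push_neg at hzero
    have hSpos : ∀ i ∈ s, 0 < ∑ v, g i v := fun i hi =>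
      lt_of_le_of_ne (Finset.sum_nonneg fun v _ => hg i v) (Ne.symm (hzero i hi))
    set P : ℝ := ∏ i ∈ s, (∑ v, g i v) ^ ((1 : ℝ) / (s.card : ℝ)) with hP
    have hPnn : 0 ≤ P := Finset.prod_nonneg fun i _ =>
      Real.rpow_nonneg (Finset.sum_nonneg fun v _ => hg i v) _
    have key : ∀ v, ∏ i ∈ s, g i v ^ ((1 : ℝ) / (s.card : ℝ)) ≤
        P * ∑ i ∈ s, (1 / (s.card : ℝ)) * (g i v / ∑ u, g i u) := by
      intro v
      have h1 : ∏ i ∈ s, (g i v / ∑ u, g i u) ^ ((1 : ℝ) / (s.card : ℝ)) ≤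
          ∑ i ∈ s, (1 / (s.card : ℝ)) * (g i v / ∑ u, g i u) :=
        Real.geom_mean_le_arith_mean_weighted s _ _ (fun i _ => by positivity)
          (by rw [Finset.sum_const, nsmul_eq_mul]; field_simp)
          (fun i hi => div_nonneg (hg i v) (hSpos i hi).le)
      calc ∏ i ∈ s, g i v ^ ((1 : ℝ) / (s.card : ℝ))
          = P * ∏ i ∈ s, (g i v / ∑ u, g i u) ^ ((1 : ℝ) / (s.card : ℝ)) := by
            rw [hP, ← Finset.prod_mul_distrib]
            refine Finset.prod_congr rfl fun i hi => ?_
            rw [← Real.mul_rpow (Finset.sum_nonneg fun u _ => hg i u)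
              (div_nonneg (hg i v) (hSpos i hi).le),
              mul_div_cancel₀ _ (hSpos i hi).ne']
        _ ≤ P * ∑ i ∈ s, (1 / (s.card : ℝ)) * (g i v / ∑ u, g i u) :=
            mul_le_mul_of_nonneg_left h1 hPnn
    calc ∑ v, ∏ i ∈ s, g i v ^ ((1 : ℝ) / (s.card : ℝ))
        ≤ ∑ v, P * ∑ i ∈ s, (1 / (s.card : ℝ)) * (g i v / ∑ u, g i u) :=
          Finset.sum_le_sum fun v _ => key v
      _ = P * ∑ v, ∑ i ∈ s, (1 / (s.card : ℝ)) * (g i v / ∑ u, g i u) := by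
          rw [Finset.mul_sum]
      _ = P := by
          rw [Finset.sum_comm]
          have : ∀ i ∈ s, ∑ v, (1 / (s.card : ℝ)) * (g i v / ∑ u, g i u)
              = 1 / (s.card : ℝ) := by
            intro i hi
            rw [← Finset.mul_sum, ← Finset.sum_div, div_self (hSpos i hi).ne', mul_one]
          rw [Finset.sum_congr rfl this, Finset.sum_const, nsmul_eq_mul,
            mul_one_div, div_self hn.ne', mul_one]

/-- The inductive Hölder step: if `∏ᵢ fᵢ(v) ≥ w(v)^(k−1)` for every child
`v`, then for each `j`,
`(max_v f_j(v)) · ∏_{i≠j} ∑_v fᵢ(v) ≥ (∑_v ∏ᵢ fᵢ(v)^(1/(k−1)))^(k−1) ≥ (∑_v w(v))^(k−1)`. -/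
theorem stmt19 {ι : Type*} [Fintype ι] [Nonempty ι] (k : ℕ) (hk : 2 ≤ k)
    (w : ι → ℝ) (hw : ∀ v, 0 < w v) (f : Fin k → ι → ℝ) (hf : ∀ i v, 0 ≤ f i v)
    (hprod : ∀ v, w v ^ (k - 1) ≤ ∏ i, f i v) (j : Fin k) :
    (∑ v, ∏ i, f i v ^ ((1 : ℝ) / ((k : ℝ) - 1))) ^ (k - 1) ≤
        (Finset.univ.sup' Finset.univ_nonempty (f j)) *
          ∏ i ∈ Finset.univ.erase j, ∑ v, f i v ∧
      (∑ v, w v) ^ (k - 1) ≤ (∑ v, ∏ i, f i v ^ ((1 : ℝ) / ((k : ℝ) - 1))) ^ (k - 1) := by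
  set n : ℕ := k - 1 with hn
  have hn1 : 1 ≤ n := by omega
  have hcast : (k : ℝ) - 1 = (n : ℝ) := by
    have : (k : ℕ) = n + 1 := by omega
    rw [this]; push_cast; ring
  have hnpos : (0 : ℝ) < (n : ℝ) := by exact_mod_cast hn1
  set M : ℝ := Finset.univ.sup' Finset.univ_nonempty (f j) with hM
  have hMnn : 0 ≤ M := le_trans (hf j (Classical.arbitrary ι))
    (Finset.le_sup' (f j) (Finset.mem_univ _))
  set s : Finset (Fin k) := Finset.univ.erase j with hs
  have hscard : (s.card : ℝ) = (n : ℝ) := by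
    rw [hs, Finset.card_erase_of_mem (Finset.mem_univ j), Finset.card_univ, Fintype.card_fin]
  have hsne : s.Nonempty := Finset.card_pos.1 (by
    have : s.card = n := by exact_mod_cast hscard
    omega)
  have hT : 0 ≤ ∑ v, ∏ i, f i v ^ ((1 : ℝ) / ((k : ℝ) - 1)) :=
    Finset.sum_nonneg fun v _ => Finset.prod_nonneg fun i _ => Real.rpow_nonneg (hf i v) _
  constructor
  · -- first inequality
    have step1 : ∀ v : ι, ∏ i, f i v ^ ((1 : ℝ) / ((k : ℝ) - 1)) ≤
        M ^ ((1 : ℝ) / ((k : ℝ) - 1)) * ∏ i ∈ s, f i v ^ ((1 : ℝ) / ((k : ℝ) - 1)) := by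
      intro v
      rw [← Finset.mul_prod_erase Finset.univ _ (Finset.mem_univ j)]
      refine mul_le_mul_of_nonneg_right ?_
        (Finset.prod_nonneg fun i _ => Real.rpow_nonneg (hf i v) _)
      exact Real.rpow_le_rpow (hf j v) (Finset.le_sup' (f j) (Finset.mem_univ v))
        (by rw [hcast]; positivity)
    have step2 : ∑ v, ∏ i ∈ s, f i v ^ ((1 : ℝ) / ((k : ℝ) - 1)) ≤
        ∏ i ∈ s, (∑ v, f i v) ^ ((1 : ℝ) / ((k : ℝ) - 1)) := by
      have := hoelder_aux s (fun i v => f i v) hf hsne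
      rw [hscard, ← hcast] at this
      exact this
    have hPnn : 0 ≤ ∏ i ∈ s, ∑ v, f i v :=
      Finset.prod_nonneg fun i _ => Finset.sum_nonneg fun v _ => hf i v
    have hmain : ∑ v, ∏ i, f i v ^ ((1 : ℝ) / ((k : ℝ) - 1)) ≤
        (M * ∏ i ∈ s, ∑ v, f i v) ^ ((1 : ℝ) / ((k : ℝ) - 1)) := by
      calc ∑ v, ∏ i, f i v ^ ((1 : ℝ) / ((k : ℝ) - 1))
          ≤ ∑ v, M ^ ((1 : ℝ) / ((k : ℝ) - 1)) * ∏ i ∈ s, f i v ^ ((1 : ℝ) / ((k : ℝ) - 1)) :=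
            Finset.sum_le_sum fun v _ => step1 v
        _ = M ^ ((1 : ℝ) / ((k : ℝ) - 1)) * ∑ v, ∏ i ∈ s, f i v ^ ((1 : ℝ) / ((k : ℝ) - 1)) := by
            rw [← Finset.mul_sum]
        _ ≤ M ^ ((1 : ℝ) / ((k : ℝ) - 1)) * ∏ i ∈ s, (∑ v, f i v) ^ ((1 : ℝ) / ((k : ℝ) - 1)) :=
            mul_le_mul_of_nonneg_left step2 (Real.rpow_nonneg hMnn _)
        _ = (M * ∏ i ∈ s, ∑ v, f i v) ^ ((1 : ℝ) / ((k : ℝ) - 1)) := by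
            rw [Real.finset_prod_rpow s _ (fun i _ => Finset.sum_nonneg fun v _ => hf i v) _,
              ← Real.mul_rpow hMnn hPnn]
    calc (∑ v, ∏ i, f i v ^ ((1 : ℝ) / ((k : ℝ) - 1))) ^ n
        ≤ ((M * ∏ i ∈ s, ∑ v, f i v) ^ ((1 : ℝ) / ((k : ℝ) - 1))) ^ n :=
          pow_le_pow_left₀ hT hmain n
      _ = M * ∏ i ∈ s, ∑ v, f i v := by
          rw [← Real.rpow_natCast _ n, ← Real.rpow_mul (mul_nonneg hMnn hPnn),
            hcast, one_div, inv_mul_cancel₀ hnpos.ne', Real.rpow_one]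
  · -- second inequality
    refine pow_le_pow_left₀ (Finset.sum_nonneg fun v _ => (hw v).le) ?_ _
    refine Finset.sum_le_sum fun v _ => ?_
    have h1 : w v = (w v ^ n) ^ ((1 : ℝ) / ((k : ℝ) - 1)) := by
      rw [hcast, ← Real.rpow_natCast_mul (hw v).le, mul_one_div, div_self hnpos.ne',
        Real.rpow_one]
    rw [h1, Real.finset_prod_rpow _ _ (fun i _ => hf i v) _]
    exact Real.rpow_le_rpow (pow_nonneg (hw v).le n) (hprod v) (by rw [hcast]; positivity)
end
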